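/- arXiv:2404.17432 — 6 statements merged into one kernel-verified Lean document; each statement's English description precedes it below -/
import Mathlib

section
/- Every closed interval [x,y] of a shellable finite poset is shellable. -/
namespace KohnertPaper

abbrev Diagram := Finset (ℕ × ℕ)

/-- `D'` is obtained from `D` by a single Kohnert move: the rightmost cell `(r,c)` of row `r`
moves down its column to the first empty position `(r',c)` below it. -/
def KMove (D D' : Diagram) : Prop :=
  ∃ r c r' : ℕ, 1 ≤ r' ∧ r' < r ∧ (r, c) ∈ D ∧
    (∀ c', c < c' → (r, c') ∉ D) ∧
    (r', c) ∉ D ∧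
    (∀ r₁, r' < r₁ → r₁ < r → (r₁, c) ∈ D) ∧
    D' = insert (r', c) (D.erase (r, c))

/-- `KReach D T` : `T` is obtainable from `D` by a (possibly empty) sequence of Kohnert moves. -/
def KReach : Diagram → Diagram → Prop := Relation.ReflTransGen KMove

/-- The underlying set of the Kohnert poset of `D`. -/
def KD (D : Diagram) : Set Diagram := {T | KReach D T}

/-- The order of the Kohnert poset: `X ⪯ Y` iff `X` is obtainable from `Y` by Kohnert moves. -/
def KLe (X Y : Diagram) : Prop := KReach Y X

variable {α : Type*}

/-- A chain of the poset `(P, le)`, i.e. a face of the order complex. -/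
def IsPChain (le : α → α → Prop) (P : Set α) (s : Finset α) : Prop :=
  ↑s ⊆ P ∧ ∀ x ∈ s, ∀ y ∈ s, le x y ∨ le y x

/-- A facet of the order complex of `(P, le)`: a maximal chain. -/
def IsFacet (le : α → α → Prop) (P : Set α) (s : Finset α) : Prop :=
  IsPChain le P s ∧ ∀ t : Finset α, IsPChain le P t → s ⊆ t → s = t

/-- Shellability of the order complex of the poset `(P, le)`: there is an ordering
`F_0, …, F_{t-1}` of all its facets such that for each `k ≥ 1` the complex
`(⋃_{i<k} F̄_i) ∩ F̄_k` is pure of dimension `dim F_k − 1`. -/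
def Shellable (le : α → α → Prop) (P : Set α) : Prop :=
  ∃ L : List (Finset α), L.Nodup ∧ (∀ s, IsFacet le P s ↔ s ∈ L) ∧
    ∀ k : Fin L.length, 1 ≤ (k : ℕ) →
      ∀ σ : Finset α, σ ⊆ L.get k →
        (∃ i : Fin L.length, (i : ℕ) < (k : ℕ) ∧ σ ⊆ L.get i) →
        ∃ τ : Finset α, σ ⊆ τ ∧ τ ⊆ L.get k ∧
          (∃ i : Fin L.length, (i : ℕ) < (k : ℕ) ∧ τ ⊆ L.get i) ∧
          τ.card + 1 = (L.get k).card

/-- A poset is pure if all facets of its order complex have the same cardinality. -/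
def Pure (le : α → α → Prop) (P : Set α) : Prop :=
  ∀ s t : Finset α, IsFacet le P s → IsFacet le P t → s.card = t.card

/-- A poset is bounded if it has a unique minimal and a unique maximal element. -/
def Bounded (le : α → α → Prop) (P : Set α) : Prop :=
  (∃ m ∈ P, ∀ x ∈ P, le m x) ∧ ∃ M ∈ P, ∀ x ∈ P, le x M

/-- `y` covers `x` in the poset `(P, le)`. -/
def CoversIn (le : α → α → Prop) (P : Set α) (x y : α) : Prop :=
  x ∈ P ∧ y ∈ P ∧ le x y ∧ x ≠ y ∧ ∀ z ∈ P, le x z → le z y → z = x ∨ z = y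

/-- The closed interval `[x,y]` of `(P, le)`. -/
def intervalSet (le : α → α → Prop) (P : Set α) (x y : α) : Set α :=
  {z ∈ P | le x z ∧ le z y}

/-- A saturated (maximal) chain of the interval `[x,y]`, recorded as a list going
from `x` up to `y` through covering relations of the interval. -/
def IsSatChain (le : α → α → Prop) (P : Set α) (x y : α) (c : List α) : Prop :=
  c ≠ [] ∧ c.head? = some x ∧ c.getLast? = some y ∧
    List.Chain' (CoversIn le (intervalSet le P x y)) c

/-- The word of edge labels along a chain. -/
def labelWord (lab : α → α → ℤ) (c : List α) : List ℤ :=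
  (c.zip c.tail).map fun p => lab p.1 p.2

/-- EL-shellability: there is an integer edge labeling such that every interval `[x,y]`
has a unique rising maximal chain, which is lexicographically strictly smaller than every
other maximal chain of the interval. -/
def ELShellable (le : α → α → Prop) (P : Set α) : Prop :=
  ∃ lab : α → α → ℤ,
    ∀ x ∈ P, ∀ y ∈ P, le x y →
      ∃ c : List α, IsSatChain le P x y c ∧
        List.Pairwise (· ≤ ·) (labelWord lab c) ∧
        (∀ c', IsSatChain le P x y c' → List.Pairwise (· ≤ ·) (labelWord lab c') → c' = c) ∧
        ∀ c', IsSatChain le P x y c' → c' ≠ c →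
          List.Lex (· < ·) (labelWord lab c) (labelWord lab c')

/-- The diagram `H(r₁,r₂;C)`. -/
def hookSeed (r1 r2 : ℕ) (C : Finset ℕ) (hC : C.Nonempty) : Diagram :=
  C.image (fun c => (r2, c)) ∪ (Finset.Icc r1 r2).image fun j => (j, C.max' hC)

/-- A hook diagram: a diagram obtainable from some `H(r₁,r₂;C)` by Kohnert moves. -/
def IsHookDiagram (D : Diagram) : Prop :=
  ∃ (r1 r2 : ℕ) (C : Finset ℕ) (hC : C.Nonempty),
    1 ≤ r1 ∧ r1 ≤ r2 ∧ (∀ c ∈ C, 1 ≤ c) ∧ KReach (hookSeed r1 r2 C hC) D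

/-- The key diagram of the weak composition `(a 1, …, a n)`. -/
def keyDiagram (n : ℕ) (a : ℕ → ℕ) : Diagram :=
  (Finset.Icc 1 n).biUnion fun i => (Finset.Icc 1 (a i)).image fun j => (i, j)

/-- Number of cells of `T` in row `r`. -/
def rowCount (T : Diagram) (r : ℕ) : ℕ := (T.filter fun p => p.1 = r).card

/-- The Kohnert polynomial of `D` is multiplicity free iff distinct diagrams of `KD(D)`
have distinct weights (row-count vectors). -/
def MultFree (D : Diagram) : Prop :=
  ∀ T1 ∈ KD D, ∀ T2 ∈ KD D, (∀ r, rowCount T1 r = rowCount T2 r) → T1 = T2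

/-- The key diagram of a weak composition given as a list. -/
def keyDiagramL (l : List ℕ) : Diagram := keyDiagram l.length fun i => l.getD (i - 1) 0

section IntervalShelling

variable {β : Type*} [PartialOrder β] [Finite β]

lemma exists_facet_ext (P : Set β) (s0 : Finset β) (h0 : IsPChain (· ≤ ·) P s0) :
    ∃ s, IsFacet (· ≤ ·) P s ∧ s0 ⊆ s := by
  have : Fintype β := Fintype.ofFinite β
  classical
  set S : Finset (Finset β) :=
    Finset.univ.filter (fun s => IsPChain (· ≤ ·) P s ∧ s0 ⊆ s) with hS
  have hne : S.Nonempty := ⟨s0, by simp [hS, h0]⟩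
  obtain ⟨s, hs, hmax⟩ := S.exists_max_image Finset.card hne
  simp only [hS, Finset.mem_filter, Finset.mem_univ, true_and] at hs
  refine ⟨s, ⟨hs.1, fun t ht hst => ?_⟩, hs.2⟩
  have ht' : t ∈ S := by
    simp only [hS, Finset.mem_filter, Finset.mem_univ, true_and]
    exact ⟨ht, hs.2.trans hst⟩
  exact Finset.eq_of_subset_of_card_le hst (hmax t ht')

omit [Finite β] in
lemma mem_of_facet_comparable (P : Set β) (s : Finset β) (hs : IsFacet (· ≤ ·) P s)
    (z : β) (hz : z ∈ P) (hc : ∀ w ∈ s, z ≤ w ∨ w ≤ z) : z ∈ s := by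
  classical
  have hchain : IsPChain (· ≤ ·) P (insert z s) := by
    constructor
    · intro w hw
      simp only [Finset.coe_insert, Set.mem_insert_iff, Finset.mem_coe] at hw
      rcases hw with rfl | hw
      · exact hz
      · exact hs.1.1 hw
    · intro a ha b hb
      simp only [Finset.mem_insert] at ha hb
      rcases ha with rfl | ha
      · rcases hb with rfl | hb
        · exact Or.inl le_rfl
        · exact hc _ hb
      · rcases hb with rfl | hb
        · exact (hc _ ha).symm
        · exact hs.1.2 _ ha _ hb
  have := hs.2 _ hchain (Finset.subset_insert _ _)
  rw [this]; exact Finset.mem_insert_self _ _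

end IntervalShelling

/-- Every closed interval of a shellable finite poset is shellable. -/
theorem stmt_2 {β : Type*} [PartialOrder β] [Finite β]
    (h : Shellable (· ≤ ·) (Set.univ : Set β)) (x y : β) (hxy : x ≤ y) :
    Shellable (· ≤ ·) {z : β | x ≤ z ∧ z ≤ y} := by
  classical
  obtain ⟨L, hnd, hfac, hshell⟩ := h
  obtain ⟨m, hm, -⟩ := exists_facet_ext {z : β | z ≤ x} ∅ ⟨by simp, by simp⟩
  obtain ⟨M, hM, -⟩ := exists_facet_ext {z : β | y ≤ z} ∅ ⟨by simp, by simp⟩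
  have hmle : ∀ w ∈ m, w ≤ x := fun w hw => hm.1.1 hw
  have hMge : ∀ w ∈ M, y ≤ w := fun w hw => hM.1.1 hw
  have hxm : x ∈ m := mem_of_facet_comparable _ _ hm x le_rfl (fun w hw => Or.inr (hmle w hw))
  have hyM : y ∈ M := mem_of_facet_comparable _ _ hM y le_rfl (fun w hw => Or.inl (hMge w hw))
  set ψ : Finset β → Finset β := fun F => F.filter (fun z => x ≤ z ∧ z ≤ y) with hψ
  set Bs : Set β := {z : β | x ≤ z ∧ z ≤ y} with hBs
  have hxB : x ∈ Bs := ⟨le_rfl, hxy⟩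
  have hyB : y ∈ Bs := ⟨hxy, le_rfl⟩
  have hxs : ∀ s, IsFacet (· ≤ ·) Bs s → x ∈ s := fun s hs =>
    mem_of_facet_comparable _ _ hs x hxB (fun w hw => Or.inl (hs.1.1 hw).1)
  have hys : ∀ s, IsFacet (· ≤ ·) Bs s → y ∈ s := fun s hs =>
    mem_of_facet_comparable _ _ hs y hyB (fun w hw => Or.inr (hs.1.1 hw).2)
  -- composition: facet of interval gives facet of the whole poset
  have hcomp : ∀ s, IsFacet (· ≤ ·) Bs s → IsFacet (· ≤ ·) (Set.univ : Set β) (m ∪ s ∪ M) := by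
    intro s hs
    have hsB : ∀ w ∈ s, x ≤ w ∧ w ≤ y := fun w hw => hs.1.1 hw
    have hcmp : ∀ a ∈ m ∪ s ∪ M, ∀ b ∈ m ∪ s ∪ M, a ≤ b ∨ b ≤ a := by
      intro a ha b hb
      simp only [Finset.mem_union] at ha hb
      rcases ha with (ha | ha) | ha <;> rcases hb with (hb | hb) | hb
      · exact hm.1.2 _ ha _ hb
      · exact Or.inl ((hmle _ ha).trans (hsB _ hb).1)
      · exact Or.inl (((hmle _ ha).trans hxy).trans (hMge _ hb))
      · exact Or.inr ((hmle _ hb).trans (hsB _ ha).1)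
      · exact hs.1.2 _ ha _ hb
      · exact Or.inl ((hsB _ ha).2.trans (hMge _ hb))
      · exact Or.inr (((hmle _ hb).trans hxy).trans (hMge _ ha))
      · exact Or.inr ((hsB _ hb).2.trans (hMge _ ha))
      · exact hM.1.2 _ ha _ hb
    refine ⟨⟨fun w _ => trivial, hcmp⟩, ?_⟩
    intro t ht hsub
    refine Finset.Subset.antisymm hsub (fun z hz => ?_)
    have hxt : x ∈ t := hsub (by simp [hxm])
    have hyt : y ∈ t := hsub (by simp [hyM])
    have hzx := ht.2 _ hz _ hxt
    have hzy := ht.2 _ hz _ hyt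
    simp only [Finset.mem_union]
    rcases hzx with hzx | hzx
    · exact Or.inl (Or.inl (mem_of_facet_comparable _ _ hm z hzx
        (fun w hw => ht.2 _ hz _ (hsub (by simp [hw])))))
    · rcases hzy with hzy | hzy
      · exact Or.inl (Or.inr (mem_of_facet_comparable _ _ hs z ⟨hzx, hzy⟩
          (fun w hw => ht.2 _ hz _ (hsub (by simp [hw])))))
      · exact Or.inr (mem_of_facet_comparable _ _ hM z hzy
          (fun w hw => ht.2 _ hz _ (hsub (by simp [hw]))))
  -- decomposition: a facet of the poset containing m and M restricts to a facet of the interval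
  have hdec : ∀ F, IsFacet (· ≤ ·) (Set.univ : Set β) F → m ⊆ F → M ⊆ F →
      IsFacet (· ≤ ·) Bs (ψ F) ∧ F = m ∪ ψ F ∪ M := by
    intro F hF hmF hMF
    have hxF : x ∈ F := hmF hxm
    have hyF : y ∈ F := hMF hyM
    have hclass : ∀ z ∈ F, z ∈ m ∨ z ∈ ψ F ∨ z ∈ M := by
      intro z hz
      rcases hF.1.2 _ hz _ hxF with hzx | hzx
      · exact Or.inl (mem_of_facet_comparable _ _ hm z hzx
          (fun w hw => hF.1.2 _ hz _ (hmF hw)))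
      · rcases hF.1.2 _ hz _ hyF with hzy | hzy
        · exact Or.inr (Or.inl (by simp only [hψ, Finset.mem_filter]; exact ⟨hz, hzx, hzy⟩))
        · exact Or.inr (Or.inr (mem_of_facet_comparable _ _ hM z hzy
            (fun w hw => hF.1.2 _ hz _ (hMF hw))))
    have hψF : ψ F ⊆ F := Finset.filter_subset _ _
    have hψchain : IsPChain (· ≤ ·) Bs (ψ F) := by
      constructor
      · intro w hw
        simp only [hψ, Finset.coe_filter, Set.mem_setOf_eq] at hw
        exact hw.2
      · intro a ha b hb; exact hF.1.2 _ (hψF ha) _ (hψF hb)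
    have hfacet : IsFacet (· ≤ ·) Bs (ψ F) := by
      refine ⟨hψchain, fun t ht hsub => ?_⟩
      refine Finset.Subset.antisymm hsub (fun z hz => ?_)
      have hzB : z ∈ Bs := ht.1 hz
      have hzF : z ∈ F := by
        apply mem_of_facet_comparable _ _ hF z trivial
        intro w hw
        rcases hclass w hw with h1 | h1 | h1
        · exact Or.inr ((hmle _ h1).trans hzB.1)
        · exact ht.2 _ hz _ (hsub h1)
        · exact Or.inl (hzB.2.trans (hMge _ h1))
      simp only [hψ, Finset.mem_filter]
      exact ⟨hzF, hzB.1, hzB.2⟩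
    refine ⟨hfacet, Finset.Subset.antisymm (fun z hz => ?_) (fun z hz => ?_)⟩
    · rcases hclass z hz with h1 | h1 | h1 <;> simp [Finset.mem_union, h1]
    · simp only [Finset.mem_union] at hz
      rcases hz with (h1 | h1) | h1
      · exact hmF h1
      · exact hψF h1
      · exact hMF h1
  have hψcomp : ∀ s, IsFacet (· ≤ ·) Bs s → ψ (m ∪ s ∪ M) = s := by
    intro s hs
    ext z
    simp only [hψ, Finset.mem_filter, Finset.mem_union]
    constructor
    · rintro ⟨(h1 | h1) | h1, hx1, hy1⟩
      · have hzx : z = x := le_antisymm (hmle _ h1) hx1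
        rw [hzx]; exact hxs s hs
      · exact h1
      · have hzy : z = y := le_antisymm hy1 (hMge _ h1)
        rw [hzy]; exact hys s hs
    · intro hz
      exact ⟨Or.inl (Or.inr hz), (hs.1.1 hz).1, (hs.1.1 hz).2⟩
  -- the filtered and mapped lists
  set L' : List (Finset β) := L.filter (fun F => decide (m ⊆ F ∧ M ⊆ F)) with hL'
  have hmem' : ∀ F, F ∈ L' ↔ F ∈ L ∧ (m ⊆ F ∧ M ⊆ F) := by
    intro F
    simp [hL', List.mem_filter]
  have hnd' : L'.Nodup := hnd.filter _
  have hsub' : List.Sublist L' L := List.filter_sublist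
  obtain ⟨f, hf⟩ := List.sublist_iff_exists_fin_orderEmbedding_get_eq.mp hsub'
  set L'' : List (Finset β) := L'.map ψ with hL''
  have hlen : L''.length = L'.length := List.length_map _
  have hget'' : ∀ k : Fin L''.length, L''.get k = ψ (L'.get (Fin.cast hlen k)) := by
    intro k
    simp [hL'', List.getElem_map]
  -- facts about members of L'
  have hfacet' : ∀ F ∈ L', IsFacet (· ≤ ·) (Set.univ : Set β) F ∧ m ⊆ F ∧ M ⊆ F := by
    intro F hF
    obtain ⟨hFL, hpF⟩ := (hmem' F).1 hF
    exact ⟨(hfac F).2 hFL, hpF⟩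
  have hfac'' : ∀ s, IsFacet (· ≤ ·) Bs s ↔ s ∈ L'' := by
    intro s
    constructor
    · intro hs
      have hFL' : (m ∪ s ∪ M) ∈ L' := (hmem' _).2 ⟨(hfac _).1 (hcomp s hs),
        Finset.subset_union_left.trans Finset.subset_union_left, Finset.subset_union_right⟩
      have : ψ (m ∪ s ∪ M) ∈ L'' := by rw [hL'']; exact List.mem_map_of_mem hFL'
      rwa [hψcomp s hs] at this
    · intro hs
      rw [hL''] at hs
      obtain ⟨F, hF, rfl⟩ := List.mem_map.mp hs
      obtain ⟨hFfac, hmF, hMF⟩ := hfacet' F hF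
      exact (hdec F hFfac hmF hMF).1
  have hnd'' : L''.Nodup := by
    rw [hL'']
    refine List.Nodup.map_on ?_ hnd'
    intro F1 h1 F2 h2 he
    obtain ⟨hf1, hm1, hM1⟩ := hfacet' F1 h1
    obtain ⟨hf2, hm2, hM2⟩ := hfacet' F2 h2
    rw [(hdec F1 hf1 hm1 hM1).2, (hdec F2 hf2 hm2 hM2).2, he]
  refine ⟨L'', hnd'', hfac'', ?_⟩
  intro k hk1 σ hσk hex
  obtain ⟨i, hik, hσi⟩ := hex
  set k' : Fin L'.length := Fin.cast hlen k with hk'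
  set i' : Fin L'.length := Fin.cast hlen i with hi'
  set Fk : Finset β := L'.get k' with hFk
  set Fi : Finset β := L'.get i' with hFi
  have hi'k' : i' < k' := by
    simp only [Fin.lt_def, hi', hk', Fin.coe_cast]
    exact hik
  have hfik : f i' < f k' := f.strictMono hi'k'
  have hFkeq : L.get (f k') = Fk := (hf k').symm
  have hFieq : L.get (f i') = Fi := (hf i').symm
  obtain ⟨hFkfac, hmFk, hMFk⟩ := hfacet' Fk (L'.get_mem _)
  obtain ⟨hFifac, hmFi, hMFi⟩ := hfacet' Fi (L'.get_mem _)
  have hgk : L''.get k = ψ Fk := hget'' k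
  have hgi : L''.get i = ψ Fi := hget'' i
  have hψFk : ψ Fk ⊆ Fk := Finset.filter_subset _ _
  have hψFi : ψ Fi ⊆ Fi := Finset.filter_subset _ _
  have hσFk : σ ⊆ Fk := by rw [hgk] at hσk; exact hσk.trans hψFk
  have hσFi : σ ⊆ Fi := by rw [hgi] at hσi; exact hσi.trans hψFi
  have hone : 1 ≤ ((f k' : Fin L.length) : ℕ) := by
    have : ((f i' : Fin L.length) : ℕ) < ((f k' : Fin L.length) : ℕ) := hfik
    omega
  have hσ'Fk : σ ∪ m ∪ M ⊆ L.get (f k') := by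
    rw [hFkeq]
    exact Finset.union_subset (Finset.union_subset hσFk hmFk) hMFk
  have hσ'Fi : σ ∪ m ∪ M ⊆ L.get (f i') := by
    rw [hFieq]
    exact Finset.union_subset (Finset.union_subset hσFi hmFi) hMFi
  obtain ⟨τ', hστ', hτ'Fk, ⟨j, hjk, hτ'j⟩, hcard⟩ :=
    hshell (f k') hone (σ ∪ m ∪ M) hσ'Fk ⟨f i', hfik, hσ'Fi⟩
  rw [hFkeq] at hτ'Fk hcard
  have hmτ' : m ⊆ τ' := (Finset.subset_union_right.trans Finset.subset_union_left).trans hστ'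
  have hMτ' : M ⊆ τ' := Finset.subset_union_right.trans hστ'
  -- the removed element lies in the interval part
  have hsd : (Fk \ τ').card = 1 := by
    rw [Finset.card_sdiff_of_subset hτ'Fk]; omega
  obtain ⟨e, he⟩ := Finset.card_eq_one.mp hsd
  have heF : e ∈ Fk ∧ e ∉ τ' := by
    have hem : e ∈ Fk \ τ' := he ▸ Finset.mem_singleton_self e
    exact ⟨(Finset.mem_sdiff.mp hem).1, (Finset.mem_sdiff.mp hem).2⟩
  have hτ'e : τ' = Fk.erase e := by
    refine Finset.eq_of_subset_of_card_le
      (fun z hz => Finset.mem_erase.mpr ⟨fun hze => heF.2 (hze ▸ hz), hτ'Fk hz⟩) ?_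
    rw [Finset.card_erase_of_mem heF.1]; omega
  have heψ : e ∈ ψ Fk := by
    have hcl := (hdec Fk hFkfac hmFk hMFk).2
    have : e ∈ m ∪ ψ Fk ∪ M := hcl ▸ heF.1
    simp only [Finset.mem_union] at this
    rcases this with (h1 | h1) | h1
    · exact absurd (hmτ' h1) heF.2
    · exact h1
    · exact absurd (hMτ' h1) heF.2
  have hτeq : ψ τ' = (ψ Fk).erase e := by
    rw [hτ'e]
    simp only [hψ]
    rw [Finset.filter_erase]
  refine ⟨ψ τ', ?_, ?_, ?_, ?_⟩
  · intro z hz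
    have hz1 : z ∈ τ' := hστ' (Finset.mem_union_left _ (Finset.mem_union_left _ hz))
    have hz2 : z ∈ ψ Fk := by rw [hgk] at hσk; exact hσk hz
    simp only [hψ, Finset.mem_filter] at hz2 ⊢
    exact ⟨hz1, hz2.2⟩
  · rw [hgk]
    exact Finset.filter_subset_filter _ hτ'Fk
  · -- earlier facet in L''
    have hjL' : L.get j ∈ L' := (hmem' _).2 ⟨L.get_mem _, hmτ'.trans hτ'j, hMτ'.trans hτ'j⟩
    obtain ⟨j1, hj1⟩ := List.mem_iff_get.mp hjL'
    have hfj1 : f j1 = j := by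
      apply List.nodup_iff_injective_get.mp hnd
      rw [← hf j1, hj1]
    have hj1k' : j1 < k' := by
      have : f j1 < f k' := by rw [hfj1]; exact hjk
      exact f.strictMono.lt_iff_lt.mp this
    refine ⟨Fin.cast hlen.symm j1, ?_, ?_⟩
    · show ((Fin.cast hlen.symm j1 : Fin L''.length) : ℕ) < (k : ℕ)
      rw [Fin.coe_cast]
      exact hj1k'
    · rw [hget'']
      have : L'.get (Fin.cast hlen (Fin.cast hlen.symm j1)) = L.get j := by
        simp only [Fin.cast_cast, Fin.cast_eq_self]
        rw [hj1]
      rw [this]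
      exact Finset.filter_subset_filter _ hτ'j
  · rw [hτeq, hgk, Finset.card_erase_of_mem heψ]
    have : 0 < (ψ Fk).card := Finset.card_pos.mpr ⟨e, heψ⟩
    omega


end KohnertPaper
end

section
/- Every bounded EL-shellable finite poset is shellable. -/
namespace KohnertPaper

variable {α : Type*}

section Aux

variable {β : Type*} [PartialOrder β] (lab : β → β → ℤ)

set_option linter.unusedSectionVars false

/-- Saturated chain from `x` to `y` expressed with the global cover relation. -/
def SatC (x y : β) (c : List β) : Prop :=
  c ≠ [] ∧ c.head? = some x ∧ c.getLast? = some y ∧ List.Chain' (· ⋖ ·) c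

lemma mem_of_getLast?' {γ : Type*} : ∀ {l : List γ} {y : γ}, l.getLast? = some y → y ∈ l := by
  intro l
  induction l with
  | nil => intro y h; simp at h
  | cons a t ih =>
    intro y h
    cases t with
    | nil => simp at h; simp [h]
    | cons b t' =>
      rw [List.getLast?_cons_cons] at h
      exact List.mem_cons_of_mem _ (ih h)

lemma SatC.pairwise {x y : β} {c : List β} (h : SatC x y c) : c.Pairwise (· < ·) :=
  List.isChain_iff_pairwise.1 (h.2.2.2.imp fun _ _ hab => hab.lt)

lemma SatC.nodup {x y : β} {c : List β} (h : SatC x y c) : c.Nodup :=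
  h.pairwise.nodup

lemma pairwise_le_getLast : ∀ {c : List β} {y : β}, c.Pairwise (· < ·) →
    c.getLast? = some y → ∀ z ∈ c, z ≤ y
  | [], _ => by simp
  | [a], y => by intro _ hy z hz; simp at hy hz; subst hy; simp [hz]
  | a :: b :: t, y => by
    intro hp hy z hz
    rw [List.getLast?_cons_cons] at hy
    rcases List.mem_cons.1 hz with rfl | hz'
    · exact le_of_lt ((List.pairwise_cons.1 hp).1 y (mem_of_getLast?' hy))
    · exact pairwise_le_getLast (List.pairwise_cons.1 hp).2 hy z hz'

lemma SatC.mem_le {x y : β} {c : List β} (h : SatC x y c) : ∀ z ∈ c, x ≤ z ∧ z ≤ y := by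
  intro z hz
  have hne := h.1
  have hh := h.2.1
  have hl := h.2.2.1
  constructor
  · rcases c with _ | ⟨a, t⟩
    · exact absurd rfl hne
    · simp at hh; subst hh
      rcases List.mem_cons.1 hz with rfl | hz'
      · exact le_rfl
      · exact le_of_lt ((List.pairwise_cons.1 h.pairwise).1 z hz')
  · exact pairwise_le_getLast h.pairwise hl z hz

lemma SatC.le {x y : β} {c : List β} (h : SatC x y c) : x ≤ y := by
  rcases c with _ | ⟨a, t⟩
  · exact absurd rfl h.1
  · have hh := h.2.1; simp at hh; subst hh
    exact (h.mem_le _ (List.mem_cons_self)).2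

lemma satC_singleton {u : β} {c : List β} (h : SatC u u c) : c = [u] := by
  rcases c with _ | ⟨a, t⟩
  · exact absurd rfl h.1
  · have hh := h.2.1; simp at hh; subst hh
    cases t with
    | nil => rfl
    | cons b t' =>
      have hb : a ⋖ b := h.2.2.2.rel_head
      have hble := (h.mem_le b (by simp)).2
      exact absurd (lt_of_lt_of_le hb.lt hble) (lt_irrefl _)

lemma SatC.cons_shape {u v : β} {c : List β} (h : SatC u v c) : ∃ c', c = u :: c' := by
  rcases c with _ | ⟨a, t⟩
  · exact absurd rfl h.1
  · have ha : a = u := by simpa using h.2.1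
    exact ⟨t, by rw [ha]⟩

lemma SatC.tail {u z v : β} {l : List β} (h : SatC u v (u :: z :: l)) : SatC z v (z :: l) :=
  ⟨by simp, rfl, by rw [← List.getLast?_cons_cons (a := u)]; exact h.2.2.1, h.2.2.2.tail⟩

lemma SatC.cons {u z v : β} {c : List β} (h : SatC z v c) (hc : u ⋖ z) : SatC u v (u :: c) := by
  refine ⟨by simp, rfl, ?_, ?_⟩
  · rcases c with _ | ⟨a, t⟩
    · exact absurd rfl h.1
    · rw [List.getLast?_cons_cons]; exact h.2.2.1
  · unfold List.Chain'; rw [List.isChain_cons]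
    refine ⟨fun y hy => ?_, h.2.2.2⟩
    rw [h.2.1] at hy
    simp at hy; subst hy; exact hc

@[simp] lemma labelWord_nil : labelWord lab ([] : List β) = [] := rfl
@[simp] lemma labelWord_singleton (a : β) : labelWord lab [a] = [] := rfl
@[simp] lemma labelWord_cons_cons (a b : β) (l : List β) :
    labelWord lab (a :: b :: l) = lab a b :: labelWord lab (b :: l) := rfl

lemma labelWord_append : ∀ (p : List β) {e : β} (q : List β), p.getLast? = some e →
    labelWord lab (p ++ q) = labelWord lab p ++ labelWord lab (e :: q) := by
  intro p
  induction p with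
  | nil => intro e q h; simp at h
  | cons a t ih =>
    intro e q h
    cases t with
    | nil => simp at h; subst h; simp
    | cons b t' =>
      rw [List.getLast?_cons_cons] at h
      have := ih q h
      simp only [List.cons_append, labelWord_cons_cons] at *
      rw [this]

lemma chain'_word_of_ascents : ∀ (c : List β),
    (∀ A (a x b : β) B, c = A ++ a :: x :: b :: B → lab a x ≤ lab x b) →
    List.Chain' (· ≤ ·) (labelWord lab c)
  | [] => fun _ => List.isChain_nil
  | [a] => fun _ => by simp; exact List.isChain_nil
  | a :: x :: rest => fun h => by
    rw [labelWord_cons_cons]; unfold List.Chain'; rw [List.isChain_cons]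
    constructor
    · intro y hy
      cases rest with
      | nil => simp at hy
      | cons b r' =>
        simp only [labelWord_cons_cons, List.head?_cons, Option.mem_some_iff] at hy
        subst hy
        exact h [] a x b r' rfl
    · exact chain'_word_of_ascents (x :: rest) fun A a' x' b' B hA =>
        h (a :: A) a' x' b' B (by rw [hA]; rfl)

lemma sorted_word_of_ascents (c : List β)
    (h : ∀ A (a x b : β) B, c = A ++ a :: x :: b :: B → lab a x ≤ lab x b) :
    List.Pairwise (· ≤ ·) (labelWord lab c) :=
  List.isChain_iff_pairwise.1 (chain'_word_of_ascents lab c h)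

-- Lex lemmas over ℤ lists
lemma lex_append_left : ∀ (p : List ℤ) {A B : List ℤ},
    List.Lex (· < ·) A B → List.Lex (· < ·) (p ++ A) (p ++ B) := by
  intro p
  induction p with
  | nil => intro A B h; exact h
  | cons a t ih => intro A B h; exact List.Lex.cons (ih h)

lemma lex_asymm : ∀ {A B : List ℤ}, List.Lex (· < ·) A B → List.Lex (· < ·) B A → False := by
  intro A B h
  induction h with
  | nil => intro h2; cases h2
  | cons h ih =>
    intro h2
    cases h2 with
    | cons h3 => exact ih h3
    | rel h3 => exact absurd h3 (lt_irrefl _)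
  | rel h =>
    intro h2
    cases h2 with
    | cons h3 => exact absurd h (lt_irrefl _)
    | rel h3 => exact absurd h (asymm h3)

lemma lex_irrefl {A : List ℤ} (h : List.Lex (· < ·) A A) : False := lex_asymm h h

lemma lex_concat : ∀ {A B : List ℤ}, List.Lex (· < ·) A B → (∀ t, B ≠ A ++ t) →
    ∀ X Y, List.Lex (· < ·) (A ++ X) (B ++ Y) := by
  intro A B h
  induction h with
  | nil => rename_i b l; intro hne X Y; exact absurd rfl (hne (b :: l))
  | cons h ih =>
    intro hne X Y
    exact List.Lex.cons (ih (fun t ht => hne t (by rw [ht]; rfl)) X Y)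
  | rel h => intro _ X Y; exact List.Lex.rel h

lemma lex_sandwich : ∀ {A B t : List ℤ}, List.Lex (· < ·) A B →
    List.Lex (· < ·) B (A ++ t) → ∃ s, B = A ++ s := by
  intro A
  induction A with
  | nil => intro B t _ _; exact ⟨B, rfl⟩
  | cons a A' ih =>
    intro B t h1 h2
    cases h1 with
    | cons h =>
      rw [List.cons_append] at h2
      have h2' := ((List.cons_lex_cons_iff.1 h2).resolve_left (lt_irrefl _)).2
      obtain ⟨s, hs⟩ := ih h h2'
      exact ⟨s, by rw [hs]; rfl⟩
    | rel h =>
      rw [List.cons_append] at h2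
      cases h2 with
      | cons h3 => exact absurd h (lt_irrefl _)
      | rel h3 => exact absurd h (asymm h3)


lemma isSatChain_univ_iff {x y : β} {c : List β} :
    IsSatChain (· ≤ ·) (Set.univ : Set β) x y c ↔ SatC x y c := by
  constructor
  · rintro ⟨hne, hh, hl, hch⟩
    refine ⟨hne, hh, hl, hch.imp ?_⟩
    rintro a b ⟨haI, hbI, hab, hne', hmin⟩
    simp only [intervalSet, Set.mem_setOf_eq, Set.mem_univ, true_and] at haI hbI
    refine ⟨lt_of_le_of_ne hab hne', fun z hz1 hz2 => ?_⟩
    have hzmem : z ∈ intervalSet (· ≤ ·) (Set.univ : Set β) x y := by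
      simp only [intervalSet, Set.mem_setOf_eq, Set.mem_univ, true_and]
      exact ⟨le_trans haI.1 hz1.le, le_trans hz2.le hbI.2⟩
    rcases hmin z hzmem hz1.le hz2.le with rfl | rfl
    · exact lt_irrefl _ hz1
    · exact lt_irrefl _ hz2
  · intro h
    refine ⟨h.1, h.2.1, h.2.2.1, ?_⟩
    have key : ∀ (l : List β), List.Chain' (· ⋖ ·) l → (∀ z ∈ l, x ≤ z ∧ z ≤ y) →
        List.Chain' (CoversIn (· ≤ ·) (intervalSet (· ≤ ·) (Set.univ : Set β) x y)) l := by
      intro l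
      induction l with
      | nil => intro _ _; exact List.isChain_nil
      | cons a t ih =>
        intro hch hmem
        unfold List.Chain' at hch ⊢; rw [List.isChain_cons] at hch ⊢
        refine ⟨fun b hb => ?_, ih hch.2 fun z hz => hmem z (List.mem_cons_of_mem _ hz)⟩
        have hbmem : b ∈ t := by
          cases t with
          | nil => simp at hb
          | cons u t' => simp at hb; simp [hb]
        have hcov : a ⋖ b := hch.1 b hb
        have hma := hmem a (List.mem_cons_self)
        have hmb := hmem b (List.mem_cons_of_mem _ hbmem)
        refine ⟨?_, ?_, hcov.le, ne_of_lt hcov.lt, fun z hzI hz1 hz2 => ?_⟩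
        · simp only [intervalSet, Set.mem_setOf_eq, Set.mem_univ, true_and]; exact hma
        · simp only [intervalSet, Set.mem_setOf_eq, Set.mem_univ, true_and]; exact hmb
        · rcases eq_or_ne z a with rfl | hza
          · exact Or.inl rfl
          · rcases eq_or_ne z b with rfl | hzb
            · exact Or.inr rfl
            · exact absurd (hz2.lt_of_ne hzb) (hcov.2 (hz1.lt_of_ne (Ne.symm hza)))
    exact key c h.2.2.2 h.mem_le

/-- The EL-property expressed with `SatC`. -/
def ELH (lab : β → β → ℤ) : Prop :=
  ∀ x y : β, x ≤ y → ∃ c, SatC x y c ∧ (labelWord lab c).Pairwise (· ≤ ·) ∧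
    (∀ c', SatC x y c' → (labelWord lab c').Pairwise (· ≤ ·) → c' = c) ∧
    ∀ c', SatC x y c' → c' ≠ c → List.Lex (· < ·) (labelWord lab c) (labelWord lab c')

lemma elh_of_elshellable (h : ELShellable (· ≤ ·) (Set.univ : Set β)) : ∃ lab : β → β → ℤ, ELH lab := by
  obtain ⟨lab, hlab⟩ := h
  refine ⟨lab, fun x y hxy => ?_⟩
  obtain ⟨c, hc, hs, hu, hx⟩ := hlab x (Set.mem_univ x) y (Set.mem_univ y) hxy
  exact ⟨c, isSatChain_univ_iff.1 hc, hs,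
    fun c' hc' hs' => hu c' (isSatChain_univ_iff.2 hc') hs',
    fun c' hc' hne => hx c' (isSatChain_univ_iff.2 hc') hne⟩

lemma satC_split' {u v s : β} {A B : List β} (h : SatC u v (A ++ s :: B)) :
    SatC u s (A ++ [s]) ∧ SatC s v (s :: B) := by
  constructor
  · refine ⟨by simp, ?_, List.getLast?_concat, h.2.2.2.prefix ⟨B, by simp⟩⟩
    have hh := h.2.1
    rw [List.head?_append] at hh ⊢
    simpa using hh
  · refine ⟨by simp, rfl, ?_, h.2.2.2.suffix ⟨A, rfl⟩⟩
    have hl := h.2.2.1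
    rw [List.getLast?_append] at hl
    rcases hg : (s :: B).getLast? with _ | g
    · exact absurd (List.getLast?_eq_none_iff.1 hg) (by simp)
    · rw [hg] at hl; simpa using hl

lemma word_split (s : β) (A B : List β) :
    labelWord lab (A ++ s :: B) = labelWord lab (A ++ [s]) ++ labelWord lab (s :: B) := by
  have h : A ++ s :: B = (A ++ [s]) ++ B := by simp
  rw [h, labelWord_append lab (A ++ [s]) B (List.getLast?_concat)]

lemma first_mem_split {γ : Type*} (p : γ → Prop) : ∀ (l : List γ), (∃ x ∈ l, p x) →
    ∃ A s B, l = A ++ s :: B ∧ p s ∧ ∀ x ∈ A, ¬ p x := by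
  intro l
  induction l with
  | nil => rintro ⟨x, hx, _⟩; simp at hx
  | cons a t ih =>
    intro hex
    by_cases hpa : p a
    · exact ⟨[], a, t, rfl, hpa, by simp⟩
    · obtain ⟨x, hx, hpx⟩ := hex
      rcases List.mem_cons.1 hx with rfl | hxt
      · exact absurd hpx hpa
      · obtain ⟨A, s, B, h1, h2, h3⟩ := ih ⟨x, hxt, hpx⟩
        refine ⟨a :: A, s, B, by rw [h1]; rfl, h2, fun y hy => ?_⟩
        rcases List.mem_cons.1 hy with rfl | hyA
        · exact hpa
        · exact h3 y hyA

lemma sorted_cons_of_le_head {a b : ℤ} {l : List ℤ} (h : List.Pairwise (· ≤ ·) (b :: l))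
    (hab : a ≤ b) : List.Pairwise (· ≤ ·) (a :: b :: l) := by
  have h1 := List.pairwise_cons.1 h
  rw [List.pairwise_cons]
  refine ⟨fun x hx => ?_, h⟩
  rcases List.mem_cons.1 hx with rfl | hxl
  · exact hab
  · exact hab.trans (h1.1 x hxl)

/-- The word of the rising chain of an interval is never a proper prefix of the word of
another saturated chain of the same interval. -/
lemma noprefix (hel : ELH lab) : ∀ (n : ℕ) (u v : β) (r c : List β) (t : List ℤ),
    r.length ≤ n → SatC u v r → (labelWord lab r).Pairwise (· ≤ ·) → SatC u v c →
    labelWord lab c = labelWord lab r ++ t → t = [] := by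
  intro n
  induction n with
  | zero =>
    intro u v r c t hlen hr
    exact absurd (List.length_eq_zero_iff.1 (Nat.le_zero.1 hlen)) hr.1
  | succ n ih =>
    intro u v r c t hlen hr hsort hc heq
    obtain ⟨r1, rfl⟩ := hr.cons_shape
    rcases r1 with _ | ⟨z, r2⟩
    · -- r = [u], so u = v and c = [u]
      have huv : u = v := by have h0 := hr.2.2.1; simpa using h0
      subst huv
      rw [satC_singleton hc] at heq
      simpa using heq.symm
    obtain ⟨c1, rfl⟩ := hc.cons_shape
    rcases c1 with _ | ⟨y, c2⟩
    · rw [labelWord_cons_cons] at heq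
      simp at heq
    rw [labelWord_cons_cons, labelWord_cons_cons, List.cons_append] at heq
    injection heq with heq1 heq2
    by_cases hyz : y = z
    · subst hyz
      exact ih y v (y :: r2) (y :: c2) t (by simpa using hlen) hr.tail
        ((List.pairwise_cons.1 (by rw [labelWord_cons_cons] at hsort; exact hsort)).2)
        hc.tail heq2
    · exfalso
      have hcy : u ⋖ y := hc.2.2.2.rel_head
      have hct : SatC y v (y :: c2) := hc.tail
      have hyv : y ≤ v := hct.le
      obtain ⟨r0, hr0, hr0s, hr0u, hr0l⟩ := hel u v hr.le
      have hrr0 : u :: z :: r2 = r0 := hr0u _ hr hsort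
      have hrlex : ∀ c0, SatC u v c0 → c0 ≠ u :: z :: r2 →
          List.Lex (· < ·) (labelWord lab (u :: z :: r2)) (labelWord lab c0) := by
        intro c0 h1 h2
        have h3 := hr0l c0 h1 (by rw [← hrr0]; exact h2)
        rwa [← hrr0] at h3
      have huniq : ∀ c0, SatC u v c0 → (labelWord lab c0).Pairwise (· ≤ ·) →
          c0 = u :: z :: r2 := by
        intro c0 h1 h2
        rw [hr0u c0 h1 h2, hrr0]
      rcases r2 with _ | ⟨w, r3⟩
      · -- r = [u, z] : z = v, u ⋖ v
        have hzv : z = v := by have h0 := hr.2.2.1; simpa using h0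
        subst hzv
        have huv : u ⋖ z := hr.2.2.2.rel_head
        rcases eq_or_ne y z with rfl | hyv'
        · exact hyz rfl
        · exact huv.2 hcy.lt (hyv.lt_of_ne hyv')
      · obtain ⟨ρ, hρ, hρs, hρu, hρl⟩ := hel y v hyv
        obtain ⟨ρ', rfl⟩ := hρ.cons_shape
        have hCsat : SatC u v (u :: y :: ρ') := hρ.cons hcy
        have hCne : (u :: y :: ρ') ≠ u :: z :: w :: r3 := by
          intro h; injection h with _ h; injection h with h _; exact hyz h
        have hab : lab u z ≤ lab z w := by
          have hs0 := hsort
          rw [labelWord_cons_cons lab u z (w :: r3), labelWord_cons_cons lab z w r3] at hs0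
          exact (List.pairwise_cons.1 hs0).1 _ (List.mem_cons_self)
        have h1 := hrlex _ hCsat hCne
        rw [labelWord_cons_cons lab u z (w :: r3), labelWord_cons_cons lab u y ρ',
          ← heq1] at h1
        have hAB := ((List.cons_lex_cons_iff.1 h1).resolve_left (lt_irrefl _)).2
        by_cases hcρ : (y :: c2) = (y :: ρ')
        · have hcsort : (labelWord lab (u :: y :: c2)).Pairwise (· ≤ ·) := by
            rw [labelWord_cons_cons lab u y c2, heq1, heq2,
                labelWord_cons_cons lab z w r3, List.cons_append]
            refine sorted_cons_of_le_head ?_ hab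
            have h6 := hρs
            rw [← hcρ, heq2, labelWord_cons_cons lab z w r3, List.cons_append] at h6
            exact h6
          have h5 := huniq _ hc hcsort
          injection h5 with _ h; injection h with h _; exact hyz h
        · have h2 := hρl _ hct hcρ
          rw [heq2] at h2
          obtain ⟨s, hs⟩ := lex_sandwich hAB h2
          have hCsort : (labelWord lab (u :: y :: ρ')).Pairwise (· ≤ ·) := by
            rw [labelWord_cons_cons lab u y ρ', heq1, hs,
                labelWord_cons_cons lab z w r3, List.cons_append]
            refine sorted_cons_of_le_head ?_ hab
            have h6 := hρs
            rw [hs, labelWord_cons_cons lab z w r3, List.cons_append] at h6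
            exact h6
          exact hCne (huniq _ hCsat hCsort)

lemma triple_mem {γ : Type*} : ∀ (A : List γ) (a x b : γ) (B l : List γ),
    l = A ++ a :: x :: b :: B → x ∈ l.tail.dropLast := by
  have key : ∀ (A : List γ) (a x b : γ) (B : List γ), x ∈ (A ++ a :: x :: b :: B).dropLast := by
    intro A a x b B
    rw [List.dropLast_append_of_ne_nil (by simp), List.dropLast_cons₂, List.dropLast_cons₂]
    simp
  intro A a x b B l h
  subst h
  cases A with
  | nil =>
    simp only [List.nil_append, List.tail_cons]
    have h0 := key [] a x b B
    simp only [List.nil_append] at h0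
    have h1 : (a :: x :: b :: B).dropLast = a :: (x :: b :: B).dropLast := List.dropLast_cons₂
    rw [h1] at h0
    rcases List.mem_cons.1 h0 with h2 | h2
    · subst h2; rw [List.dropLast_cons₂]; exact List.mem_cons_self
    · exact h2
  | cons a' A' => rw [List.cons_append, List.tail_cons]; exact key A' a x b B

lemma lex_of_sorted (hel : ELH lab) {u v : β} {c c₂ : List β} (hc : SatC u v c)
    (hsort : (labelWord lab c).Pairwise (· ≤ ·)) (hc₂ : SatC u v c₂) (hne : c₂ ≠ c) :
    List.Lex (· < ·) (labelWord lab c) (labelWord lab c₂) := by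
  obtain ⟨r0, h1, h2, h3, h4⟩ := hel u v hc.le
  have hcr := h3 c hc hsort
  have h5 := h4 c₂ hc₂ (by rw [← hcr]; exact hne)
  rwa [← hcr] at h5

/-- Key comparison lemma: a maximal chain of `[u,v]` without descents outside `σ` is
lexicographically strictly smaller than any other maximal chain containing `σ ∩ c`. -/
lemma main2 (hel : ELH lab) : ∀ (n : ℕ) (u v : β) (c c₂ : List β) (σ : Finset β),
    c.length ≤ n → SatC u v c → SatC u v c₂ → c ≠ c₂ →
    (∀ y ∈ σ, y ∈ c → y ∈ c₂) →
    (∀ A (a x b : β) B, c = A ++ a :: x :: b :: B → x ∉ σ → lab a x ≤ lab x b) →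
    List.Lex (· < ·) (labelWord lab c) (labelWord lab c₂) := by
  intro n
  induction n with
  | zero =>
    intro u v c c₂ σ hlen hc
    exact absurd (List.length_eq_zero_iff.1 (Nat.le_zero.1 hlen)) hc.1
  | succ n ih =>
    intro u v c c₂ σ hlen hc hc₂ hne hσ hasc
    by_cases hint : ∃ x ∈ c.tail.dropLast, x ∈ σ
    · -- there is an interior element of `c` in `σ`; split at the first one
      obtain ⟨A₀, s, B₀, hI, hsσ, hA₀⟩ := first_mem_split (· ∈ σ) _ hint
      obtain ⟨c1, rfl⟩ := hc.cons_shape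
      rw [List.tail_cons] at hI
      have hc1ne : c1 ≠ [] := by
        intro h; rw [h] at hI; simp at hI
      have hlast : c1.getLast hc1ne = v := by
        have h0 := hc.2.2.1
        rw [List.getLast?_eq_getLast (l := u :: c1) (by simp), List.getLast_cons hc1ne] at h0
        simpa using h0
      have hc1 : c1 = A₀ ++ s :: (B₀ ++ [v]) := by
        conv_lhs => rw [← List.dropLast_append_getLast hc1ne]
        rw [hlast, hI]; simp
      subst hc1
      set R := B₀ ++ [v] with hR
      have hcdec : u :: (A₀ ++ s :: R) = (u :: A₀) ++ s :: R := by simp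
      have hc' : SatC u v ((u :: A₀) ++ s :: R) := by rw [← hcdec]; exact hc
      obtain ⟨hcL, hcR⟩ := satC_split' hc'
      have hsc : s ∈ u :: (A₀ ++ s :: R) := by simp
      have hsc₂ : s ∈ c₂ := hσ s hsσ hsc
      obtain ⟨A₂, B₂, hc₂dec⟩ := List.append_of_mem hsc₂
      have hc₂' : SatC u v (A₂ ++ s :: B₂) := by rw [← hc₂dec]; exact hc₂
      obtain ⟨hc₂L, hc₂R⟩ := satC_split' hc₂'
      have hw : labelWord lab (u :: (A₀ ++ s :: R)) =
          labelWord lab ((u :: A₀) ++ [s]) ++ labelWord lab (s :: R) := by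
        rw [hcdec]; exact word_split lab s (u :: A₀) R
      have hw₂ : labelWord lab c₂ =
          labelWord lab (A₂ ++ [s]) ++ labelWord lab (s :: B₂) := by
        rw [hc₂dec]; exact word_split lab s A₂ B₂
      by_cases hLL : (u :: A₀) ++ [s] = A₂ ++ [s]
      · have hA₂ : u :: A₀ = A₂ := (List.append_left_inj [s]).1 hLL
        have hRne : s :: R ≠ s :: B₂ := by
          intro h0
          apply hne
          rw [hc₂dec, ← hA₂, hcdec]
          injection h0 with _ h0
          rw [h0]
        have hlen' : (s :: R).length ≤ n := by
          have h0 : (u :: (A₀ ++ s :: R)).length = A₀.length + 1 + (s :: R).length := by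
            simp [List.length_append]; omega
          omega
        have htrans : ∀ y ∈ σ, y ∈ s :: R → y ∈ s :: B₂ := by
          intro y hyσ hyR
          have hyc : y ∈ u :: (A₀ ++ s :: R) := by
            rcases List.mem_cons.1 hyR with rfl | h0
            · simp
            · simp [List.mem_append, h0]
          have hyc₂ := hσ y hyσ hyc
          rw [hc₂dec] at hyc₂
          rcases List.mem_append.1 hyc₂ with h0 | h0
          · have h1 : y ≤ s := (hc₂L.mem_le y (List.mem_append.2 (Or.inl h0))).2
            have h2 : s ≤ y := (hcR.mem_le y hyR).1
            have : y = s := le_antisymm h1 h2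
            rw [this]; exact List.mem_cons_self
          · exact h0
        have hascR : ∀ A (a x b : β) B, s :: R = A ++ a :: x :: b :: B → x ∉ σ →
            lab a x ≤ lab x b := by
          intro A a x b B hdec hxσ
          exact hasc ((u :: A₀) ++ A) a x b B
            (by rw [hcdec, hdec, List.append_assoc]) hxσ
        have hIH := ih s v (s :: R) (s :: B₂) σ hlen' hcR hc₂R hRne htrans hascR
        rw [hw, hw₂, ← hA₂]
        exact lex_append_left _ hIH
      · -- the lower pieces differ; the lower piece of `c` is rising
        have hascL : (labelWord lab ((u :: A₀) ++ [s])).Pairwise (· ≤ ·) := by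
          refine sorted_word_of_ascents lab _ (fun A' a x b B' hdec => ?_)
          have hxA : x ∈ A₀ := by
            have h0 := triple_mem A' a x b B' _ hdec
            have h1 : ((u :: A₀) ++ [s]).tail.dropLast = A₀ := by
              rw [List.cons_append, List.tail_cons, List.dropLast_concat]
            rwa [h1] at h0
          refine hasc A' a x b (B' ++ R) ?_ (hA₀ x hxA)
          rw [hcdec, show ((u :: A₀) ++ s :: R) = ((u :: A₀) ++ [s]) ++ R from by simp,
            hdec, List.append_assoc]
          simp
        have hlex := lex_of_sorted lab hel hcL hascL hc₂L (fun h => hLL h.symm)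
        have hnopre : ∀ t0, labelWord lab (A₂ ++ [s]) ≠
            labelWord lab ((u :: A₀) ++ [s]) ++ t0 := by
          intro t0 h0
          have ht0 := noprefix lab hel ((u :: A₀) ++ [s]).length u s _ _ t0 le_rfl
            hcL hascL hc₂L h0
          rw [ht0, List.append_nil] at h0
          rw [h0] at hlex
          exact lex_irrefl hlex
        rw [hw, hw₂]
        exact lex_concat hlex hnopre _ _
    · -- no interior element of `c` lies in `σ` : `c` is the rising chain
      have hsorted : (labelWord lab c).Pairwise (· ≤ ·) := by
        refine sorted_word_of_ascents lab c (fun A a x b B hdec => ?_)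
        refine hasc A a x b B hdec (fun hxσ => hint ⟨x, triple_mem A a x b B c hdec, hxσ⟩)
      exact lex_of_sorted lab hel hc hsorted hc₂ (Ne.symm hne)

lemma satC_glue {u s v : β} {A B : List β} (h1 : SatC u s (A ++ [s]))
    (h2 : SatC s v (s :: B)) : SatC u v (A ++ s :: B) := by
  refine ⟨by simp, ?_, ?_, ?_⟩
  · have hh := h1.2.1
    rw [List.head?_append] at hh ⊢
    simpa using hh
  · rw [List.getLast?_append, h2.2.2.1]
    rfl
  · have hch1 := h1.2.2.2
    unfold List.Chain' at hch1; rw [List.isChain_append] at hch1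
    unfold List.Chain'; rw [List.isChain_append]
    refine ⟨hch1.1, h2.2.2.2, fun x hx y hy => ?_⟩
    refine hch1.2.2 x hx y ?_
    simp only [List.head?_cons, Option.mem_some_iff] at hy
    simp only [List.head?_cons, Option.mem_some_iff]
    exact hy

lemma lex_nil_right {l : List ℤ} (h : List.Lex (· < ·) l []) : False := by
  cases h

lemma lex_cons_inv {a b : ℤ} {l l' : List ℤ} (h : List.Lex (· < ·) (a :: l) (b :: l')) :
    a < b ∨ (a = b ∧ List.Lex (· < ·) l l') := by
  cases h with
  | cons h => exact Or.inr ⟨rfl, h⟩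
  | rel h => exact Or.inl h

/-- Replacing a descent `a ⋖ x ⋖ b` of a maximal chain by the rising chain of `[a,b]`
produces a lexicographically smaller maximal chain containing all other elements. -/
lemma descent_replace (hel : ELH lab) {m M : β} {A B : List β} {a x b : β}
    (hc : SatC m M (A ++ a :: x :: b :: B)) (hd : lab x b < lab a x) :
    ∃ c', SatC m M c' ∧
      List.Lex (· < ·) (labelWord lab c') (labelWord lab (A ++ a :: x :: b :: B)) ∧
      ∀ z ∈ A ++ a :: x :: b :: B, z ≠ x → z ∈ c' := by
  obtain ⟨hcL, hcR⟩ := satC_split' (A := A) (B := x :: b :: B) hc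
  have hc2 : SatC a M ([a, x] ++ b :: B) := by simpa using hcR
  obtain ⟨hmid0, hbM⟩ := satC_split' hc2
  have hmid : SatC a b [a, x, b] := by simpa using hmid0
  have hax : a ⋖ x := hmid.2.2.2.rel_head
  have hxb : x ⋖ b := (hmid.2.2.2.tail).rel_head
  have hab : a ≤ b := le_of_lt (hax.lt.trans hxb.lt)
  obtain ⟨r, hr, hrs, hru, hrl⟩ := hel a b hab
  obtain ⟨r1, rfl⟩ := hr.cons_shape
  rcases r1 with _ | ⟨z, r2⟩
  · have h0 : a = b := by simpa using hr.2.2.1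
    exact absurd h0 (ne_of_lt (hax.lt.trans hxb.lt))
  rcases r2 with _ | ⟨w, r3⟩
  · have hzb : z = b := by simpa using hr.2.2.1
    subst hzb
    exact absurd hxb.lt ((hr.2.2.2.rel_head).2 hax.lt)
  have e2 : labelWord lab [a, x, b] = [lab a x, lab x b] := rfl
  have hne : [a, x, b] ≠ a :: z :: w :: r3 := by
    intro h; rw [← h, e2] at hrs
    exact absurd ((List.pairwise_cons.1 hrs).1 _ (List.mem_cons_self)) (not_le.2 hd)
  have hlexr := hrl _ hmid hne
  have hrne : (a :: z :: w :: r3) ≠ [] := by simp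
  have hlastr : (a :: z :: w :: r3).getLast hrne = b := by
    have h0 := hr.2.2.1
    rw [List.getLast?_eq_getLast hrne] at h0
    simpa using h0
  have hdrop : (a :: z :: w :: r3).dropLast ++ [b] = a :: z :: w :: r3 := by
    conv_rhs => rw [← List.dropLast_append_getLast hrne]
    rw [hlastr]
  have hDshape : (a :: z :: w :: r3).dropLast = a :: (z :: w :: r3).dropLast :=
    List.dropLast_cons₂
  have h3 : SatC a b ((a :: z :: w :: r3).dropLast ++ [b]) := by rw [hdrop]; exact hr
  have h4 : SatC a M ((a :: z :: w :: r3).dropLast ++ b :: B) := satC_glue h3 hbM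
  have h5 : (a :: z :: w :: r3).dropLast ++ b :: B
      = a :: ((z :: w :: r3).dropLast ++ b :: B) := by rw [hDshape]; rfl
  have h6 : SatC a M (a :: ((z :: w :: r3).dropLast ++ b :: B)) := by rw [← h5]; exact h4
  refine ⟨A ++ a :: ((z :: w :: r3).dropLast ++ b :: B), satC_glue hcL h6, ?_, ?_⟩
  · rw [word_split lab a A (x :: b :: B),
      word_split lab a A ((z :: w :: r3).dropLast ++ b :: B)]
    apply lex_append_left
    rw [← h5, word_split lab b ((a :: z :: w :: r3).dropLast) B, hdrop]
    rw [labelWord_cons_cons lab a x (b :: B), labelWord_cons_cons lab x b B,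
        labelWord_cons_cons lab a z (w :: r3), labelWord_cons_cons lab z w r3,
        List.cons_append, List.cons_append]
    rw [labelWord_cons_cons lab a z (w :: r3), labelWord_cons_cons lab z w r3, e2] at hlexr
    rcases lex_cons_inv hlexr with h7 | ⟨h7, h8⟩
    · exact List.Lex.rel h7
    · rw [h7]
      rcases lex_cons_inv h8 with h9 | ⟨h9, h10⟩
      · exact List.Lex.cons (List.Lex.rel h9)
      · exact absurd h10 lex_nil_right
  · intro q hq hqx
    simp only [List.mem_append, List.mem_cons] at hq ⊢
    tauto

/-- A linear extension of the partial order, as a sorting relation. -/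
def rEx (x y : β) : Prop := toLinearExtension x ≤ toLinearExtension y

noncomputable instance : DecidableRel (rEx (β := β)) := fun _ _ => Classical.dec _

instance : IsTrans β rEx := ⟨fun _ _ _ h1 h2 => le_trans h1 h2⟩

instance : Std.Antisymm (rEx (β := β)) := ⟨fun a b h1 h2 =>
  (le_antisymm (a := toLinearExtension a) (b := toLinearExtension b) h1 h2 : a = b)⟩

instance : Std.Total (rEx (β := β)) := ⟨fun a b => le_total (toLinearExtension a) (toLinearExtension b)⟩

lemma rEx_of_le {x y : β} (h : x ≤ y) : rEx x y := toLinearExtension.monotone h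

lemma lt_of_rEx_of_comp {x y : β} (h : rEx x y) (hne : x ≠ y) (hcomp : x ≤ y ∨ y ≤ x) :
    x < y := by
  rcases hcomp with h1 | h1
  · exact h1.lt_of_ne hne
  · exact absurd (le_antisymm (rEx_of_le h1) h) (fun h2 => hne h2.symm)

open Classical in
lemma sort_eq_of_pairwise {c : List β} (h : c.Pairwise (· < ·)) :
    c.toFinset.sort rEx = c := by
  refine List.Perm.eq_of_pairwise' (Finset.pairwise_sort _ _) ?_
    (List.perm_of_nodup_nodup_toFinset_eq (Finset.sort_nodup _ _) h.nodup
      (by rw [Finset.sort_toFinset]))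
  exact h.imp fun hlt => rEx_of_le hlt.le

lemma isPChain_toFinset [DecidableEq β] {c : List β} (h : c.Pairwise (· < ·)) :
    IsPChain (· ≤ ·) (Set.univ : Set β) c.toFinset := by
  refine ⟨Set.subset_univ _, fun x hx y hy => ?_⟩
  rcases eq_or_ne x y with rfl | hne
  · exact Or.inl le_rfl
  · have h2 : c.Pairwise (fun a b => a ≤ b ∨ b ≤ a) := h.imp fun hlt => Or.inl hlt.le
    haveI : Std.Symm (fun a b : β => a ≤ b ∨ b ≤ a) := ⟨fun _ _ h0 => h0.symm⟩
    exact h2.forall (List.mem_toFinset.1 hx) (List.mem_toFinset.1 hy) hne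

lemma mem_chain_of_comparable {z v : β} : ∀ (l : List β) (a : β),
    List.Chain' (· ⋖ ·) (a :: l) → a ≤ z → (a :: l).getLast? = some v → z ≤ v →
    (∀ w ∈ a :: l, w ≤ z ∨ z ≤ w) → z ∈ a :: l := by
  intro l
  induction l with
  | nil =>
    intro a _ haz hv hzv _
    simp at hv; subst hv
    simp [le_antisymm hzv haz]
  | cons b l' ih =>
    intro a hch haz hv hzv hcomp
    rcases eq_or_ne a z with rfl | hne
    · exact List.mem_cons_self
    have haz' : a < z := haz.lt_of_ne hne
    rcases hcomp b (by simp) with hbz | hzb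
    · refine List.mem_cons_of_mem _ (ih b hch.tail hbz ?_ hzv ?_)
      · rw [← List.getLast?_cons_cons (a := a)]; exact hv
      · exact fun w hw => hcomp w (List.mem_cons_of_mem _ hw)
    · rcases eq_or_ne z b with rfl | hzb'
      · simp
      · exact absurd (hzb.lt_of_ne hzb') (hch.rel_head.2 haz')

lemma facet_of_satC [DecidableEq β] {m M : β} (hm : ∀ x : β, m ≤ x) (hM : ∀ x : β, x ≤ M)
    {c : List β} (h : SatC m M c) : IsFacet (· ≤ ·) (Set.univ : Set β) c.toFinset := by
  refine ⟨isPChain_toFinset h.pairwise, fun t ht hsub => ?_⟩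
  refine Finset.Subset.antisymm hsub (fun z hz => ?_)
  obtain ⟨c1, rfl⟩ := h.cons_shape
  rw [List.mem_toFinset]
  refine mem_chain_of_comparable c1 m h.2.2.2 (hm z) h.2.2.1 (hM z) (fun w hw => ?_)
  exact ht.2 w (hsub (List.mem_toFinset.2 hw)) z hz

lemma chain'_of_decomp {γ : Type*} {R : γ → γ → Prop} :
    ∀ (l : List γ), (∀ A (a b : γ) B, l = A ++ a :: b :: B → R a b) → List.Chain' R l
  | [] => fun _ => List.isChain_nil
  | [a] => fun _ => List.isChain_singleton a
  | a :: b :: t => fun h => by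
    unfold List.Chain'; rw [List.isChain_cons_cons]
    exact ⟨h [] a b t rfl, chain'_of_decomp (b :: t) fun A a' b' B hd =>
      h (a :: A) a' b' B (by rw [hd]; rfl)⟩

lemma satC_of_facet [DecidableEq β] {m M : β} (hm : ∀ x : β, m ≤ x) (hM : ∀ x : β, x ≤ M)
    {s : Finset β} (hs : IsFacet (· ≤ ·) (Set.univ : Set β) s) :
    SatC m M (s.sort rEx) ∧ (s.sort rEx).toFinset = s := by
  have hcomp : ∀ x ∈ s, ∀ y ∈ s, x ≤ y ∨ y ≤ x := hs.1.2
  -- m and M belong to s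
  have hmem : ∀ z : β, (∀ w ∈ s, w ≤ z ∨ z ≤ w) → z ∈ s := by
    intro z hz
    have hch : IsPChain (· ≤ ·) (Set.univ : Set β) (insert z s) := by
      refine ⟨Set.subset_univ _, fun x hx y hy => ?_⟩
      rcases Finset.mem_insert.1 hx with rfl | hx' <;>
        rcases Finset.mem_insert.1 hy with rfl | hy'
      · exact Or.inl le_rfl
      · exact (hz y hy').symm
      · exact hz x hx'
      · exact hcomp x hx' y hy'
    have := hs.2 _ hch (Finset.subset_insert _ _)
    rw [this]
    exact Finset.mem_insert_self _ _
  have hms : m ∈ s := hmem m fun w _ => Or.inr (hm w)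
  have hMs : M ∈ s := hmem M fun w _ => Or.inl (hM w)
  set l := s.sort rEx with hl
  have hlfin : l.toFinset = s := by rw [hl, Finset.sort_toFinset]
  have hmeml : ∀ x, x ∈ l ↔ x ∈ s := fun x => Finset.mem_sort _
  have hpw : l.Pairwise (· < ·) := by
    have h1 := (Finset.pairwise_sort s rEx).and (Finset.sort_nodup s rEx)
    refine h1.imp_of_mem (fun {a b} ha hb h0 => ?_)
    exact lt_of_rEx_of_comp h0.1 h0.2 (hcomp a ((hmeml a).1 ha) b ((hmeml b).1 hb))
  have hlne : l ≠ [] := by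
    intro h0
    rw [h0] at hmeml
    simpa using (hmeml m).2 hms
  -- every element of l is ≤ a or ≥ b for a decomposition l = A ++ a :: b :: B
  have hside : ∀ A (a b : β) B, l = A ++ a :: b :: B →
      ∀ w ∈ l, w ≤ a ∨ b ≤ w := by
    intro A a b B hd w hw
    rw [hd] at hw hpw
    rw [List.pairwise_append] at hpw
    rcases List.mem_append.1 hw with hwA | hwint
    · exact Or.inl (hpw.2.2 w hwA a (by simp)).le
    · rcases List.mem_cons.1 hwint with rfl | hwint'
      · exact Or.inl le_rfl
      · rcases List.mem_cons.1 hwint' with rfl | hwB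
        · exact Or.inr le_rfl
        · exact Or.inr ((List.pairwise_cons.1 (List.pairwise_cons.1 hpw.2.1).2).1 w hwB).le
  have hcov : ∀ A (a b : β) B, l = A ++ a :: b :: B → a ⋖ b := by
    intro A a b B hd
    have hab : a < b := by
      have hsub : List.Sublist [a, b] l := by
        rw [hd]
        exact ((List.cons_sublist_cons.2 (List.cons_sublist_cons.2
          (List.nil_sublist B))).trans (List.sublist_append_right A (a :: b :: B)))
      have := hpw.sublist hsub
      exact List.rel_of_pairwise_cons this (by simp)
    refine ⟨hab, fun z hz1 hz2 => ?_⟩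
    have hzs : z ∉ s := by
      intro hzs
      rcases hside A a b B hd z ((hmeml z).2 hzs) with h0 | h0
      · exact absurd (lt_of_le_of_lt h0 hz1) (lt_irrefl _)
      · exact absurd (lt_of_lt_of_le hz2 h0) (lt_irrefl _)
    apply hzs
    refine hmem z (fun w hw => ?_)
    rcases hside A a b B hd w ((hmeml w).2 hw) with h0 | h0
    · exact Or.inl (h0.trans hz1.le)
    · exact Or.inr (hz2.le.trans h0)
  have hchain : List.Chain' (· ⋖ ·) l := chain'_of_decomp l hcov
  -- head and last
  obtain ⟨h0, rest, hrest⟩ : ∃ h0 rest, l = h0 :: rest := by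
    rcases l with _ | ⟨h0, rest⟩
    · exact absurd rfl hlne
    · exact ⟨h0, rest, rfl⟩
  have hhead : l.head? = some m := by
    rw [hrest]
    have hml : m ∈ h0 :: rest := by rw [← hrest]; exact (hmeml m).2 hms
    rcases List.mem_cons.1 hml with rfl | hm'
    · rfl
    · have : h0 < m := (List.pairwise_cons.1 (by rw [← hrest]; exact hpw)).1 m hm'
      exact absurd (hm h0) this.not_ge
  have hlast : l.getLast? = some M := by
    rw [List.getLast?_eq_getLast (l := l) hlne]
    have hMl : M ∈ l := (hmeml M).2 hMs
    have hgl : l.getLast hlne ∈ l := List.getLast_mem hlne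
    have h1 : M ≤ l.getLast hlne :=
      pairwise_le_getLast hpw (List.getLast?_eq_getLast (l := l) hlne) M hMl
    exact congrArg some (le_antisymm (hM _) h1)
  exact ⟨⟨hlne, hhead, hlast, hchain⟩, hlfin⟩

lemma lex_trichotomy : ∀ (A B : List ℤ),
    List.Lex (· < ·) A B ∨ A = B ∨ List.Lex (· < ·) B A := by
  intro A
  induction A with
  | nil =>
    intro B
    cases B with
    | nil => exact Or.inr (Or.inl rfl)
    | cons b B' => exact Or.inl List.Lex.nil
  | cons a A' ih =>
    intro B
    cases B with
    | nil => exact Or.inr (Or.inr List.Lex.nil)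
    | cons b B' =>
      rcases lt_trichotomy a b with h | h | h
      · exact Or.inl (List.Lex.rel h)
      · subst h
        rcases ih B' with h | h | h
        · exact Or.inl (List.Lex.cons h)
        · exact Or.inr (Or.inl (by rw [h]))
        · exact Or.inr (Or.inr (List.Lex.cons h))
      · exact Or.inr (Or.inr (List.Lex.rel h))

lemma lex_trans : ∀ {A B C : List ℤ}, List.Lex (· < ·) A B → List.Lex (· < ·) B C →
    List.Lex (· < ·) A C := by
  intro A B C h
  induction h generalizing C with
  | nil =>
    intro h2
    cases h2 with
    | cons h3 => exact List.Lex.nil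
    | rel h3 => exact List.Lex.nil
  | cons h ih =>
    intro h2
    cases h2 with
    | cons h3 => exact List.Lex.cons (ih h3)
    | rel h3 => exact List.Lex.rel h3
  | rel h =>
    intro h2
    cases h2 with
    | cons h3 => exact List.Lex.rel h
    | rel h3 => exact List.Lex.rel (h.trans h3)

end Aux

/-- Every bounded EL-shellable finite poset is shellable. -/
theorem stmt_3 {β : Type*} [PartialOrder β] [Finite β]
    (hb : Bounded (· ≤ ·) (Set.univ : Set β))
    (hel : ELShellable (· ≤ ·) (Set.univ : Set β)) :
    Shellable (· ≤ ·) (Set.univ : Set β) := by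
  classical
  obtain ⟨⟨m, -, hm0⟩, ⟨M, -, hM0⟩⟩ := hb
  have hm : ∀ x : β, m ≤ x := fun x => hm0 x (Set.mem_univ x)
  have hM : ∀ x : β, x ≤ M := fun x => hM0 x (Set.mem_univ x)
  obtain ⟨lab, helh⟩ := elh_of_elshellable hel
  haveI : Fintype β := Fintype.ofFinite β
  let eqv := Fintype.equivFin (Finset β)
  let wd : Finset β → List ℤ := fun F => labelWord lab (F.sort rEx)
  let keyle : Finset β → Finset β → Prop := fun F G =>
    List.Lex (· < ·) (wd F) (wd G) ∨ (wd F = wd G ∧ (eqv F : ℕ) ≤ (eqv G : ℕ))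
  haveI : DecidableRel keyle := fun _ _ => Classical.dec _
  haveI : IsTrans (Finset β) keyle := by
    refine ⟨fun a b c h1 h2 => ?_⟩
    rcases h1 with h1 | ⟨h1, h1'⟩ <;> rcases h2 with h2 | ⟨h2, h2'⟩
    · exact Or.inl (lex_trans h1 h2)
    · exact Or.inl (h2 ▸ h1)
    · exact Or.inl (h1 ▸ h2)
    · exact Or.inr ⟨h1.trans h2, h1'.trans h2'⟩
  haveI : Std.Antisymm keyle := by
    refine ⟨fun a b h1 h2 => ?_⟩
    rcases h1 with h1 | ⟨h1, h1'⟩ <;> rcases h2 with h2 | ⟨h2, h2'⟩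
    · exact (lex_asymm h1 h2).elim
    · exact (lex_irrefl (h2 ▸ h1)).elim
    · exact (lex_irrefl (h1 ▸ h2)).elim
    · exact eqv.injective (Fin.val_injective (le_antisymm h1' h2'))
  haveI : Std.Total keyle := by
    refine ⟨fun a b => ?_⟩
    rcases lex_trichotomy (wd a) (wd b) with h | h | h
    · exact Or.inl (Or.inl h)
    · rcases Nat.le_total (eqv a : ℕ) (eqv b : ℕ) with h' | h'
      · exact Or.inl (Or.inr ⟨h, h'⟩)
      · exact Or.inr (Or.inr ⟨h.symm, h'⟩)
    · exact Or.inr (Or.inl h)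
  let S : Finset (Finset β) :=
    Finset.univ.filter (fun F => IsFacet (· ≤ ·) (Set.univ : Set β) F)
  let L := S.sort keyle
  have hmemL : ∀ F, IsFacet (· ≤ ·) (Set.univ : Set β) F ↔ F ∈ L := by
    intro F
    rw [Finset.mem_sort, Finset.mem_filter]
    simp
  have hpwL : List.Pairwise keyle L := Finset.pairwise_sort S keyle
  refine ⟨L, Finset.sort_nodup _ _, hmemL, ?_⟩
  intro k hk σ hσk hearlier
  obtain ⟨i, hik, hσi⟩ := hearlier
  have hFfacet := (hmemL (L.get k)).2 (by rw [show k = ⟨k.1, k.2⟩ from rfl]; exact List.get_mem L ⟨k.1, k.2⟩)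
  have hFifacet := (hmemL (L.get i)).2 (by rw [show i = ⟨i.1, i.2⟩ from rfl]; exact List.get_mem L ⟨i.1, i.2⟩)
  obtain ⟨hcF, hcFfin⟩ := satC_of_facet hm hM hFfacet
  obtain ⟨hcFi, hcFifin⟩ := satC_of_facet hm hM hFifacet
  set F := L.get k with hF
  set Fi := L.get i with hFi
  set c := F.sort rEx with hc
  set ci := Fi.sort rEx with hci
  have hFneFi : F ≠ Fi := by
    intro h0
    have := ((Finset.sort_nodup S keyle).get_inj_iff).1 h0.symm
    omega
  have hkeyle : keyle Fi F :=
    List.pairwise_iff_get.1 hpwL i k (by exact hik)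
  by_cases hdes : ∃ A a x b B, c = A ++ a :: x :: b :: B ∧ x ∉ σ ∧ lab x b < lab a x
  · obtain ⟨A, a, x, b, B, hdec, hxσ, hd⟩ := hdes
    have hc' : SatC m M (A ++ a :: x :: b :: B) := by rw [← hdec]; exact hcF
    obtain ⟨c', hc'sat, hc'lex, hc'mem⟩ := descent_replace lab helh hc' hd
    have hF'facet := facet_of_satC hm hM hc'sat
    have hF'memL : c'.toFinset ∈ L := (hmemL _).1 hF'facet
    obtain ⟨i', hi'⟩ := List.mem_iff_get.1 hF'memL
    have hwd' : wd c'.toFinset = labelWord lab c' := by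
      show labelWord lab (c'.toFinset.sort rEx) = labelWord lab c'
      rw [sort_eq_of_pairwise hc'sat.pairwise]
    have hlexF : List.Lex (· < ·) (wd c'.toFinset) (wd F) := by
      rw [hwd']
      show List.Lex (· < ·) (labelWord lab c') (labelWord lab c)
      rw [hdec]
      exact hc'lex
    have hx_inF : x ∈ F := by
      rw [← hcFfin, hdec]
      simp [List.mem_toFinset]
    have hi'k : (i' : ℕ) < (k : ℕ) := by
      rcases lt_trichotomy (i' : ℕ) (k : ℕ) with h0 | h0 | h0
      · exact h0
      · exfalso
        have : L.get i' = L.get k := by congr 1; exact Fin.ext h0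
        rw [hi', ← hF] at this
        rw [this] at hlexF
        exact lex_irrefl hlexF
      · exfalso
        have hkk : keyle F c'.toFinset := by
          rw [← hi']
          exact List.pairwise_iff_get.1 hpwL k i' (by exact h0)
        rcases hkk with h1 | ⟨h1, -⟩
        · exact lex_asymm h1 hlexF
        · rw [h1] at hlexF
          exact lex_irrefl hlexF
    refine ⟨F.erase x, Finset.subset_erase.2 ⟨hσk, hxσ⟩, Finset.erase_subset _ _,
      ⟨i', hi'k, ?_⟩, Finset.card_erase_add_one hx_inF⟩
    intro z hz
    rw [hi']
    have hz1 := Finset.mem_erase.1 hz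
    have hz2 : z ∈ c := by
      rw [← List.mem_toFinset, hcFfin]
      exact hz1.2
    rw [List.mem_toFinset]
    refine hc'mem z ?_ hz1.1
    rw [← hdec]
    exact hz2
  · push_neg at hdes
    exfalso
    have hcne : c ≠ ci := by
      intro h0
      apply hFneFi
      rw [← hcFfin, ← hcFifin, h0]
    have htrans : ∀ y ∈ σ, y ∈ c → y ∈ ci := by
      intro y hyσ _
      rw [hci, Finset.mem_sort]
      exact hσi hyσ
    have hLex := main2 lab helh c.length m M c ci σ le_rfl hcF hcFi hcne htrans hdes
    rcases hkeyle with h1 | ⟨h1, -⟩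
    · exact lex_asymm h1 hLex
    · have h1' : labelWord lab ci = labelWord lab c := h1
      rw [h1'] at hLex
      exact lex_irrefl hLex

end KohnertPaper
end

section
/- Let D be a diagram, and let D_1, D_2 be diagrams in the Kohnert poset P(D) with D_2 ≺ D_1. Suppose there are columns 0 < c_1 < ⋯ < c_n and rows 0 < r^i_1 < r^i_2 for each i such that, letting R = ⋃_{i=1}^n {(r̃, c_i) : r^i_1 ≤ r̃ ≤ r^i_2}, one has D_1 \ R = D_2 \ R = S. Then every diagram D̃ in the interval [D_2, D_1] of P(D) satisfies D̃ \ R = S. -/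
namespace KohnertPaper

variable {α : Type*}

def colCount (T : Diagram) (c t : ℕ) : ℕ :=
  (T.filter fun p => p.2 = c ∧ t ≤ p.1).card

lemma colCount_succ (T : Diagram) (c r : ℕ) :
    colCount T c r = colCount T c (r+1) + (if (r, c) ∈ T then 1 else 0) := by
  classical
  unfold colCount
  have hsplit : (T.filter fun p => p.2 = c ∧ r ≤ p.1)
      = (T.filter fun p => p.2 = c ∧ r+1 ≤ p.1) ∪ (T.filter fun p => p = (r, c)) := by
    ext p
    simp only [Finset.mem_filter, Finset.mem_union]
    constructor
    · rintro ⟨hp, hc, hr⟩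
      rcases eq_or_lt_of_le hr with h | h
      · exact Or.inr ⟨hp, by obtain ⟨a, b⟩ := p; simp_all⟩
      · exact Or.inl ⟨hp, hc, h⟩
    · rintro (⟨hp, hc, hr⟩ | ⟨hp, he⟩)
      · exact ⟨hp, hc, by omega⟩
      · subst he; exact ⟨hp, rfl, le_rfl⟩
  have hdisj : Disjoint (T.filter fun p => p.2 = c ∧ r+1 ≤ p.1)
      (T.filter fun p => p = (r, c)) := by
    rw [Finset.disjoint_left]
    rintro p hp1 hp2
    simp only [Finset.mem_filter] at hp1 hp2
    rw [hp2.2] at hp1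
    omega
  rw [hsplit, Finset.card_union_of_disjoint hdisj, Finset.filter_eq']
  split_ifs <;> simp

lemma KMove.colCount_le {D D' : Diagram} (h : KMove D D') (c t : ℕ) :
    colCount D' c t ≤ colCount D c t := by
  classical
  obtain ⟨r, c0, r', h1, hrr, hmem, _, hnot, _, hD'⟩ := h
  subst hD'
  unfold colCount
  rw [Finset.filter_insert, Finset.filter_erase]
  split_ifs with hp
  · have hpb : (r, c0) ∈ D.filter fun p => p.2 = c ∧ t ≤ p.1 :=
      Finset.mem_filter.2 ⟨hmem, hp.1, hp.2.trans hrr.le⟩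
    rw [Finset.card_insert_of_notMem, Finset.card_erase_of_mem hpb]
    · have := Finset.card_pos.2 ⟨_, hpb⟩
      omega
    · intro hmem'
      exact hnot (Finset.mem_filter.1 (Finset.mem_of_mem_erase hmem')).1
  · exact le_trans (Finset.card_erase_le) le_rfl

lemma KMove.colCount_zero {D D' : Diagram} (h : KMove D D') (c : ℕ) :
    colCount D' c 0 = colCount D c 0 := by
  classical
  obtain ⟨r, c0, r', h1, hrr, hmem, _, hnot, _, hD'⟩ := h
  subst hD'
  unfold colCount
  rw [Finset.filter_insert, Finset.filter_erase]
  split_ifs with hp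
  · have hpb : (r, c0) ∈ D.filter fun p => p.2 = c ∧ 0 ≤ p.1 :=
      Finset.mem_filter.2 ⟨hmem, hp.1, Nat.zero_le _⟩
    rw [Finset.card_insert_of_notMem, Finset.card_erase_of_mem hpb]
    · have := Finset.card_pos.2 ⟨_, hpb⟩
      omega
    · intro hmem'
      exact hnot (Finset.mem_filter.1 (Finset.mem_of_mem_erase hmem')).1
  · have : (r, c0) ∉ D.filter fun p => p.2 = c ∧ 0 ≤ p.1 := by
      intro hm
      exact hp ⟨(Finset.mem_filter.1 hm).2.1, Nat.zero_le _⟩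
    rw [Finset.erase_eq_of_notMem this]

lemma KReach.colCount_le {D D' : Diagram} (h : KReach D D') (c t : ℕ) :
    colCount D' c t ≤ colCount D c t := by
  induction h with
  | refl => exact le_rfl
  | tail _ hm ih => exact le_trans (hm.colCount_le c t) ih

lemma KReach.colCount_zero {D D' : Diagram} (h : KReach D D') (c : ℕ) :
    colCount D' c 0 = colCount D c 0 := by
  induction h with
  | refl => rfl
  | tail _ hm ih => rw [hm.colCount_zero c, ih]

lemma lowCount_add (T : Diagram) (c t : ℕ) :
    colCount T c t + (T.filter fun p => p.2 = c ∧ p.1 < t).card = colCount T c 0 := by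
  classical
  unfold colCount
  rw [← Finset.card_union_of_disjoint]
  · congr 1
    ext p
    simp only [Finset.mem_filter, Finset.mem_union]
    constructor
    · rintro (⟨hp, hc, hr⟩ | ⟨hp, hc, hr⟩) <;> exact ⟨hp, hc, Nat.zero_le _⟩
    · rintro ⟨hp, hc, _⟩
      by_cases h : t ≤ p.1
      · exact Or.inl ⟨hp, hc, h⟩
      · exact Or.inr ⟨hp, hc, by omega⟩
  · rw [Finset.disjoint_left]
    rintro p hp1 hp2
    simp only [Finset.mem_filter] at hp1 hp2
    omega

/-- If `D₁, D₂ ∈ P(D)` with `D₂ ≺ D₁` agree outside a union `R` of column segments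
`{(r̃,cᵢ) : r₁ⁱ ≤ r̃ ≤ r₂ⁱ}` (with `0 < c₁ < ⋯ < c_n` and `0 < r₁ⁱ < r₂ⁱ`), then every
diagram of the interval `[D₂, D₁]` agrees with them outside `R`. -/
theorem stmt_4 (D D1 D2 : Diagram)
    (hD1 : KReach D D1) (hD2 : KReach D D2)
    (hlt : KReach D1 D2) (hne : D2 ≠ D1)
    (n : ℕ) (c r1 r2 : Fin n → ℕ)
    (hc : StrictMono c) (hcpos : ∀ i, 0 < c i)
    (hr : ∀ i, 0 < r1 i ∧ r1 i < r2 i)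
    (R : Finset (ℕ × ℕ))
    (hR : ∀ p : ℕ × ℕ, p ∈ R ↔ ∃ i : Fin n, p.2 = c i ∧ r1 i ≤ p.1 ∧ p.1 ≤ r2 i)
    (hS : D1 \ R = D2 \ R) :
    ∀ T : Diagram, KReach D1 T → KReach T D2 → T \ R = D1 \ R := by
  classical
  have hmemS : ∀ p : ℕ × ℕ, p ∉ R → (p ∈ D1 ↔ p ∈ D2) := by
    intro p hp
    constructor
    · intro h
      have : p ∈ D1 \ R := Finset.mem_sdiff.2 ⟨h, hp⟩
      rw [hS] at this
      exact (Finset.mem_sdiff.1 this).1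
    · intro h
      have : p ∈ D2 \ R := Finset.mem_sdiff.2 ⟨h, hp⟩
      rw [← hS] at this
      exact (Finset.mem_sdiff.1 this).1
  have key : ∀ γ t : ℕ, (∀ i : Fin n, γ = c i → (t ≤ r1 i ∨ r2 i < t)) →
      colCount D1 γ t = colCount D2 γ t := by
    intro γ t hcond
    by_cases hγ : ∃ i : Fin n, γ = c i
    · obtain ⟨i, rfl⟩ := hγ
      rcases hcond i rfl with ht | ht
      · -- low case : t ≤ r1 i, use totals minus low part
        have htot : colCount D1 (c i) 0 = colCount D2 (c i) 0 := by
          rw [hD1.colCount_zero, hD2.colCount_zero]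
        have hlow : (D1.filter fun p => p.2 = c i ∧ p.1 < t)
            = (D2.filter fun p => p.2 = c i ∧ p.1 < t) := by
          ext p
          simp only [Finset.mem_filter]
          have hnotR : p.2 = c i → p.1 < t → p ∉ R := by
            intro h1 h2 hpR
            obtain ⟨j, hj1, hj2, hj3⟩ := (hR p).1 hpR
            obtain rfl : i = j := hc.injective (h1 ▸ hj1)
            omega
          constructor
          · rintro ⟨hp, h1, h2⟩
            exact ⟨(hmemS p (hnotR h1 h2)).1 hp, h1, h2⟩
          · rintro ⟨hp, h1, h2⟩
            exact ⟨(hmemS p (hnotR h1 h2)).2 hp, h1, h2⟩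
        have e1 := lowCount_add D1 (c i) t
        have e2 := lowCount_add D2 (c i) t
        rw [hlow] at e1
        omega
      · -- high case : t > r2 i, the filters agree
        unfold colCount
        congr 1
        ext p
        simp only [Finset.mem_filter]
        have hnotR : p.2 = c i → t ≤ p.1 → p ∉ R := by
          intro h1 h2 hpR
          obtain ⟨j, hj1, hj2, hj3⟩ := (hR p).1 hpR
          obtain rfl : i = j := hc.injective (h1 ▸ hj1)
          omega
        constructor
        · rintro ⟨hp, h1, h2⟩
          exact ⟨(hmemS p (hnotR h1 h2)).1 hp, h1, h2⟩
        · rintro ⟨hp, h1, h2⟩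
          exact ⟨(hmemS p (hnotR h1 h2)).2 hp, h1, h2⟩
    · -- γ is not one of the columns: all cells of the column are outside R
      unfold colCount
      congr 1
      ext p
      simp only [Finset.mem_filter]
      have hnotR : p.2 = γ → p ∉ R := by
        intro h1 hpR
        obtain ⟨j, hj1, _, _⟩ := (hR p).1 hpR
        exact hγ ⟨j, h1 ▸ hj1⟩
      constructor
      · rintro ⟨hp, h1, h2⟩
        exact ⟨(hmemS p (hnotR h1)).1 hp, h1, h2⟩
      · rintro ⟨hp, h1, h2⟩
        exact ⟨(hmemS p (hnotR h1)).2 hp, h1, h2⟩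
  intro T hT1 hT2
  have sandwich : ∀ γ t : ℕ, (∀ i : Fin n, γ = c i → (t ≤ r1 i ∨ r2 i < t)) →
      colCount T γ t = colCount D1 γ t := by
    intro γ t hcond
    refine le_antisymm (hT1.colCount_le γ t) ?_
    rw [key γ t hcond]
    exact hT2.colCount_le γ t
  ext p
  obtain ⟨ρ, γ⟩ := p
  simp only [Finset.mem_sdiff]
  suffices h : (ρ, γ) ∉ R → ((ρ, γ) ∈ T ↔ (ρ, γ) ∈ D1) by tauto
  intro hnR
  have hcond : ∀ t : ℕ, t = ρ ∨ t = ρ + 1 →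
      ∀ i : Fin n, γ = c i → (t ≤ r1 i ∨ r2 i < t) := by
    intro t ht i hi
    have : ¬ (r1 i ≤ ρ ∧ ρ ≤ r2 i) := by
      intro hcontra
      exact hnR ((hR (ρ, γ)).2 ⟨i, hi, hcontra.1, hcontra.2⟩)
    omega
  have h1 : colCount T γ ρ = colCount D1 γ ρ :=
    sandwich γ ρ (hcond ρ (Or.inl rfl))
  have h2 : colCount T γ (ρ+1) = colCount D1 γ (ρ+1) :=
    sandwich γ (ρ+1) (hcond (ρ+1) (Or.inr rfl))
  have e1 := colCount_succ T γ ρ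
  have e2 := colCount_succ D1 γ ρ
  by_cases hT : (ρ, γ) ∈ T <;> by_cases hd : (ρ, γ) ∈ D1 <;>
    simp [hT, hd] at e1 e2 ⊢ <;> omega

end KohnertPaper
end

section
/- Let D be a diagram and let D_1, D_2 ∈ P(D) with D_2 ≺ D_1, where D_2 is obtained from D_1 by moving the cell (r,c) down to (r−j,c) via a single Kohnert move at row r (with 1 ≤ j < r). Then D_2 is covered by D_1 in P(D) if and only if for every row r̃ with r−j < r̃ < r there exists a column c̃ > c such that (r̃, c̃) ∈ D_1. -/
namespace KohnertPaper

variable {α : Type*}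

/-! ### Auxiliary invariants for Kohnert moves -/

/-- Number of cells of `X` in column `c` with row at least `t`. -/
def Ncount (X : Diagram) (c t : ℕ) : ℕ :=
  (X.filter fun p => p.2 = c ∧ t ≤ p.1).card

/-- Total row sum of a diagram. -/
def Srow (X : Diagram) : ℕ := ∑ p ∈ X, p.1

lemma Ncount_move_le {X : Diagram} {r₀ c₀ r' : ℕ}
    (h1 : (r₀, c₀) ∈ X) (h2 : (r', c₀) ∉ X) (h3 : r' < r₀) (c' t : ℕ) :
    Ncount (insert (r', c₀) (X.erase (r₀, c₀))) c' t ≤ Ncount X c' t := by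
  classical
  unfold Ncount
  rw [Finset.filter_insert, Finset.filter_erase]
  by_cases hP : (r', c₀).2 = c' ∧ t ≤ (r', c₀).1
  · rw [if_pos hP]
    have hPr : ((r₀, c₀).2 = c' ∧ t ≤ (r₀, c₀).1) := ⟨hP.1, hP.2.trans (le_of_lt h3)⟩
    have hr0mem : (r₀, c₀) ∈ X.filter fun p => p.2 = c' ∧ t ≤ p.1 :=
      Finset.mem_filter.2 ⟨h1, hPr⟩
    have hr'not : (r', c₀) ∉ (X.filter fun p => p.2 = c' ∧ t ≤ p.1).erase (r₀, c₀) := by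
      intro hmem
      exact h2 (Finset.mem_filter.1 (Finset.mem_of_mem_erase hmem)).1
    rw [Finset.card_insert_of_notMem hr'not,
      Finset.card_erase_of_mem hr0mem]
    have := Finset.card_pos.2 ⟨_, hr0mem⟩
    omega
  · rw [if_neg hP]
    calc ((X.filter fun p => p.2 = c' ∧ t ≤ p.1).erase (r₀, c₀)).card
        ≤ (X.filter fun p => p.2 = c' ∧ t ≤ p.1).card := Finset.card_erase_le
      _ = _ := rfl

lemma Ncount_move_strict {X : Diagram} {r₀ c₀ r' : ℕ}
    (h1 : (r₀, c₀) ∈ X) (h2 : (r', c₀) ∉ X) (h3 : r' < r₀) {t : ℕ}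
    (h4 : r' < t) (h5 : t ≤ r₀) :
    Ncount (insert (r', c₀) (X.erase (r₀, c₀))) c₀ t + 1 = Ncount X c₀ t := by
  classical
  unfold Ncount
  rw [Finset.filter_insert, Finset.filter_erase]
  have hP : ¬ ((r', c₀).2 = c₀ ∧ t ≤ (r', c₀).1) := by
    rintro ⟨-, h⟩; omega
  rw [if_neg hP]
  have hr0mem : (r₀, c₀) ∈ X.filter fun p => p.2 = c₀ ∧ t ≤ p.1 :=
    Finset.mem_filter.2 ⟨h1, rfl, h5⟩
  rw [Finset.card_erase_of_mem hr0mem]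
  have := Finset.card_pos.2 ⟨_, hr0mem⟩
  omega

lemma Ncount_move_eq {X : Diagram} {r₀ c₀ r' : ℕ}
    (h1 : (r₀, c₀) ∈ X) (h2 : (r', c₀) ∉ X) (h3 : r' < r₀) {c' t : ℕ}
    (h : ¬(c' = c₀ ∧ r' < t ∧ t ≤ r₀)) :
    Ncount (insert (r', c₀) (X.erase (r₀, c₀))) c' t = Ncount X c' t := by
  classical
  unfold Ncount
  rw [Finset.filter_insert, Finset.filter_erase]
  by_cases hP : (r', c₀).2 = c' ∧ t ≤ (r', c₀).1
  · rw [if_pos hP]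
    have hPr : ((r₀, c₀).2 = c' ∧ t ≤ (r₀, c₀).1) := ⟨hP.1, hP.2.trans (le_of_lt h3)⟩
    have hr0mem : (r₀, c₀) ∈ X.filter fun p => p.2 = c' ∧ t ≤ p.1 :=
      Finset.mem_filter.2 ⟨h1, hPr⟩
    have hr'not : (r', c₀) ∉ (X.filter fun p => p.2 = c' ∧ t ≤ p.1).erase (r₀, c₀) := by
      intro hmem
      exact h2 (Finset.mem_filter.1 (Finset.mem_of_mem_erase hmem)).1
    rw [Finset.card_insert_of_notMem hr'not, Finset.card_erase_of_mem hr0mem]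
    have := Finset.card_pos.2 ⟨_, hr0mem⟩
    omega
  · rw [if_neg hP]
    have hnot : (r₀, c₀) ∉ X.filter fun p => p.2 = c' ∧ t ≤ p.1 := by
      intro hmem
      obtain ⟨-, hc, ht⟩ := Finset.mem_filter.1 hmem
      simp only at hc ht
      have htr' : t ≤ r' := by
        by_contra h''
        exact h ⟨hc.symm, by omega, ht⟩
      exact hP ⟨hc, htr'⟩
    rw [Finset.erase_eq_of_notMem hnot]

lemma Ncount_kmove_le {X Y : Diagram} (h : KMove X Y) (c' t : ℕ) :
    Ncount Y c' t ≤ Ncount X c' t := by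
  obtain ⟨r₀, c₀, r', _, h3, h1, _, h2, _, hY⟩ := h
  rw [hY]
  exact Ncount_move_le h1 h2 h3 c' t

lemma Ncount_kreach_le {X Y : Diagram} (h : KReach X Y) (c' t : ℕ) :
    Ncount Y c' t ≤ Ncount X c' t := by
  induction h with
  | refl => exact le_rfl
  | tail _ hmv ih => exact le_trans (Ncount_kmove_le hmv c' t) ih

lemma Srow_kmove_lt {X Y : Diagram} (h : KMove X Y) : Srow Y < Srow X := by
  obtain ⟨r₀, c₀, r', _, h3, h1, _, h2, _, hY⟩ := h
  have h2' : (r', c₀) ∉ X.erase (r₀, c₀) := fun hm => h2 (Finset.mem_of_mem_erase hm)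
  have : Srow Y = r' + ∑ p ∈ X.erase (r₀, c₀), p.1 := by
    rw [hY, Srow, Finset.sum_insert h2']
  rw [this]
  have hsum : ∑ p ∈ X.erase (r₀, c₀), p.1 + r₀ = Srow X := by
    rw [Srow, ← Finset.sum_erase_add X _ h1]
  omega

lemma Srow_kreach_le {X Y : Diagram} (h : KReach X Y) : Srow Y ≤ Srow X := by
  induction h with
  | refl => exact le_rfl
  | tail _ hmv ih => exact le_trans (le_of_lt (Srow_kmove_lt hmv)) ih

lemma kreach_antisymm {X Y : Diagram} (h1 : KReach X Y) (h2 : KReach Y X) : X = Y := by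
  rcases Relation.ReflTransGen.cases_head h1 with rfl | ⟨Z, hZ, hZY⟩
  · rfl
  · exfalso
    have := Srow_kmove_lt hZ
    have := Srow_kreach_le hZY
    have := Srow_kreach_le h2
    omega

/-- Suppose `D₂ = D₁ ↓^{(r,c)}_{(r−j,c)}` is obtained from `D₁ ∈ P(D)` by a single Kohnert
move at row `r` (with `1 ≤ j < r`). Then `D₂ ⋖ D₁` in `P(D)` iff every row strictly between
`r−j` and `r` contains a cell of `D₁` strictly to the right of column `c`. -/
theorem stmt_5 (D D1 : Diagram) (hD1 : KReach D D1)
    (r c j : ℕ) (hj1 : 1 ≤ j) (hjr : j < r)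
    (hcell : (r, c) ∈ D1)
    (hright : ∀ c', c < c' → (r, c') ∉ D1)
    (hempty : (r - j, c) ∉ D1)
    (hfill : ∀ r₁, r - j < r₁ → r₁ < r → (r₁, c) ∈ D1)
    (D2 : Diagram) (hD2 : D2 = insert (r - j, c) (D1.erase (r, c))) :
    (D2 ≠ D1 ∧ KReach D1 D2 ∧
        ∀ T : Diagram, KReach D1 T → KReach T D2 → T = D1 ∨ T = D2) ↔
      ∀ rr, r - j < rr → rr < r → ∃ cc, c < cc ∧ (rr, cc) ∈ D1 := by
  have hrj1 : 1 ≤ r - j := by omega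
  have hrjr : r - j < r := by omega
  constructor
  · rintro ⟨hne, hreach, hcov⟩ rr h1 h2
    by_contra hno
    push_neg at hno
    set T : Diagram := insert (r - j, c) (D1.erase (rr, c)) with hT
    have hmem_rr : (rr, c) ∈ D1 := hfill rr h1 h2
    have hmv1 : KMove D1 T :=
      ⟨rr, c, r - j, hrj1, h1, hmem_rr, fun c' hc' => hno c' hc', hempty,
       fun r₁ ha hb => hfill r₁ ha (hb.trans h2), rfl⟩
    have hrT : (r, c) ∈ T := by
      apply Finset.mem_insert_of_mem
      exact Finset.mem_erase.2 ⟨by simp; omega, hcell⟩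
    have hmv2 : KMove T D2 := by
      refine ⟨r, c, rr, by omega, h2, hrT, ?_, ?_, ?_, ?_⟩
      · intro c' hc' hmem
        rcases Finset.mem_insert.1 hmem with heq | hmem'
        · have : c' = c := (Prod.mk.injEq _ _ _ _ ▸ heq).2
          omega
        · exact hright c' hc' (Finset.mem_of_mem_erase hmem')
      · intro hmem
        rcases Finset.mem_insert.1 hmem with heq | hmem'
        · have : rr = r - j := (Prod.mk.injEq _ _ _ _ ▸ heq).1
          omega
        · exact (Finset.mem_erase.1 hmem').1 rfl
      · intro r₁ ha hb
        apply Finset.mem_insert_of_mem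
        exact Finset.mem_erase.2 ⟨by simp; omega, hfill r₁ (by omega) hb⟩
      · rw [hD2, hT]
        ext ⟨a, b⟩
        simp only [Finset.mem_insert, Finset.mem_erase, Prod.mk.injEq, ne_eq]
        constructor
        · rintro (⟨rfl, rfl⟩ | ⟨hne', hmem⟩)
          · right
            exact ⟨by omega, Or.inl ⟨rfl, rfl⟩⟩
          · by_cases hab : a = rr ∧ b = c
            · exact Or.inl ⟨hab.1, hab.2⟩
            · right
              refine ⟨fun h => hne' ⟨h.1, h.2⟩, Or.inr ⟨fun h => hab ⟨h.1, h.2⟩, hmem⟩⟩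
        · rintro (⟨rfl, rfl⟩ | ⟨hne', (⟨rfl, rfl⟩ | ⟨hne'', hmem⟩)⟩)
          · right
            exact ⟨by omega, hmem_rr⟩
          · exact Or.inl ⟨rfl, rfl⟩
          · right
            exact ⟨fun h => hne' ⟨h.1, h.2⟩, hmem⟩
    have hTD1 : T ≠ D1 := by
      intro hEq
      apply hempty
      rw [← hEq]
      exact Finset.mem_insert_self _ _
    have hTD2 : T ≠ D2 := by
      intro hEq
      have : (r, c) ∈ D2 := hEq ▸ hrT
      rw [hD2] at this
      rcases Finset.mem_insert.1 this with heq | hmem'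
      · have : r = r - j := (Prod.mk.injEq _ _ _ _ ▸ heq).1
        omega
      · exact (Finset.mem_erase.1 hmem').1 rfl
    rcases hcov T (Relation.ReflTransGen.single hmv1) (Relation.ReflTransGen.single hmv2)
      with h | h
    · exact hTD1 h
    · exact hTD2 h
  · intro hcond
    have hmvD2 : KMove D1 D2 := ⟨r, c, r - j, hrj1, hrjr, hcell, hright, hempty, hfill, hD2⟩
    refine ⟨?_, Relation.ReflTransGen.single hmvD2, ?_⟩
    · intro hEq
      apply hempty
      rw [← hEq, hD2]
      exact Finset.mem_insert_self _ _
    · intro T hT1 hT2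
      rcases Relation.ReflTransGen.cases_head hT1 with rfl | ⟨X, hX, hXT⟩
      · exact Or.inl rfl
      right
      obtain ⟨r₀, c₀, r', hr'1, hr'r₀, hm, hrm, hem, hfm, hXeq⟩ := hX
      have hXD2 : KReach X D2 := hXT.trans hT2
      have key : ∀ t, r' < t → t ≤ r₀ → c₀ = c ∧ r - j < t ∧ t ≤ r := by
        intro t h4 h5
        by_contra hcontra
        have heq : Ncount D2 c₀ t = Ncount D1 c₀ t := by
          rw [hD2]
          exact Ncount_move_eq hcell hempty hrjr hcontra
        have hle : Ncount D2 c₀ t ≤ Ncount X c₀ t := Ncount_kreach_le hXD2 c₀ t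
        have hstrict : Ncount X c₀ t + 1 = Ncount D1 c₀ t := by
          rw [hXeq]
          exact Ncount_move_strict hm hem hr'r₀ h4 h5
        omega
      obtain ⟨hc0, hr0a, hr0b⟩ := key r₀ hr'r₀ le_rfl
      obtain ⟨-, hr'a, hr'b⟩ := key (r' + 1) (Nat.lt_succ_self r') hr'r₀
      have hr0 : r₀ = r := by
        by_contra h
        obtain ⟨cc, hcc, hmemcc⟩ := hcond r₀ hr0a (by omega)
        exact hrm cc (by omega) hmemcc
      have hr' : r' = r - j := by
        by_contra h
        apply hem
        rw [hc0]
        exact hfill r' (by omega) (by omega)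
      have hXD2' : X = D2 := by rw [hXeq, hD2, hc0, hr0, hr']
      rw [← hXD2']
      exact (kreach_antisymm hXT (hXD2' ▸ hT2)).symm

end KohnertPaper
end

section
/- Let D be a diagram. Suppose there exists D* ∈ P(D) and r, c_1, c_2 ∈ ℕ with c_1 < c_2 such that: (r+1,c_1), (r+2,c_2) ∈ D*; (r+2,c̃) ∉ D* for all c̃ > c_2 and (r,c_2) ∉ D*; and (r+1,c̃) ∉ D* for all c̃ > c_1 and (r,c_1) ∉ D*. Then the Kohnert poset P(D) is not shellable. -/
namespace KohnertPaper

variable {α : Type*}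

/-! ### Weight machinery -/

def wt (X : Diagram) : ℕ := ∑ p ∈ X, p.1

lemma wt_lt_of_kmove {X Y : Diagram} (h : KMove X Y) : wt Y < wt X := by
  obtain ⟨r, c, r', _, hr', hmem, _, hnot, _, hY⟩ := h
  have hne : (r', c) ∉ X.erase (r, c) := fun hh => hnot (Finset.mem_of_mem_erase hh)
  have h1 : wt Y = r' + ∑ p ∈ X.erase (r, c), p.1 := by
    rw [hY, wt, Finset.sum_insert hne]
  have h2 : wt X = r + ∑ p ∈ X.erase (r, c), p.1 := by
    rw [wt, ← Finset.add_sum_erase _ _ hmem]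
  omega

lemma wt_le_of_kreach {X Y : Diagram} (h : KReach X Y) : wt Y ≤ wt X := by
  induction h with
  | refl => exact le_refl _
  | tail _ hmv ih => exact le_trans (le_of_lt (wt_lt_of_kmove hmv)) ih

lemma wt_lt_of_kreach_ne {X Y : Diagram} (h : KReach X Y) (hne : X ≠ Y) : wt Y < wt X := by
  induction h with
  | refl => exact absurd rfl hne
  | tail hr hmv _ =>
    exact lt_of_lt_of_le (wt_lt_of_kmove hmv) (wt_le_of_kreach hr)

/-! ### Column machinery -/

def colRows (X : Diagram) (c : ℕ) : Finset ℕ := (X.filter fun p => p.2 = c).image Prod.fst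

lemma mem_colRows {X : Diagram} {c a : ℕ} : a ∈ colRows X c ↔ (a, c) ∈ X := by
  simp only [colRows, Finset.mem_image, Finset.mem_filter]
  constructor
  · rintro ⟨⟨x, y⟩, ⟨hm, rfl⟩, rfl⟩; exact hm
  · intro h; exact ⟨(a, c), ⟨h, rfl⟩, rfl⟩

def ColStep (S T : Finset ℕ) : Prop :=
  ∃ ρ ρ' : ℕ, ρ' < ρ ∧ ρ ∈ S ∧ ρ' ∉ S ∧ T = insert ρ' (S.erase ρ)

def ColReach : Finset ℕ → Finset ℕ → Prop := Relation.ReflTransGen ColStep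

def csum (S : Finset ℕ) : ℕ := ∑ x ∈ S, x

lemma csum_insert_erase {S : Finset ℕ} {ρ ρ' : ℕ} (hρ : ρ ∈ S) (hρ' : ρ' ∉ S) :
    csum (insert ρ' (S.erase ρ)) + ρ = csum S + ρ' := by
  have hne : ρ' ∉ S.erase ρ := fun hh => hρ' (Finset.mem_of_mem_erase hh)
  have h1 : csum (insert ρ' (S.erase ρ)) = ρ' + csum (S.erase ρ) := Finset.sum_insert hne
  have h2 : csum S = ρ + csum (S.erase ρ) := (Finset.add_sum_erase _ _ hρ).symm
  omega

lemma csum_colstep {S T : Finset ℕ} (h : ColStep S T) : csum T < csum S := by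
  obtain ⟨ρ, ρ', hlt, hρ, hρ', rfl⟩ := h
  have := csum_insert_erase hρ hρ'
  omega

lemma csum_colreach {S T : Finset ℕ} (h : ColReach S T) : csum T ≤ csum S := by
  induction h with
  | refl => exact le_refl _
  | tail _ hmv ih => exact le_trans (le_of_lt (csum_colstep hmv)) ih

lemma colreach_eq_of_csum {S T : Finset ℕ} (h : ColReach S T) (he : csum S ≤ csum T) : S = T := by
  induction h using Relation.ReflTransGen.head_induction_on with
  | refl => rfl
  | head hmv hrest _ =>
    have h1 := csum_colstep hmv
    have h2 := csum_colreach hrest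
    omega

/-- A `ColReach` dropping the sum by exactly 1 is a single adjacent step. -/
lemma colreach_drop_one {S T : Finset ℕ} (h : ColReach S T) (he : csum S = csum T + 1) :
    ∃ ρ, ρ ∈ S ∧ ρ - 1 ∉ S ∧ 1 ≤ ρ ∧ T = insert (ρ - 1) (S.erase ρ) := by
  induction h using Relation.ReflTransGen.head_induction_on with
  | refl => omega
  | @head a b hmv hrest _ =>
    obtain ⟨ρ, ρ', hlt, hρ, hρ', rfl⟩ := hmv
    have h1 := csum_insert_erase hρ hρ'
    have h2 := csum_colreach hrest
    have hρ'' : ρ' = ρ - 1 := by omega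
    subst hρ''
    have h3 : insert (ρ - 1) (a.erase ρ) = T :=
      colreach_eq_of_csum hrest (by omega)
    exact ⟨ρ, hρ, hρ', by omega, h3.symm⟩

/-- Column data of a single Kohnert move. -/
lemma kmove_cols {X Y : Diagram} (h : KMove X Y) :
    ∃ r c r' : ℕ, 1 ≤ r' ∧ r' < r ∧ (r, c) ∈ X ∧ (∀ c', c < c' → (r, c') ∉ X) ∧
      (r', c) ∉ X ∧
      (∀ c₀, c₀ ≠ c → colRows Y c₀ = colRows X c₀) ∧
      colRows Y c = insert r' ((colRows X c).erase r) := by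
  obtain ⟨r, c, r', h1, h2, h3, h4, h5, h6, rfl⟩ := h
  refine ⟨r, c, r', h1, h2, h3, h4, h5, ?_, ?_⟩
  · intro c₀ hc₀
    ext a
    simp only [mem_colRows, Finset.mem_insert, Finset.mem_erase, Prod.mk.injEq, ne_eq]
    constructor
    · rintro (⟨_, h⟩ | ⟨_, hm⟩)
      · exact absurd h hc₀
      · exact hm
    · intro hm
      exact Or.inr ⟨fun hh => hc₀ hh.2, hm⟩
  · ext a
    simp only [mem_colRows, Finset.mem_insert, Finset.mem_erase, Prod.mk.injEq, ne_eq,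
      and_true]

lemma kreach_colreach {X Y : Diagram} (h : KReach X Y) (c : ℕ) :
    ColReach (colRows X c) (colRows Y c) := by
  induction h with
  | refl => exact Relation.ReflTransGen.refl
  | tail _ hmv ih =>
    obtain ⟨r, c₀, r', _, hlt, hm, _, hnm, heq, hcol⟩ := kmove_cols hmv
    by_cases hcc : c = c₀
    · subst hcc
      refine ih.tail ⟨r, r', hlt, mem_colRows.2 hm, fun hh => hnm (mem_colRows.1 hh), hcol⟩
    · rw [heq c (by exact hcc)] at *
      exact ih
/-! ### Generic poset lemmas -/

section Poset

variable [DecidableEq α] {le : α → α → Prop} {P : Set α}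

lemma exists_facet_extending (N : ℕ) (hbound : ∀ t, IsPChain le P t → t.card ≤ N) :
    ∀ s, IsPChain le P s → ∃ F, IsFacet le P F ∧ s ⊆ F := by
  suffices H : ∀ k s, IsPChain le P s → N ≤ s.card + k → ∃ F, IsFacet le P F ∧ s ⊆ F by
    intro s hs
    exact H N s hs (by omega)
  intro k
  induction k with
  | zero =>
    intro s hs hcard
    refine ⟨s, ⟨hs, fun t ht hst => ?_⟩, Finset.Subset.refl s⟩
    exact Finset.eq_of_subset_of_card_le hst (by have := hbound t ht; omega)
  | succ k ih =>
    intro s hs hcard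
    by_cases hmax : ∀ t, IsPChain le P t → s ⊆ t → s = t
    · exact ⟨s, ⟨hs, hmax⟩, Finset.Subset.refl s⟩
    · push_neg at hmax
      obtain ⟨t, ht, hst, hne⟩ := hmax
      have hlt : s.card < t.card :=
        Finset.card_lt_card (Finset.ssubset_iff_subset_ne.2 ⟨hst, hne⟩)
      obtain ⟨F, hF, htF⟩ := ih t ht (by omega)
      exact ⟨F, hF, hst.trans htF⟩

lemma insert_chain (hrefl : ∀ x, le x x) {w : α} (hw : w ∈ P) {F : Finset α}
    (hF : IsPChain le P F) (hcomp : ∀ z ∈ F, le z w ∨ le w z) :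
    IsPChain le P (insert w F) := by
  constructor
  · intro x hx
    simp only [Finset.coe_insert, Set.mem_insert_iff] at hx
    rcases hx with rfl | hx
    · exact hw
    · exact hF.1 hx
  · intro x hx y hy
    rcases Finset.mem_insert.1 hx with hxw | hx'
    · subst hxw
      rcases Finset.mem_insert.1 hy with hyw | hy'
      · subst hyw
        exact Or.inl (hrefl _)
      · exact (hcomp y hy').symm
    · rcases Finset.mem_insert.1 hy with hyw | hy'
      · subst hyw
        exact hcomp x hx'
      · exact hF.2 x hx' y hy'

lemma mem_of_facet_comp {F : Finset α} (hF : IsFacet le P F) (hrefl : ∀ x, le x x)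
    {w : α} (hw : w ∈ P) (hcomp : ∀ z ∈ F, le z w ∨ le w z) : w ∈ F := by
  have h := hF.2 (insert w F) (insert_chain hrefl hw hF.1 hcomp) (Finset.subset_insert w F)
  rw [h]
  exact Finset.mem_insert_self w F

lemma facet_type
    (hrefl : ∀ x, le x x) (htrans : ∀ {x y z}, le x y → le y z → le x z)
    {E M1 M2 N1 N2 Dst : α}
    (hM1P : M1 ∈ P) (hM2P : M2 ∈ P) (hN1P : N1 ∈ P) (hN2P : N2 ∈ P)
    (hEM2 : le E M2) (hM2M1 : le M2 M1) (hM1D : le M1 Dst)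
    (hEN2 : le E N2) (hN2N1 : le N2 N1) (hN1D : le N1 Dst)
    (hinc : ∀ x y, (x = M1 ∨ x = M2) → (y = N1 ∨ y = N2) → ¬ le x y ∧ ¬ le y x)
    (hint : ∀ z ∈ P, le E z → le z Dst → z = E ∨ z = M1 ∨ z = M2 ∨ z = N1 ∨ z = N2 ∨ z = Dst)
    {F : Finset α} (hF : IsFacet le P F) (hEF : E ∈ F) (hDF : Dst ∈ F) :
    (M1 ∈ F ∧ M2 ∈ F) ∨ (N1 ∈ F ∧ N2 ∈ F) := by
  have htri : ∀ z ∈ F, le z E ∨ (le E z ∧ le z Dst) ∨ le Dst z := by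
    intro z hz
    rcases hF.1.2 z hz E hEF with h | h
    · exact Or.inl h
    · rcases hF.1.2 z hz Dst hDF with h' | h'
      · exact Or.inr (Or.inl ⟨h, h'⟩)
      · exact Or.inr (Or.inr h')
  have hsix : ∀ z ∈ F, le E z → le z Dst →
      z = E ∨ z = M1 ∨ z = M2 ∨ z = N1 ∨ z = N2 ∨ z = Dst :=
    fun z hz => hint z (hF.1.1 (Finset.mem_coe.2 hz))
  by_cases hn1 : N1 ∈ F
  · refine Or.inr ⟨hn1, ?_⟩
    apply mem_of_facet_comp hF hrefl hN2P
    intro z hz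
    rcases htri z hz with h | ⟨ha, hb⟩ | h
    · exact Or.inl (htrans h hEN2)
    · rcases hsix z hz ha hb with rfl | rfl | rfl | rfl | rfl | rfl
      · exact Or.inl hEN2
      · rcases hF.1.2 z hz N1 hn1 with h | h
        · exact absurd h (hinc z N1 (Or.inl rfl) (Or.inl rfl)).1
        · exact absurd h (hinc z N1 (Or.inl rfl) (Or.inl rfl)).2
      · rcases hF.1.2 z hz N1 hn1 with h | h
        · exact absurd h (hinc z N1 (Or.inr rfl) (Or.inl rfl)).1
        · exact absurd h (hinc z N1 (Or.inr rfl) (Or.inl rfl)).2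
      · exact Or.inr hN2N1
      · exact Or.inl (hrefl z)
      · exact Or.inr (htrans hN2N1 hN1D)
    · exact Or.inr (htrans (htrans hN2N1 hN1D) h)
  · by_cases hn2 : N2 ∈ F
    · refine Or.inr ⟨?_, hn2⟩
      apply mem_of_facet_comp hF hrefl hN1P
      intro z hz
      rcases htri z hz with h | ⟨ha, hb⟩ | h
      · exact Or.inl (htrans h (htrans hEN2 hN2N1))
      · rcases hsix z hz ha hb with rfl | rfl | rfl | rfl | rfl | rfl
        · exact Or.inl (htrans hEN2 hN2N1)
        · rcases hF.1.2 z hz N2 hn2 with h | h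
          · exact absurd h (hinc z N2 (Or.inl rfl) (Or.inr rfl)).1
          · exact absurd h (hinc z N2 (Or.inl rfl) (Or.inr rfl)).2
        · rcases hF.1.2 z hz N2 hn2 with h | h
          · exact absurd h (hinc z N2 (Or.inr rfl) (Or.inr rfl)).1
          · exact absurd h (hinc z N2 (Or.inr rfl) (Or.inr rfl)).2
        · exact absurd hz hn1
        · exact Or.inl hN2N1
        · exact Or.inr hN1D
      · exact Or.inr (htrans hN1D h)
    · refine Or.inl ⟨?_, ?_⟩
      · apply mem_of_facet_comp hF hrefl hM1P
        intro z hz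
        rcases htri z hz with h | ⟨ha, hb⟩ | h
        · exact Or.inl (htrans h (htrans hEM2 hM2M1))
        · rcases hsix z hz ha hb with rfl | rfl | rfl | rfl | rfl | rfl
          · exact Or.inl (htrans hEM2 hM2M1)
          · exact Or.inl (hrefl z)
          · exact Or.inl hM2M1
          · exact absurd hz hn1
          · exact absurd hz hn2
          · exact Or.inr hM1D
        · exact Or.inr (htrans hM1D h)
      · apply mem_of_facet_comp hF hrefl hM2P
        intro z hz
        rcases htri z hz with h | ⟨ha, hb⟩ | h
        · exact Or.inl (htrans h hEM2)
        · rcases hsix z hz ha hb with rfl | rfl | rfl | rfl | rfl | rfl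
          · exact Or.inl hEM2
          · exact Or.inr hM2M1
          · exact Or.inl (hrefl z)
          · exact absurd hz hn1
          · exact absurd hz hn2
          · exact Or.inr (htrans hM2M1 hM1D)
        · exact Or.inr (htrans (htrans hM2M1 hM1D) h)

lemma key_aux
    {E M1 M2 N1 N2 Dst : α}
    (hN12 : N1 ≠ N2)
    (hinc : ∀ x y, (x = M1 ∨ x = M2) → (y = N1 ∨ y = N2) → ¬ le x y ∧ ¬ le y x)
    (htype : ∀ F : Finset α, IsFacet le P F → E ∈ F → Dst ∈ F →
      (M1 ∈ F ∧ M2 ∈ F) ∨ (N1 ∈ F ∧ N2 ∈ F))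
    (L : List (Finset α))
    (hfacets : ∀ s, IsFacet le P s ↔ s ∈ L)
    (hshell : ∀ k : Fin L.length, 1 ≤ (k : ℕ) →
      ∀ σ : Finset α, σ ⊆ L.get k →
        (∃ i : Fin L.length, (i : ℕ) < (k : ℕ) ∧ σ ⊆ L.get i) →
        ∃ τ : Finset α, σ ⊆ τ ∧ τ ⊆ L.get k ∧
          (∃ i : Fin L.length, (i : ℕ) < (k : ℕ) ∧ τ ⊆ L.get i) ∧
          τ.card + 1 = (L.get k).card)
    (j k : Fin L.length) (hjk : (j : ℕ) < (k : ℕ))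
    (hjE : E ∈ L.get j) (hjD : Dst ∈ L.get j)
    (hkE : E ∈ L.get k) (hkD : Dst ∈ L.get k) (hkN1 : N1 ∈ L.get k) (hkN2 : N2 ∈ L.get k)
    (hkmin : ∀ i : Fin L.length, (i : ℕ) < (k : ℕ) →
      ¬ (E ∈ L.get i ∧ Dst ∈ L.get i ∧ N1 ∈ L.get i ∧ N2 ∈ L.get i)) : False := by
  obtain ⟨τ, hστ, hτk, ⟨i, hik, hτi⟩, hcard⟩ :=
    hshell k (by omega) ((L.get j) ∩ (L.get k)) Finset.inter_subset_right
      ⟨j, hjk, Finset.inter_subset_left⟩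
  have hEτ : E ∈ τ := hστ (Finset.mem_inter.2 ⟨hjE, hkE⟩)
  have hDτ : Dst ∈ τ := hστ (Finset.mem_inter.2 ⟨hjD, hkD⟩)
  have hsd : ((L.get k) \ τ).card = 1 := by
    rw [Finset.card_sdiff_of_subset hτk]; omega
  have hNτ : N1 ∈ τ ∨ N2 ∈ τ := by
    by_contra hcon
    push_neg at hcon
    have hsub : ({N1, N2} : Finset α) ⊆ (L.get k) \ τ := by
      intro x hx
      rcases Finset.mem_insert.1 hx with rfl | hx
      · exact Finset.mem_sdiff.2 ⟨hkN1, hcon.1⟩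
      · rw [Finset.mem_singleton.1 hx]; exact Finset.mem_sdiff.2 ⟨hkN2, hcon.2⟩
    have hle2 : ({N1, N2} : Finset α).card ≤ 1 := hsd ▸ Finset.card_le_card hsub
    rw [Finset.card_insert_of_notMem (by simpa using hN12), Finset.card_singleton] at hle2
    omega
  have hFi : IsFacet le P (L.get i) := (hfacets _).2 (List.get_mem L i)
  have hiM : M1 ∈ L.get i ∧ M2 ∈ L.get i := by
    rcases htype (L.get i) hFi (hτi hEτ) (hτi hDτ) with h | h
    · exact h
    · exact absurd ⟨hτi hEτ, hτi hDτ, h.1, h.2⟩ (hkmin i hik)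
  rcases hNτ with hN | hN
  · rcases hFi.1.2 M1 hiM.1 N1 (hτi hN) with h | h
    · exact (hinc M1 N1 (Or.inl rfl) (Or.inl rfl)).1 h
    · exact (hinc M1 N1 (Or.inl rfl) (Or.inl rfl)).2 h
  · rcases hFi.1.2 M1 hiM.1 N2 (hτi hN) with h | h
    · exact (hinc M1 N2 (Or.inl rfl) (Or.inr rfl)).1 h
    · exact (hinc M1 N2 (Or.inl rfl) (Or.inr rfl)).2 h

lemma not_shellable_of_bowtie
    (hrefl : ∀ x, le x x) (htrans : ∀ {x y z}, le x y → le y z → le x z)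
    {E M1 M2 N1 N2 Dst : α}
    (hEP : E ∈ P) (hM1P : M1 ∈ P) (hM2P : M2 ∈ P) (hN1P : N1 ∈ P) (hN2P : N2 ∈ P)
    (hDP : Dst ∈ P)
    (hEM2 : le E M2) (hM2M1 : le M2 M1) (hM1D : le M1 Dst)
    (hEN2 : le E N2) (hN2N1 : le N2 N1) (hN1D : le N1 Dst)
    (hM12 : M1 ≠ M2) (hN12 : N1 ≠ N2)
    (hinc : ∀ x y, (x = M1 ∨ x = M2) → (y = N1 ∨ y = N2) → ¬ le x y ∧ ¬ le y x)
    (hint : ∀ z ∈ P, le E z → le z Dst → z = E ∨ z = M1 ∨ z = M2 ∨ z = N1 ∨ z = N2 ∨ z = Dst)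
    (Nb : ℕ) (hbound : ∀ t, IsPChain le P t → t.card ≤ Nb) :
    ¬ Shellable le P := by
  rintro ⟨L, hnd, hfacets, hshell⟩
  have hEM1 : le E M1 := htrans hEM2 hM2M1
  have hED : le E Dst := htrans hEM1 hM1D
  have hM2D : le M2 Dst := htrans hM2M1 hM1D
  have hEN1 : le E N1 := htrans hEN2 hN2N1
  have hN2D : le N2 Dst := htrans hN2N1 hN1D
  have hchainM : IsPChain le P {E, M2, M1, Dst} := by
    constructor
    · intro x hx
      simp only [Finset.coe_insert, Set.mem_insert_iff, Finset.coe_singleton,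
        Set.mem_singleton_iff] at hx
      rcases hx with rfl | rfl | rfl | rfl <;> assumption
    · intro x hx y hy
      simp only [Finset.mem_insert, Finset.mem_singleton] at hx hy
      rcases hx with rfl | rfl | rfl | rfl <;> rcases hy with rfl | rfl | rfl | rfl <;>
        first
          | exact Or.inl (hrefl _)
          | exact Or.inl (by assumption)
          | exact Or.inr (by assumption)
  have hchainN : IsPChain le P {E, N2, N1, Dst} := by
    constructor
    · intro x hx
      simp only [Finset.coe_insert, Set.mem_insert_iff, Finset.coe_singleton,
        Set.mem_singleton_iff] at hx
      rcases hx with rfl | rfl | rfl | rfl <;> assumption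
    · intro x hx y hy
      simp only [Finset.mem_insert, Finset.mem_singleton] at hx hy
      rcases hx with rfl | rfl | rfl | rfl <;> rcases hy with rfl | rfl | rfl | rfl <;>
        first
          | exact Or.inl (hrefl _)
          | exact Or.inl (by assumption)
          | exact Or.inr (by assumption)
  obtain ⟨FM, hFMfacet, hFMsub⟩ := exists_facet_extending Nb hbound _ hchainM
  obtain ⟨FN, hFNfacet, hFNsub⟩ := exists_facet_extending Nb hbound _ hchainN
  obtain ⟨nM, hnM⟩ := List.mem_iff_get.1 ((hfacets FM).1 hFMfacet)
  obtain ⟨nN, hnN⟩ := List.mem_iff_get.1 ((hfacets FN).1 hFNfacet)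
  have htype : ∀ F : Finset α, IsFacet le P F → E ∈ F → Dst ∈ F →
      (M1 ∈ F ∧ M2 ∈ F) ∨ (N1 ∈ F ∧ N2 ∈ F) := fun F hF hE hD =>
    facet_type hrefl @htrans hM1P hM2P hN1P hN2P hEM2 hM2M1 hM1D hEN2 hN2N1 hN1D hinc hint
      hF hE hD
  set SM : Set ℕ := {n | ∃ h : n < L.length,
    E ∈ L.get ⟨n, h⟩ ∧ Dst ∈ L.get ⟨n, h⟩ ∧ M1 ∈ L.get ⟨n, h⟩ ∧ M2 ∈ L.get ⟨n, h⟩} with hSM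
  set SN : Set ℕ := {n | ∃ h : n < L.length,
    E ∈ L.get ⟨n, h⟩ ∧ Dst ∈ L.get ⟨n, h⟩ ∧ N1 ∈ L.get ⟨n, h⟩ ∧ N2 ∈ L.get ⟨n, h⟩} with hSN
  have hMget : ∀ x ∈ ({E, M2, M1, Dst} : Finset α), x ∈ L.get nM := by
    intro x hx; rw [hnM]; exact hFMsub hx
  have hNget : ∀ x ∈ ({E, N2, N1, Dst} : Finset α), x ∈ L.get nN := by
    intro x hx; rw [hnN]; exact hFNsub hx
  have hSMne : SM.Nonempty := by
    refine ⟨(nM : ℕ), ?_⟩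
    rw [hSM]
    refine ⟨nM.2, ?_, ?_, ?_, ?_⟩ <;>
      · rw [Fin.eta]
        apply hMget
        simp
  have hSNne : SN.Nonempty := by
    refine ⟨(nN : ℕ), ?_⟩
    rw [hSN]
    refine ⟨nN.2, ?_, ?_, ?_, ?_⟩ <;>
      · rw [Fin.eta]
        apply hNget
        simp
  set jM := sInf SM with hjMdef
  set jN := sInf SN with hjNdef
  obtain ⟨hlM, hME, hMD, hMM1, hMM2⟩ := Nat.sInf_mem hSMne
  obtain ⟨hlN, hNE, hND, hNN1, hNN2⟩ := Nat.sInf_mem hSNne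
  have hdiff : jM ≠ jN := by
    intro heq
    have heq2 : (⟨jM, hlM⟩ : Fin L.length) = ⟨jN, hlN⟩ := Fin.ext heq
    rw [heq2] at hMM1
    have hfa : IsFacet le P (L.get ⟨jN, hlN⟩) := (hfacets _).2 (List.get_mem L ⟨jN, hlN⟩)
    rcases hfa.1.2 M1 hMM1 N1 hNN1 with h | h
    · exact (hinc M1 N1 (Or.inl rfl) (Or.inl rfl)).1 h
    · exact (hinc M1 N1 (Or.inl rfl) (Or.inl rfl)).2 h
  rcases Nat.lt_or_ge jM jN with hlt | hge
  · exact key_aux hN12 hinc htype L hfacets hshell ⟨jM, hlM⟩ ⟨jN, hlN⟩ hlt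
      hME hMD hNE hND hNN1 hNN2
      (fun i hi hcon => Nat.notMem_of_lt_sInf hi (by
        rw [hSN]
        exact ⟨i.2, by rw [Fin.eta]; exact hcon.1, by rw [Fin.eta]; exact hcon.2.1,
          by rw [Fin.eta]; exact hcon.2.2.1, by rw [Fin.eta]; exact hcon.2.2.2⟩))
  · have hlt : jN < jM := lt_of_le_of_ne hge (fun h => hdiff h.symm)
    exact key_aux hM12
      (fun x y hx hy => ⟨(hinc y x hy hx).2, (hinc y x hy hx).1⟩)
      (fun F hF hE hD => (htype F hF hE hD).symm) L hfacets hshell ⟨jN, hlN⟩ ⟨jM, hlM⟩ hlt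
      hNE hND hME hMD hMM1 hMM2
      (fun i hi hcon => Nat.notMem_of_lt_sInf hi (by
        rw [hSM]
        exact ⟨i.2, by rw [Fin.eta]; exact hcon.1, by rw [Fin.eta]; exact hcon.2.1,
          by rw [Fin.eta]; exact hcon.2.2.1, by rw [Fin.eta]; exact hcon.2.2.2⟩))

end Poset
/-! ### The six diagrams -/

def Dab (Dstar : Diagram) (r c1 c2 a b : ℕ) : Diagram :=
  insert (a, c1) (insert (b, c2) ((Dstar.erase (r+1, c1)).erase (r+2, c2)))

lemma mem_Dab {Dstar : Diagram} {r c1 c2 a b x y : ℕ} :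
    (x, y) ∈ Dab Dstar r c1 c2 a b ↔
      (x = a ∧ y = c1) ∨ (x = b ∧ y = c2) ∨
        ((x, y) ∈ Dstar ∧ ¬(x = r+1 ∧ y = c1) ∧ ¬(x = r+2 ∧ y = c2)) := by
  simp only [Dab, Finset.mem_insert, Finset.mem_erase, Prod.mk.injEq, ne_eq]
  tauto

section Specific

variable {Dstar : Diagram} {r c1 c2 : ℕ}

lemma Dstar_eq (h1 : (r + 1, c1) ∈ Dstar) (h2 : (r + 2, c2) ∈ Dstar) :
    Dstar = Dab Dstar r c1 c2 (r+1) (r+2) := by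
  ext ⟨x, y⟩
  rw [mem_Dab]
  constructor
  · intro hm
    by_cases hA : x = r + 1 ∧ y = c1
    · exact Or.inl hA
    · by_cases hB : x = r + 2 ∧ y = c2
      · exact Or.inr (Or.inl hB)
      · exact Or.inr (Or.inr ⟨hm, hA, hB⟩)
  · rintro (⟨rfl, rfl⟩ | ⟨rfl, rfl⟩ | ⟨hm, _, _⟩)
    · exact h1
    · exact h2
    · exact hm

lemma kmove_c1 (hr : 1 ≤ r) (hc : c1 < c2)
    (h5 : ∀ c', c1 < c' → (r + 1, c') ∉ Dstar) (h6 : (r, c1) ∉ Dstar)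
    {b : ℕ} (hb : b ≠ r + 1) :
    KMove (Dab Dstar r c1 c2 (r+1) b) (Dab Dstar r c1 c2 r b) := by
  refine ⟨r + 1, c1, r, hr, by omega, mem_Dab.2 (Or.inl ⟨rfl, rfl⟩), ?_, ?_, ?_, ?_⟩
  · intro c' hc' hm
    rcases mem_Dab.1 hm with ⟨_, h⟩ | ⟨h, h'⟩ | ⟨hm', _, _⟩
    · omega
    · exact hb h.symm
    · exact h5 c' hc' hm'
  · intro hm
    rcases mem_Dab.1 hm with ⟨h, _⟩ | ⟨_, h⟩ | ⟨hm', _, _⟩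
    · omega
    · omega
    · exact h6 hm'
  · intro r₁ h h'; omega
  · ext ⟨x, y⟩
    rw [Finset.mem_insert, Finset.mem_erase, mem_Dab, mem_Dab]
    simp only [Prod.mk.injEq, ne_eq]
    constructor
    · rintro (⟨rfl, rfl⟩ | ⟨rfl, rfl⟩ | ⟨hm, hA, hB⟩)
      · exact Or.inl ⟨rfl, rfl⟩
      · exact Or.inr ⟨fun h => by omega, Or.inr (Or.inl ⟨rfl, rfl⟩)⟩
      · exact Or.inr ⟨fun h => hA (by exact ⟨h.1, h.2⟩), Or.inr (Or.inr ⟨hm, hA, hB⟩)⟩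
    · rintro (⟨rfl, rfl⟩ | ⟨hne, (⟨rfl, rfl⟩ | ⟨rfl, rfl⟩ | ⟨hm, hA, hB⟩)⟩)
      · exact Or.inl ⟨rfl, rfl⟩
      · exact absurd ⟨rfl, rfl⟩ hne
      · exact Or.inr (Or.inl ⟨rfl, rfl⟩)
      · exact Or.inr (Or.inr ⟨hm, hA, hB⟩)

lemma kmove_c2_top (hc : c1 < c2)
    (h3 : ∀ c', c2 < c' → (r + 2, c') ∉ Dstar)
    (h5 : ∀ c', c1 < c' → (r + 1, c') ∉ Dstar) {a : ℕ} :
    KMove (Dab Dstar r c1 c2 a (r+2)) (Dab Dstar r c1 c2 a (r+1)) := by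
  refine ⟨r + 2, c2, r + 1, by omega, by omega,
    mem_Dab.2 (Or.inr (Or.inl ⟨rfl, rfl⟩)), ?_, ?_, ?_, ?_⟩
  · intro c' hc' hm
    rcases mem_Dab.1 hm with ⟨_, h⟩ | ⟨_, h⟩ | ⟨hm', _, _⟩
    · omega
    · omega
    · exact h3 c' hc' hm'
  · intro hm
    rcases mem_Dab.1 hm with ⟨_, h⟩ | ⟨h, _⟩ | ⟨hm', _, _⟩
    · omega
    · omega
    · exact h5 c2 hc hm'
  · intro r₁ h h'; omega
  · ext ⟨x, y⟩
    rw [Finset.mem_insert, Finset.mem_erase, mem_Dab, mem_Dab]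
    simp only [Prod.mk.injEq, ne_eq]
    constructor
    · rintro (⟨rfl, rfl⟩ | ⟨rfl, rfl⟩ | ⟨hm, hA, hB⟩)
      · exact Or.inr ⟨fun h => by omega, Or.inl ⟨rfl, rfl⟩⟩
      · exact Or.inl ⟨rfl, rfl⟩
      · exact Or.inr ⟨fun h => hB (by exact ⟨h.1, h.2⟩), Or.inr (Or.inr ⟨hm, hA, hB⟩)⟩
    · rintro (⟨rfl, rfl⟩ | ⟨hne, (⟨rfl, rfl⟩ | ⟨rfl, rfl⟩ | ⟨hm, hA, hB⟩)⟩)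
      · exact Or.inr (Or.inl ⟨rfl, rfl⟩)
      · exact Or.inl ⟨rfl, rfl⟩
      · exact absurd ⟨rfl, rfl⟩ hne
      · exact Or.inr (Or.inr ⟨hm, hA, hB⟩)

lemma kmove_c2_mid (hr : 1 ≤ r) (hc : c1 < c2)
    (h4 : (r, c2) ∉ Dstar)
    (h5 : ∀ c', c1 < c' → (r + 1, c') ∉ Dstar) {a : ℕ} :
    KMove (Dab Dstar r c1 c2 a (r+1)) (Dab Dstar r c1 c2 a r) := by
  refine ⟨r + 1, c2, r, hr, by omega,
    mem_Dab.2 (Or.inr (Or.inl ⟨rfl, rfl⟩)), ?_, ?_, ?_, ?_⟩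
  · intro c' hc' hm
    rcases mem_Dab.1 hm with ⟨_, h⟩ | ⟨_, h⟩ | ⟨hm', _, _⟩
    · omega
    · omega
    · exact h5 c' (by omega) hm'
  · intro hm
    rcases mem_Dab.1 hm with ⟨_, h⟩ | ⟨h, _⟩ | ⟨hm', _, _⟩
    · omega
    · omega
    · exact h4 hm'
  · intro r₁ h h'; omega
  · ext ⟨x, y⟩
    rw [Finset.mem_insert, Finset.mem_erase, mem_Dab, mem_Dab]
    simp only [Prod.mk.injEq, ne_eq]
    constructor
    · rintro (⟨rfl, rfl⟩ | ⟨rfl, rfl⟩ | ⟨hm, hA, hB⟩)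
      · exact Or.inr ⟨fun h => by omega, Or.inl ⟨rfl, rfl⟩⟩
      · exact Or.inl ⟨rfl, rfl⟩
      · exact Or.inr ⟨fun h => h5 c2 hc (by rw [← h.1, ← h.2]; exact hm),
          Or.inr (Or.inr ⟨hm, hA, hB⟩)⟩
    · rintro (⟨rfl, rfl⟩ | ⟨hne, (⟨rfl, rfl⟩ | ⟨rfl, rfl⟩ | ⟨hm, hA, hB⟩)⟩)
      · exact Or.inr (Or.inl ⟨rfl, rfl⟩)
      · exact Or.inl ⟨rfl, rfl⟩
      · exact absurd ⟨rfl, rfl⟩ hne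
      · exact Or.inr (Or.inr ⟨hm, hA, hB⟩)

lemma colRows_Dab_c1 (hc : c1 < c2) {a b : ℕ} :
    colRows (Dab Dstar r c1 c2 a b) c1 = insert a ((colRows Dstar c1).erase (r+1)) := by
  ext t
  rw [mem_colRows, mem_Dab, Finset.mem_insert, Finset.mem_erase, mem_colRows]
  constructor
  · rintro (⟨rfl, _⟩ | ⟨_, h⟩ | ⟨hm, hA, _⟩)
    · exact Or.inl rfl
    · omega
    · exact Or.inr ⟨fun ht => hA ⟨ht, rfl⟩, hm⟩
  · rintro (rfl | ⟨hne, hm⟩)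
    · exact Or.inl ⟨rfl, rfl⟩
    · exact Or.inr (Or.inr ⟨hm, fun hh => hne hh.1, fun hh => by omega⟩)

lemma colRows_Dab_c2 (hc : c1 < c2) {a b : ℕ} :
    colRows (Dab Dstar r c1 c2 a b) c2 = insert b ((colRows Dstar c2).erase (r+2)) := by
  ext t
  rw [mem_colRows, mem_Dab, Finset.mem_insert, Finset.mem_erase, mem_colRows]
  constructor
  · rintro (⟨_, h⟩ | ⟨rfl, _⟩ | ⟨hm, _, hB⟩)
    · omega
    · exact Or.inl rfl
    · exact Or.inr ⟨fun ht => hB ⟨ht, rfl⟩, hm⟩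
  · rintro (rfl | ⟨hne, hm⟩)
    · exact Or.inr (Or.inl ⟨rfl, rfl⟩)
    · exact Or.inr (Or.inr ⟨hm, fun hh => by omega, fun hh => hne hh.1⟩)

lemma colRows_Dab_other {y : ℕ} (hy1 : y ≠ c1) (hy2 : y ≠ c2) {a b : ℕ} :
    colRows (Dab Dstar r c1 c2 a b) y = colRows Dstar y := by
  ext t
  rw [mem_colRows, mem_Dab, mem_colRows]
  constructor
  · rintro (⟨_, h⟩ | ⟨_, h⟩ | ⟨hm, _, _⟩)
    · exact absurd h hy1
    · exact absurd h hy2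
    · exact hm
  · intro hm
    exact Or.inr (Or.inr ⟨hm, fun hh => hy1 hh.2, fun hh => hy2 hh.2⟩)

end Specific
section Specific2

variable {Dstar : Diagram} {r c1 c2 : ℕ}

lemma csum_colRows_Dab_c1 (hc : c1 < c2) (h1 : (r+1, c1) ∈ Dstar) (h6 : (r, c1) ∉ Dstar)
    {a b : ℕ} (ha : a = r ∨ a = r + 1) :
    csum (colRows (Dab Dstar r c1 c2 a b) c1) + (r + 1) = csum (colRows Dstar c1) + a := by
  rw [colRows_Dab_c1 hc]
  have hmem : r + 1 ∈ colRows Dstar c1 := mem_colRows.2 h1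
  rcases ha with rfl | rfl
  · exact csum_insert_erase hmem (fun h => h6 (mem_colRows.1 h))
  · rw [Finset.insert_erase hmem]

lemma csum_colRows_Dab_c2 (hc : c1 < c2) (h2 : (r+2, c2) ∈ Dstar) (h4 : (r, c2) ∉ Dstar)
    (h5 : ∀ c', c1 < c' → (r + 1, c') ∉ Dstar)
    {a b : ℕ} (hb : b = r ∨ b = r + 1 ∨ b = r + 2) :
    csum (colRows (Dab Dstar r c1 c2 a b) c2) + (r + 2) = csum (colRows Dstar c2) + b := by
  rw [colRows_Dab_c2 hc]
  have hmem : r + 2 ∈ colRows Dstar c2 := mem_colRows.2 h2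
  rcases hb with rfl | rfl | rfl
  · exact csum_insert_erase hmem (fun h => h4 (mem_colRows.1 h))
  · exact csum_insert_erase hmem (fun h => h5 c2 hc (mem_colRows.1 h))
  · rw [Finset.insert_erase hmem]

lemma kreach_Dab_mono (hc : c1 < c2) (h1 : (r+1, c1) ∈ Dstar) (h2 : (r+2, c2) ∈ Dstar)
    (h4 : (r, c2) ∉ Dstar) (h5 : ∀ c', c1 < c' → (r + 1, c') ∉ Dstar) (h6 : (r, c1) ∉ Dstar)
    {a b a' b' : ℕ}
    (ha : a = r ∨ a = r+1) (hb : b = r ∨ b = r+1 ∨ b = r+2)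
    (ha' : a' = r ∨ a' = r+1) (hb' : b' = r ∨ b' = r+1 ∨ b' = r+2)
    (h : KReach (Dab Dstar r c1 c2 a b) (Dab Dstar r c1 c2 a' b')) :
    a' ≤ a ∧ b' ≤ b := by
  have t1 := csum_colreach (kreach_colreach h c1)
  have t2 := csum_colreach (kreach_colreach h c2)
  have e1 := csum_colRows_Dab_c1 (b := b) hc h1 h6 ha
  have e1' := csum_colRows_Dab_c1 (b := b') hc h1 h6 ha'
  have e2 := csum_colRows_Dab_c2 (a := a) hc h2 h4 h5 hb
  have e2' := csum_colRows_Dab_c2 (a := a') hc h2 h4 h5 hb'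
  omega

lemma not_kreach_BA2 (hr : 1 ≤ r) (hc : c1 < c2)
    (h1 : (r+1, c1) ∈ Dstar) (h2 : (r+2, c2) ∈ Dstar)
    (h4 : (r, c2) ∉ Dstar) (h5 : ∀ c', c1 < c' → (r + 1, c') ∉ Dstar) (h6 : (r, c1) ∉ Dstar) :
    ¬ KReach (Dab Dstar r c1 c2 (r+1) (r+1)) (Dab Dstar r c1 c2 r (r+1)) := by
  intro hre
  have hne : Dab Dstar r c1 c2 (r+1) (r+1) ≠ Dab Dstar r c1 c2 r (r+1) := by
    intro he
    have hmem : (r+1, c1) ∈ Dab Dstar r c1 c2 (r+1) (r+1) := mem_Dab.2 (Or.inl ⟨rfl, rfl⟩)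
    rw [he] at hmem
    rcases mem_Dab.1 hmem with ⟨h, _⟩ | ⟨_, h⟩ | ⟨_, hA, _⟩
    · omega
    · omega
    · exact hA ⟨rfl, rfl⟩
  rcases Relation.ReflTransGen.cases_head hre with heq | ⟨Z, hmv, hZ⟩
  · exact hne heq
  obtain ⟨rX, cX, r'X, hrX1, hlt, hmemX, hright, hnmX, hcolo, hcolX⟩ := kmove_cols hmv
  have hrXm : rX ∈ colRows (Dab Dstar r c1 c2 (r+1) (r+1)) cX := mem_colRows.2 hmemX
  have hr'Xm : r'X ∉ colRows (Dab Dstar r c1 c2 (r+1) (r+1)) cX :=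
    fun h => hnmX (mem_colRows.1 h)
  have hdrop := csum_insert_erase hrXm hr'Xm
  have hlt2 : csum (colRows Z cX) + rX
      = csum (colRows (Dab Dstar r c1 c2 (r+1) (r+1)) cX) + r'X := by
    rw [hcolX]; exact hdrop
  have hmono := csum_colreach (kreach_colreach hZ cX)
  have hcX : cX = c1 := by
    by_contra hcc
    have heqcol : colRows (Dab Dstar r c1 c2 r (r+1)) cX
        = colRows (Dab Dstar r c1 c2 (r+1) (r+1)) cX := by
      by_cases h2c : cX = c2
      · subst h2c; rw [colRows_Dab_c2 hc, colRows_Dab_c2 hc]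
      · rw [colRows_Dab_other hcc h2c, colRows_Dab_other hcc h2c]
    rw [heqcol] at hmono
    omega
  rw [hcX] at hlt2 hmono hcolX hright
  have e1 := csum_colRows_Dab_c1 (b := r+1) (a := r+1) hc h1 h6 (Or.inr rfl)
  have e1' := csum_colRows_Dab_c1 (b := r+1) (a := r) hc h1 h6 (Or.inl rfl)
  have hZeqA2 : colRows Z c1 = colRows (Dab Dstar r c1 c2 r (r+1)) c1 :=
    colreach_eq_of_csum (kreach_colreach hZ c1) (by omega)
  have hstep : rX = r'X + 1 := by omega
  have hrmem : r ∈ colRows Z c1 := by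
    rw [hZeqA2, colRows_Dab_c1 hc]
    exact Finset.mem_insert_self _ _
  rw [hcolX] at hrmem
  have hrX : rX = r + 1 := by
    rcases Finset.mem_insert.1 hrmem with h | h
    · omega
    · exfalso
      have hmem1 : r ∈ colRows (Dab Dstar r c1 c2 (r+1) (r+1)) c1 := Finset.mem_of_mem_erase h
      rw [colRows_Dab_c1 hc] at hmem1
      rcases Finset.mem_insert.1 hmem1 with h' | h'
      · omega
      · exact h6 (mem_colRows.1 (Finset.mem_of_mem_erase h'))
  have hB2 : (r + 1, c2) ∈ Dab Dstar r c1 c2 (r+1) (r+1) :=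
    mem_Dab.2 (Or.inr (Or.inl ⟨rfl, rfl⟩))
  exact hright c2 hc (by rw [hrX]; exact hB2)

lemma eq_Dab_of_cols (hc : c1 < c2) {z : Diagram} {a b : ℕ}
    (hA : colRows z c1 = insert a ((colRows Dstar c1).erase (r+1)))
    (hB : colRows z c2 = insert b ((colRows Dstar c2).erase (r+2)))
    (hother : ∀ y, y ≠ c1 → y ≠ c2 → colRows z y = colRows Dstar y) :
    z = Dab Dstar r c1 c2 a b := by
  ext ⟨x, y⟩
  simp only [← mem_colRows]
  by_cases hy1 : y = c1
  · subst hy1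
    rw [hA, colRows_Dab_c1 hc]
  · by_cases hy2 : y = c2
    · subst hy2
      rw [hB, colRows_Dab_c2 hc]
    · rw [hother y hy1 hy2, colRows_Dab_other hy1 hy2]

lemma interval_six (hr : 1 ≤ r) (hc : c1 < c2)
    (h1 : (r+1, c1) ∈ Dstar) (h2 : (r+2, c2) ∈ Dstar)
    (h4 : (r, c2) ∉ Dstar) (h5 : ∀ c', c1 < c' → (r + 1, c') ∉ Dstar) (h6 : (r, c1) ∉ Dstar)
    {z : Diagram}
    (hz1 : KReach Dstar z) (hz2 : KReach z (Dab Dstar r c1 c2 r r)) :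
    z = Dab Dstar r c1 c2 (r+1) (r+2) ∨ z = Dab Dstar r c1 c2 r (r+2) ∨
      z = Dab Dstar r c1 c2 (r+1) (r+1) ∨ z = Dab Dstar r c1 c2 r (r+1) ∨
      z = Dab Dstar r c1 c2 (r+1) r ∨ z = Dab Dstar r c1 c2 r r := by
  have hS1mem : r + 1 ∈ colRows Dstar c1 := mem_colRows.2 h1
  have hS1r : r ∉ colRows Dstar c1 := fun h => h6 (mem_colRows.1 h)
  have hS2mem : r + 2 ∈ colRows Dstar c2 := mem_colRows.2 h2
  have hS2r1 : r + 1 ∉ colRows Dstar c2 := fun h => h5 c2 hc (mem_colRows.1 h)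
  have hS2r : r ∉ colRows Dstar c2 := fun h => h4 (mem_colRows.1 h)
  have hother : ∀ y, y ≠ c1 → y ≠ c2 → colRows z y = colRows Dstar y := by
    intro y hy1 hy2
    have hA := kreach_colreach hz1 y
    have hB := kreach_colreach hz2 y
    rw [colRows_Dab_other hy1 hy2] at hB
    exact (colreach_eq_of_csum hA (csum_colreach hB)).symm
  have hcol1 : colRows z c1 = insert (r+1) ((colRows Dstar c1).erase (r+1)) ∨
      colRows z c1 = insert r ((colRows Dstar c1).erase (r+1)) := by
    have hA := kreach_colreach hz1 c1
    have hB := kreach_colreach hz2 c1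
    rw [colRows_Dab_c1 hc] at hB
    have m1 := csum_colreach hA
    have m2 := csum_colreach hB
    have eE : csum (insert r ((colRows Dstar c1).erase (r+1))) + (r+1)
        = csum (colRows Dstar c1) + r := csum_insert_erase hS1mem hS1r
    by_cases hcase : csum (colRows z c1) = csum (colRows Dstar c1)
    · left
      rw [Finset.insert_erase hS1mem]
      exact (colreach_eq_of_csum hA (by omega)).symm
    · right
      exact colreach_eq_of_csum hB (by omega)
  have hcol2 : colRows z c2 = insert (r+2) ((colRows Dstar c2).erase (r+2)) ∨
      colRows z c2 = insert (r+1) ((colRows Dstar c2).erase (r+2)) ∨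
      colRows z c2 = insert r ((colRows Dstar c2).erase (r+2)) := by
    have hA := kreach_colreach hz1 c2
    have hB := kreach_colreach hz2 c2
    rw [colRows_Dab_c2 hc] at hB
    have m1 := csum_colreach hA
    have m2 := csum_colreach hB
    have eE : csum (insert r ((colRows Dstar c2).erase (r+2))) + (r+2)
        = csum (colRows Dstar c2) + r := csum_insert_erase hS2mem hS2r
    rcases (by omega : csum (colRows z c2) = csum (colRows Dstar c2) ∨
        csum (colRows z c2) + 1 = csum (colRows Dstar c2) ∨
        csum (colRows z c2) + 2 = csum (colRows Dstar c2)) with hcase | hcase | hcase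
    · left
      rw [Finset.insert_erase hS2mem]
      exact (colreach_eq_of_csum hA (by omega)).symm
    · right; left
      obtain ⟨ρ, hρS, hρ1, hρpos, hT⟩ := colreach_drop_one hA (by omega)
      have hρeq : ρ = r + 2 := by
        by_contra hρne
        obtain ⟨u, huT, hu1, hupos, hU⟩ := colreach_drop_one hB (by omega)
        have hmem2 : r + 2 ∈ colRows z c2 := by
          rw [hT]
          exact Finset.mem_insert.2 (Or.inr (Finset.mem_erase.2
            ⟨fun h => hρne h.symm, hS2mem⟩))
        have hu : u = r + 2 := by
          by_contra hune
          have hmem3 : r + 2 ∈ insert (u-1) ((colRows z c2).erase u) :=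
            Finset.mem_insert.2 (Or.inr (Finset.mem_erase.2 ⟨fun h => hune h.symm, hmem2⟩))
          rw [← hU] at hmem3
          rcases Finset.mem_insert.1 hmem3 with h | h
          · omega
          · exact absurd rfl (Finset.mem_erase.1 h).1
        subst hu
        have hmem4 : r + 1 ∈ insert r ((colRows Dstar c2).erase (r+2)) := by
          rw [hU]
          have h21 : r + 2 - 1 = r + 1 := by omega
          rw [h21]
          exact Finset.mem_insert_self _ _
        rcases Finset.mem_insert.1 hmem4 with h | h
        · omega
        · exact hS2r1 (Finset.mem_of_mem_erase h)
      subst hρeq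
      rw [hT]
      have h21 : r + 2 - 1 = r + 1 := by omega
      rw [h21]
    · right; right
      exact colreach_eq_of_csum hB (by omega)
  rcases hcol1 with hA | hA <;> rcases hcol2 with hB | hB | hB
  · exact Or.inl (eq_Dab_of_cols hc hA hB hother)
  · exact Or.inr (Or.inr (Or.inl (eq_Dab_of_cols hc hA hB hother)))
  · exact Or.inr (Or.inr (Or.inr (Or.inr (Or.inl (eq_Dab_of_cols hc hA hB hother)))))
  · exact Or.inr (Or.inl (eq_Dab_of_cols hc hA hB hother))
  · exact Or.inr (Or.inr (Or.inr (Or.inl (eq_Dab_of_cols hc hA hB hother))))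
  · exact Or.inr (Or.inr (Or.inr (Or.inr (Or.inr (eq_Dab_of_cols hc hA hB hother)))))

end Specific2
/-- If some `D* ∈ P(D)` has cells `(r+1,c₁)` and `(r+2,c₂)` with `c₁ < c₂`, nothing to the
right of them in their rows, and the positions `(r,c₁)`, `(r,c₂)` empty, then `P(D)` is not
shellable. -/
theorem stmt_6 (D Dstar : Diagram) (hstar : KReach D Dstar)
    (r c1 c2 : ℕ) (hr : 1 ≤ r) (hc1 : 1 ≤ c1) (hc : c1 < c2)
    (h1 : (r + 1, c1) ∈ Dstar) (h2 : (r + 2, c2) ∈ Dstar)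
    (h3 : ∀ c', c2 < c' → (r + 2, c') ∉ Dstar) (h4 : (r, c2) ∉ Dstar)
    (h5 : ∀ c', c1 < c' → (r + 1, c') ∉ Dstar) (h6 : (r, c1) ∉ Dstar) :
    ¬ Shellable KLe (KD D) := by
  have hDeq : Dstar = Dab Dstar r c1 c2 (r+1) (r+2) := Dstar_eq h1 h2
  -- the six single Kohnert moves
  have mvDA : KMove Dstar (Dab Dstar r c1 c2 r (r+2)) := by
    nth_rewrite 1 [hDeq]
    exact kmove_c1 hr hc h5 h6 (by omega)
  have mvDB : KMove Dstar (Dab Dstar r c1 c2 (r+1) (r+1)) := by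
    nth_rewrite 1 [hDeq]
    exact kmove_c2_top hc h3 h5
  have mvAA2 : KMove (Dab Dstar r c1 c2 r (r+2)) (Dab Dstar r c1 c2 r (r+1)) :=
    kmove_c2_top hc h3 h5
  have mvA2E : KMove (Dab Dstar r c1 c2 r (r+1)) (Dab Dstar r c1 c2 r r) :=
    kmove_c2_mid hr hc h4 h5
  have mvBB' : KMove (Dab Dstar r c1 c2 (r+1) (r+1)) (Dab Dstar r c1 c2 (r+1) r) :=
    kmove_c2_mid hr hc h4 h5
  have mvB'E : KMove (Dab Dstar r c1 c2 (r+1) r) (Dab Dstar r c1 c2 r r) :=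
    kmove_c1 hr hc h5 h6 (by omega)
  -- KLe relations
  have leEA2 : KLe (Dab Dstar r c1 c2 r r) (Dab Dstar r c1 c2 r (r+1)) :=
    Relation.ReflTransGen.single mvA2E
  have leA2A : KLe (Dab Dstar r c1 c2 r (r+1)) (Dab Dstar r c1 c2 r (r+2)) :=
    Relation.ReflTransGen.single mvAA2
  have leADs : KLe (Dab Dstar r c1 c2 r (r+2)) Dstar := Relation.ReflTransGen.single mvDA
  have leEB' : KLe (Dab Dstar r c1 c2 r r) (Dab Dstar r c1 c2 (r+1) r) :=
    Relation.ReflTransGen.single mvB'E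
  have leB'B : KLe (Dab Dstar r c1 c2 (r+1) r) (Dab Dstar r c1 c2 (r+1) (r+1)) :=
    Relation.ReflTransGen.single mvBB'
  have leBDs : KLe (Dab Dstar r c1 c2 (r+1) (r+1)) Dstar := Relation.ReflTransGen.single mvDB
  -- memberships in the Kohnert poset
  have hDsP : Dstar ∈ KD D := hstar
  have hAP : Dab Dstar r c1 c2 r (r+2) ∈ KD D := hstar.trans leADs
  have hA2P : Dab Dstar r c1 c2 r (r+1) ∈ KD D := hstar.trans (leADs.trans leA2A)
  have hBP : Dab Dstar r c1 c2 (r+1) (r+1) ∈ KD D := hstar.trans leBDs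
  have hB'P : Dab Dstar r c1 c2 (r+1) r ∈ KD D := hstar.trans (leBDs.trans leB'B)
  have hEP : Dab Dstar r c1 c2 r r ∈ KD D := hstar.trans (leBDs.trans (leB'B.trans leEB'))
  -- distinctness
  have hAA2 : Dab Dstar r c1 c2 r (r+2) ≠ Dab Dstar r c1 c2 r (r+1) := by
    intro he
    have hm : (r+2, c2) ∈ Dab Dstar r c1 c2 r (r+2) := mem_Dab.2 (Or.inr (Or.inl ⟨rfl, rfl⟩))
    rw [he] at hm
    rcases mem_Dab.1 hm with ⟨h, _⟩ | ⟨h, _⟩ | ⟨_, _, hB2⟩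
    · omega
    · omega
    · exact hB2 ⟨rfl, rfl⟩
  have hBB' : Dab Dstar r c1 c2 (r+1) (r+1) ≠ Dab Dstar r c1 c2 (r+1) r := by
    intro he
    have hm : (r+1, c2) ∈ Dab Dstar r c1 c2 (r+1) (r+1) :=
      mem_Dab.2 (Or.inr (Or.inl ⟨rfl, rfl⟩))
    rw [he] at hm
    rcases mem_Dab.1 hm with ⟨_, h⟩ | ⟨h, _⟩ | ⟨hm', _, _⟩
    · omega
    · omega
    · exact h5 c2 hc hm'
  -- incomparabilities
  have hinc : ∀ x y, (x = Dab Dstar r c1 c2 r (r+2) ∨ x = Dab Dstar r c1 c2 r (r+1)) →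
      (y = Dab Dstar r c1 c2 (r+1) (r+1) ∨ y = Dab Dstar r c1 c2 (r+1) r) →
      ¬ KLe x y ∧ ¬ KLe y x := by
    intro x y hx hy
    rcases hx with rfl | rfl <;> rcases hy with rfl | rfl
    · constructor
      · intro h
        have hm := kreach_Dab_mono hc h1 h2 h4 h5 h6 (Or.inr rfl) (Or.inr (Or.inl rfl))
          (Or.inl rfl) (Or.inr (Or.inr rfl)) h
        omega
      · intro h
        have hm := kreach_Dab_mono hc h1 h2 h4 h5 h6 (Or.inl rfl) (Or.inr (Or.inr rfl))
          (Or.inr rfl) (Or.inr (Or.inl rfl)) h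
        omega
    · constructor
      · intro h
        have hm := kreach_Dab_mono hc h1 h2 h4 h5 h6 (Or.inr rfl) (Or.inl rfl)
          (Or.inl rfl) (Or.inr (Or.inr rfl)) h
        omega
      · intro h
        have hm := kreach_Dab_mono hc h1 h2 h4 h5 h6 (Or.inl rfl) (Or.inr (Or.inr rfl))
          (Or.inr rfl) (Or.inl rfl) h
        omega
    · constructor
      · intro h
        exact not_kreach_BA2 hr hc h1 h2 h4 h5 h6 h
      · intro h
        have hm := kreach_Dab_mono hc h1 h2 h4 h5 h6 (Or.inl rfl) (Or.inr (Or.inl rfl))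
          (Or.inr rfl) (Or.inr (Or.inl rfl)) h
        omega
    · constructor
      · intro h
        have hm := kreach_Dab_mono hc h1 h2 h4 h5 h6 (Or.inr rfl) (Or.inl rfl)
          (Or.inl rfl) (Or.inr (Or.inl rfl)) h
        omega
      · intro h
        have hm := kreach_Dab_mono hc h1 h2 h4 h5 h6 (Or.inl rfl) (Or.inr (Or.inl rfl))
          (Or.inr rfl) (Or.inl rfl) h
        omega
  -- interval characterization
  have hint : ∀ z ∈ KD D, KLe (Dab Dstar r c1 c2 r r) z → KLe z Dstar →
      z = Dab Dstar r c1 c2 r r ∨ z = Dab Dstar r c1 c2 r (r+2) ∨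
      z = Dab Dstar r c1 c2 r (r+1) ∨ z = Dab Dstar r c1 c2 (r+1) (r+1) ∨
      z = Dab Dstar r c1 c2 (r+1) r ∨ z = Dstar := by
    intro z _ hz1 hz2
    rcases interval_six hr hc h1 h2 h4 h5 h6 hz2 hz1 with h | h | h | h | h | h
    · exact Or.inr (Or.inr (Or.inr (Or.inr (Or.inr (by rw [h, ← hDeq])))))
    · exact Or.inr (Or.inl h)
    · exact Or.inr (Or.inr (Or.inr (Or.inl h)))
    · exact Or.inr (Or.inr (Or.inl h))
    · exact Or.inr (Or.inr (Or.inr (Or.inr (Or.inl h))))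
    · exact Or.inl h
  -- chain-size bound
  have hbound : ∀ t : Finset Diagram, IsPChain KLe (KD D) t → t.card ≤ wt D + 1 := by
    intro t ht
    have hinj : Set.InjOn wt ↑t := by
      intro x hx y hy hxy
      by_contra hne
      rcases ht.2 x (Finset.mem_coe.1 hx) y (Finset.mem_coe.1 hy) with h | h
      · have := wt_lt_of_kreach_ne h (fun hh => hne hh.symm)
        omega
      · have := wt_lt_of_kreach_ne h hne
        omega
    calc t.card = (t.image wt).card := (Finset.card_image_of_injOn hinj).symm
      _ ≤ (Finset.range (wt D + 1)).card := Finset.card_le_card (by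
          intro w hw
          obtain ⟨x, hx, rfl⟩ := Finset.mem_image.1 hw
          exact Finset.mem_range.2 (Nat.lt_succ_of_le (wt_le_of_kreach (ht.1 hx))))
      _ = wt D + 1 := Finset.card_range _
  exact not_shellable_of_bowtie (le := KLe) (P := KD D)
    (fun x => Relation.ReflTransGen.refl)
    (fun {x y z} hxy hyz => Relation.ReflTransGen.trans hyz hxy)
    hEP hAP hA2P hBP hB'P hDsP
    leEA2 leA2A leADs leEB' leB'B leBDs
    hAA2 hBB' hinc hint (wt D + 1) hbound

end KohnertPaper
end

section
/- A diagram D is a hook diagram if and only if there exists a column c* > 0 such that: (i) column c* of D is nonempty and every column c̃ > c* is empty; (ii) any column of D containing more than one cell must equal c*; (iii) if r is maximal with (r,c*) ∈ D and c̃ < c*, then (r̃,c̃) ∈ D implies r̃ ≥ r; and (iv) if (r̃_1,c̃_1), (r̃_2,c̃_2) ∈ D with c̃_1 < c̃_2 < c*, then r̃_1 ≥ r̃_2. -/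
namespace KohnertPaper

variable {α : Type*}

/-! ### Auxiliary material for `stmt_7` -/

/-- The invariant preserved by Kohnert moves, characterizing diagrams in the Kohnert
poset of a hook seed with maximal column `cstar`. -/
def Good (cstar : ℕ) (D : Diagram) : Prop :=
  (∃ r, (r, cstar) ∈ D) ∧
  (∀ p ∈ D, 1 ≤ p.1 ∧ 1 ≤ p.2 ∧ p.2 ≤ cstar) ∧
  (∀ c r r', (r, c) ∈ D → (r', c) ∈ D → r ≠ r' → c = cstar) ∧
  (∀ r, (r, cstar) ∈ D → (∀ r', (r', cstar) ∈ D → r' ≤ r) →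
    ∀ r' c', c' < cstar → (r', c') ∈ D → r ≤ r') ∧
  (∀ r1 c1 r2 c2, (r1, c1) ∈ D → (r2, c2) ∈ D → c1 < c2 → c2 < cstar → r2 ≤ r1)

lemma good_of_kmove {cstar : ℕ} {D D' : Diagram} (hG : Good cstar D) (h : KMove D D') :
    Good cstar D' := by
  obtain ⟨rM, cM, rM', hr'1, hr'r, hrc, hright, hnot, hfill, hD'⟩ := h
  obtain ⟨⟨rw, hrw⟩, hbd, huniq, hmax, hanti⟩ := hG
  have hmem : ∀ p : ℕ × ℕ, p ∈ D' ↔ p = (rM', cM) ∨ (p ≠ (rM, cM) ∧ p ∈ D) := by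
    intro p; subst hD'; simp [Finset.mem_insert, Finset.mem_erase]
  have hcle : cM ≤ cstar := (hbd _ hrc).2.2
  refine ⟨?_, ?_, ?_, ?_, ?_⟩
  · -- nonempty cstar column
    by_cases hcc : cM = cstar
    · exact ⟨rM', (hmem _).2 (Or.inl (by rw [hcc]))⟩
    · refine ⟨rw, (hmem _).2 (Or.inr ⟨?_, hrw⟩)⟩
      intro h; rw [Prod.mk.injEq] at h; exact hcc h.2.symm
  · intro p hp
    rcases (hmem p).1 hp with h | ⟨_, h⟩
    · subst h; exact ⟨hr'1, (hbd _ hrc).2.1, hcle⟩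
    · exact hbd _ h
  · -- at most one cell per column off cstar
    intro c0 ra rb ha hb hab
    rcases (hmem _).1 ha with h | ⟨hne, ha⟩ <;> rcases (hmem _).1 hb with h' | ⟨hne', hb⟩
    · rw [Prod.mk.injEq] at h h'; omega
    · rw [Prod.mk.injEq] at h
      obtain ⟨h1, h2⟩ := h; subst h1; subst h2
      have : rb ≠ rM := fun hh => hne' (by rw [hh])
      exact huniq c0 rb rM hb hrc this
    · rw [Prod.mk.injEq] at h'
      obtain ⟨h1, h2⟩ := h'; subst h1; subst h2
      have : ra ≠ rM := fun hh => hne (by rw [hh])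
      exact huniq c0 ra rM ha hrc this
    · exact huniq c0 ra rb ha hb hab
  · -- condition (iii)
    intro rm hrm hrmmax r'' c'' hc'' hcell
    by_cases hcc : cM = cstar
    · -- moved a cstar cell downwards
      have hRS : ((D.filter fun p => p.2 = cstar)).Nonempty := ⟨(rw, cstar), by
        simp [Finset.mem_filter, hrw]⟩
      obtain ⟨q, hq, hqmax⟩ := Finset.exists_max_image _ Prod.fst hRS
      rw [Finset.mem_filter] at hq
      have hq2 : q = (q.1, cstar) := by
        cases q; simp at hq ⊢; exact hq.2
      have hrmD_mem : (q.1, cstar) ∈ D := by rw [← hq2]; exact hq.1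
      have hrmD_max : ∀ r₁, (r₁, cstar) ∈ D → r₁ ≤ q.1 := by
        intro r₁ h₁
        exact hqmax (r₁, cstar) (Finset.mem_filter.2 ⟨h₁, rfl⟩)
      have hcell' : (r'', c'') ∈ D := by
        rcases (hmem _).1 hcell with h | ⟨_, h⟩
        · exfalso; rw [Prod.mk.injEq] at h; omega
        · exact h
      have h1 : q.1 ≤ r'' := hmax q.1 hrmD_mem hrmD_max r'' c'' hc'' hcell'
      have h2 : rm ≤ q.1 := by
        rcases (hmem _).1 hrm with h | ⟨_, h⟩
        · rw [Prod.mk.injEq] at h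
          have := hrmD_max rM (by rwa [hcc] at hrc); omega
        · exact hrmD_max _ h
      omega
    · have hclt : cM < cstar := lt_of_le_of_ne hcle hcc
      have hrmD : (rm, cstar) ∈ D := by
        rcases (hmem _).1 hrm with h | ⟨_, h⟩
        · exfalso; rw [Prod.mk.injEq] at h; omega
        · exact h
      have hrmmaxD : ∀ r₁, (r₁, cstar) ∈ D → r₁ ≤ rm := by
        intro r₁ h₁
        apply hrmmax
        refine (hmem _).2 (Or.inr ⟨?_, h₁⟩)
        intro hh; rw [Prod.mk.injEq] at hh; omega
      rcases (hmem _).1 hcell with h | ⟨hne2, hcellD⟩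
      · -- the moved cell: show rm ≤ rM'
        rw [Prod.mk.injEq] at h
        obtain ⟨h1, h2⟩ := h
        have hrmr : rm ≤ rM := hmax rm hrmD hrmmaxD rM cM hclt hrc
        rcases Nat.lt_or_ge rM' rm with hlt | hge
        · exfalso
          rcases Nat.eq_or_lt_of_le hrmr with he | hlt2
          · exact hright cstar hclt (by rw [← he]; exact hrmD)
          · have hrmc : (rm, cM) ∈ D := hfill rm hlt hlt2
            have := huniq cM rm rM hrmc hrc (by omega)
            omega
        · omega
      · exact hmax rm hrmD hrmmaxD r'' c'' hc'' hcellD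
  · -- condition (iv)
    intro ra ca rb cb ha hb hcab hcb
    rcases (hmem _).1 ha with h | ⟨hnea, haD⟩ <;> rcases (hmem _).1 hb with h' | ⟨hneb, hbD⟩
    · exfalso; rw [Prod.mk.injEq] at h h'; omega
    · -- a = (rM', cM), b ∈ D; show rb ≤ rM'
      rw [Prod.mk.injEq] at h
      obtain ⟨hra, hca⟩ := h; subst hra; subst hca
      have hrb_r : rb ≤ rM := hanti rM ca rb cb hrc hbD hcab hcb
      rcases Nat.lt_or_ge ra rb with hlt | hge
      · exfalso
        rcases Nat.eq_or_lt_of_le hrb_r with he | hlt2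
        · exact hright cb hcab (by rwa [he] at hbD)
        · have : (rb, ca) ∈ D := hfill rb hlt hlt2
          have := huniq ca rb rM this hrc (by omega)
          omega
      · exact hge
    · -- b = (rM', cM), a ∈ D; show rb ≤ ra
      rw [Prod.mk.injEq] at h'
      obtain ⟨hrb, hcb'⟩ := h'; subst hrb; subst hcb'
      have : rM ≤ ra := hanti ra ca rM cb haD hrc hcab hcb
      omega
    · exact hanti ra ca rb cb haD hbD hcab hcb

lemma good_of_kreach {cstar : ℕ} {D D' : Diagram} (hG : Good cstar D) (h : KReach D D') :
    Good cstar D' := by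
  induction h with
  | refl => exact hG
  | tail _ hmv ih => exact good_of_kmove ih hmv

lemma mem_hookSeed {r1 r2 : ℕ} {C : Finset ℕ} {hC : C.Nonempty} {p : ℕ × ℕ} :
    p ∈ hookSeed r1 r2 C hC ↔
      (p.1 = r2 ∧ p.2 ∈ C) ∨ (r1 ≤ p.1 ∧ p.1 ≤ r2 ∧ p.2 = C.max' hC) := by
  cases p with
  | mk a b =>
    simp only [hookSeed, Finset.mem_union, Finset.mem_image, Finset.mem_Icc]
    constructor
    · rintro (⟨c, hc, he⟩ | ⟨j, hj, he⟩)
      · injection he with h1 h2; subst h1; subst h2; exact Or.inl ⟨rfl, hc⟩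
      · injection he with h1 h2; subst h1; subst h2; exact Or.inr ⟨hj.1, hj.2, rfl⟩
    · rintro (⟨h1, h2⟩ | ⟨h1, h2, h3⟩)
      · exact Or.inl ⟨b, h2, by rw [h1]⟩
      · exact Or.inr ⟨a, ⟨h1, h2⟩, by rw [h3]⟩

lemma good_hookSeed {r1 r2 : ℕ} {C : Finset ℕ} (hC : C.Nonempty)
    (h1 : 1 ≤ r1) (h12 : r1 ≤ r2) (hCpos : ∀ c ∈ C, 1 ≤ c) :
    Good (C.max' hC) (hookSeed r1 r2 C hC) := by
  set cm := C.max' hC with hcm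
  refine ⟨⟨r2, ?_⟩, ?_, ?_, ?_, ?_⟩
  · exact mem_hookSeed.2 (Or.inl ⟨rfl, C.max'_mem hC⟩)
  · intro p hp
    rcases mem_hookSeed.1 hp with ⟨hp1, hp2⟩ | ⟨hp1, hp2, hp3⟩
    · exact ⟨by omega, hCpos _ hp2, C.le_max' _ hp2⟩
    · exact ⟨by omega, by rw [hp3]; exact hCpos _ (C.max'_mem hC), by omega⟩
  · intro c ra rb ha hb hab
    rcases mem_hookSeed.1 ha with ⟨ha1, ha2⟩ | ⟨_, _, ha3⟩
    · rcases mem_hookSeed.1 hb with ⟨hb1, hb2⟩ | ⟨_, _, hb3⟩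
      · exact absurd (ha1.trans hb1.symm) hab
      · exact hb3
    · exact ha3
  · intro rm hrm hrmmax r'' c'' hc'' hcell
    have : rm ≤ r2 := by
      rcases mem_hookSeed.1 hrm with ⟨h, _⟩ | ⟨_, h, _⟩ <;> omega
    rcases mem_hookSeed.1 hcell with ⟨h, _⟩ | ⟨_, _, h⟩
    · omega
    · simp only at h; omega
  · intro ra ca rb cb ha hb hcab hcb
    have h1 : ra = r2 := by
      rcases mem_hookSeed.1 ha with ⟨h, _⟩ | ⟨_, _, h⟩
      · exact h
      · simp only at h; omega
    have h2 : rb = r2 := by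
      rcases mem_hookSeed.1 hb with ⟨h, _⟩ | ⟨_, _, h⟩
      · exact h
      · simp only at h; omega
    omega

/-- The cells of column `c` at rows `X`. -/
def colCells (X : Finset ℕ) (c : ℕ) : Diagram := X.image fun j => (j, c)

/-- The cells of row `r` at columns `Y`. -/
def rowCells (Y : Finset ℕ) (r : ℕ) : Diagram := Y.image fun c => (r, c)

@[simp] lemma mem_colCells {X : Finset ℕ} {c : ℕ} {p : ℕ × ℕ} :
    p ∈ colCells X c ↔ p.1 ∈ X ∧ p.2 = c := by
  cases p with
  | mk a b =>
    simp only [colCells, Finset.mem_image, Prod.mk.injEq]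
    constructor
    · rintro ⟨j, hj, h1, h2⟩; subst h1; subst h2; exact ⟨hj, rfl⟩
    · rintro ⟨h1, h2⟩; exact ⟨a, h1, rfl, h2.symm⟩

@[simp] lemma mem_rowCells {Y : Finset ℕ} {r : ℕ} {p : ℕ × ℕ} :
    p ∈ rowCells Y r ↔ p.1 = r ∧ p.2 ∈ Y := by
  cases p with
  | mk a b =>
    simp only [rowCells, Finset.mem_image, Prod.mk.injEq]
    constructor
    · rintro ⟨j, hj, h1, h2⟩; subst h1; subst h2; exact ⟨rfl, hj⟩
    · rintro ⟨h1, h2⟩; exact ⟨b, h2, h1.symm, rfl⟩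

lemma kreach_refl (D : Diagram) : KReach D D := Relation.ReflTransGen.refl

lemma kreach_single {D D' : Diagram} (h : KMove D D') : KReach D D' :=
  Relation.ReflTransGen.single h

lemma kreach_trans {D E F : Diagram} (h1 : KReach D E) (h2 : KReach E F) : KReach D F :=
  Relation.ReflTransGen.trans h1 h2

/-- Dropping a single cell in an otherwise empty column from row `h` down to row `t`. -/
lemma dropReach (E : Diagram) (c t : ℕ) (hc : ∀ p ∈ E, p.2 ≠ c)
    (ht : 1 ≤ t) (hE : ∀ p ∈ E, c < p.2 → p.1 ≤ t) :
    ∀ n h, h ≤ t + n → t ≤ h → KReach (insert (h, c) E) (insert (t, c) E) := by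
  intro n
  induction n with
  | zero =>
    intro h h1 h2
    have : h = t := by omega
    rw [this]; exact kreach_refl _
  | succ n ih =>
    intro h h1 h2
    rcases Nat.eq_or_lt_of_le h2 with he | hlt
    · rw [← he]; exact kreach_refl _
    · have hEh : (h, c) ∉ E := fun hh => hc _ hh rfl
      have hmv : KMove (insert (h, c) E) (insert (h - 1, c) E) := by
        refine ⟨h, c, h - 1, by omega, by omega, Finset.mem_insert_self _ _, ?_, ?_, ?_, ?_⟩
        · intro c' hc' hmem
          rcases Finset.mem_insert.1 hmem with hh | hh
          · rw [Prod.mk.injEq] at hh; omega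
          · have := hE _ hh hc'
            simp only at this; omega
        · intro hmem
          rcases Finset.mem_insert.1 hmem with hh | hh
          · rw [Prod.mk.injEq] at hh; omega
          · exact hc _ hh rfl
        · intro r₁ hr1 hr2; omega
        · rw [Finset.erase_insert hEh]
      exact kreach_trans (kreach_single hmv) (ih (h - 1) (by omega) (by omega))

/-- Phase C : move the single cells of the columns left of `cstar` from the top row
down to their final positions, processing columns right-to-left. -/
lemma phaseC (r2 : ℕ) (ρ : ℕ → ℕ) :
    ∀ (todo : Finset ℕ) (Base : Diagram),
      (∀ c ∈ todo, 1 ≤ ρ c ∧ ρ c ≤ r2) →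
      (∀ c ∈ todo, ∀ p ∈ Base, p.2 ≠ c ∧ (c < p.2 → p.1 ≤ ρ c)) →
      (∀ c ∈ todo, ∀ c' ∈ todo, c < c' → ρ c' ≤ ρ c) →
      KReach (Base ∪ rowCells todo r2) (Base ∪ todo.image fun c => (ρ c, c)) := by
  intro todo
  induction todo using Finset.strongInductionOn with
  | _ todo ih =>
    intro Base h1 h2 h3
    rcases todo.eq_empty_or_nonempty with he | hne
    · subst he
      simp only [rowCells, Finset.image_empty, Finset.union_empty]
      exact kreach_refl _
    · set c := todo.max' hne with hc
      have hcmem : c ∈ todo := todo.max'_mem hne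
      set todo' := todo.erase c with htodo'
      have hsub : todo' ⊂ todo := Finset.erase_ssubset hcmem
      set E : Diagram := Base ∪ rowCells todo' r2 with hE
      have himg2 : rowCells todo r2 = insert (r2, c) (rowCells todo' r2) := by
        conv_lhs => rw [show todo = insert c todo' from (Finset.insert_erase hcmem).symm]
        exact Finset.image_insert _ _ _
      have hstep1 : Base ∪ rowCells todo r2 = insert (r2, c) E := by
        rw [hE, himg2, Finset.union_insert]
      have hcE : ∀ p ∈ E, p.2 ≠ c := by
        intro p hp
        rcases Finset.mem_union.1 hp with h | h
        · exact (h2 c hcmem p h).1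
        · rw [mem_rowCells] at h
          exact (Finset.mem_erase.1 h.2).1
      have hEbd : ∀ p ∈ E, c < p.2 → p.1 ≤ ρ c := by
        intro p hp hcp
        rcases Finset.mem_union.1 hp with h | h
        · exact (h2 c hcmem p h).2 hcp
        · exfalso
          rw [mem_rowCells] at h
          exact absurd (todo.le_max' _ (Finset.mem_of_mem_erase h.2)) (by omega)
      have hdrop : KReach (insert (r2, c) E) (insert (ρ c, c) E) :=
        dropReach E c (ρ c) hcE (h1 c hcmem).1 hEbd r2 r2 (by omega) (h1 c hcmem).2
      have hstep2 : insert (ρ c, c) E = (insert (ρ c, c) Base) ∪ rowCells todo' r2 :=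
        (Finset.insert_union _ _ _).symm
      have hrec : KReach ((insert (ρ c, c) Base) ∪ rowCells todo' r2)
          ((insert (ρ c, c) Base) ∪ todo'.image fun c => (ρ c, c)) := by
        apply ih todo' hsub
        · intro c' hc'; exact h1 c' (Finset.mem_of_mem_erase hc')
        · intro c' hc' p hp
          have hc'm : c' ∈ todo := Finset.mem_of_mem_erase hc'
          have hc'lt : c' < c :=
            lt_of_le_of_ne (todo.le_max' _ hc'm) (Finset.mem_erase.1 hc').1
          rcases Finset.mem_insert.1 hp with h | h
          · subst h
            refine ⟨by simp; omega, ?_⟩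
            intro hlt; simp only
            exact h3 c' hc'm c hcmem hc'lt
          · exact h2 c' hc'm p h
        · intro a ha b hb hab
          exact h3 a (Finset.mem_of_mem_erase ha) b (Finset.mem_of_mem_erase hb) hab
      have himg : (insert c todo').image (fun c => (ρ c, c))
          = insert (ρ c, c) (todo'.image fun c => (ρ c, c)) := Finset.image_insert _ _ _
      have hstep3 : (insert (ρ c, c) Base) ∪ todo'.image (fun c => (ρ c, c))
          = Base ∪ todo.image fun c => (ρ c, c) := by
        rw [Finset.insert_union, ← Finset.union_insert, ← himg, Finset.insert_erase hcmem]
      rw [hstep1, ← hstep3]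
      exact kreach_trans hdrop (hstep2 ▸ hrec)

/-- Phases A and B : reshape the `cstar` column from an interval to an arbitrary
admissible row set `S`. -/
lemma colReach (cstar : ℕ) (R : Diagram) (S : Finset ℕ)
    (hR1 : ∀ p ∈ R, p.2 < cstar) (hS1 : ∀ s ∈ S, 1 ≤ s) :
    ∀ b a, 1 ≤ a → a ≤ b + 1 → (S.filter (· ≤ b)).card = b + 1 - a →
      KReach (R ∪ colCells (Finset.Icc a b ∪ S.filter (b < ·)) cstar)
             (R ∪ colCells S cstar) := by
  intro b
  induction b using Nat.strong_induction_on with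
  | _ b ih =>
    intro a ha1 hab hcard
    rcases Nat.eq_or_lt_of_le hab with he | hlt
    · -- empty interval : done
      have h0 : (S.filter (· ≤ b)).card = 0 := by omega
      have h0' : S.filter (· ≤ b) = ∅ := Finset.card_eq_zero.1 h0
      have hSf : S.filter (b < ·) = S := by
        apply Finset.filter_true_of_mem
        intro s hs
        by_contra hh
        have : s ∈ S.filter (· ≤ b) := Finset.mem_filter.2 ⟨hs, by omega⟩
        rw [h0'] at this; exact absurd this (Finset.notMem_empty _)
      have hIcc : Finset.Icc a b = ∅ := by
        apply Finset.Icc_eq_empty; omega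
      rw [hIcc, hSf, Finset.empty_union]
      exact kreach_refl _
    · -- a ≤ b
      have hb1 : 1 ≤ b := by omega
      by_cases hbS : b ∈ S
      · -- top of interval is already a target : rebracket, no move
        have heq : (Finset.Icc a b ∪ S.filter (b < ·))
            = Finset.Icc a (b - 1) ∪ S.filter ((b - 1) < ·) := by
          ext j
          simp only [Finset.mem_union, Finset.mem_Icc, Finset.mem_filter]
          constructor
          · rintro (h | h)
            · rcases Nat.eq_or_lt_of_le h.2 with he' | hlt'
              · exact Or.inr ⟨by rwa [he'], by omega⟩
              · exact Or.inl ⟨h.1, by omega⟩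
            · exact Or.inr ⟨h.1, by omega⟩
          · rintro (h | h)
            · exact Or.inl ⟨h.1, by omega⟩
            · rcases Nat.lt_or_ge b j with h' | h'
              · exact Or.inr ⟨h.1, h'⟩
              · have : j = b := by omega
                exact Or.inl ⟨by omega, by omega⟩
        rw [heq]
        apply ih (b - 1) (by omega) a ha1 (by omega)
        have : S.filter (· ≤ b - 1) = (S.filter (· ≤ b)).erase b := by
          ext j
          simp only [Finset.mem_filter, Finset.mem_erase]
          constructor
          · intro h; exact ⟨by omega, h.1, by omega⟩
          · intro h; exact ⟨h.2.1, by omega⟩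
        rw [this, Finset.card_erase_of_mem
          (Finset.mem_filter.2 ⟨hbS, le_refl b⟩ : b ∈ S.filter (· ≤ b))]
        omega
      · -- slide the whole interval down by one
        have ha2 : 2 ≤ a := by
          by_contra hh
          have ha' : a = 1 := by omega
          have : S.filter (· ≤ b) ⊆ Finset.Icc 1 (b - 1) := by
            intro j hj
            rw [Finset.mem_filter] at hj
            rw [Finset.mem_Icc]
            have : j ≠ b := fun he => hbS (he ▸ hj.1)
            exact ⟨hS1 _ hj.1, by omega⟩
          have := Finset.card_le_card this
          rw [Nat.card_Icc] at this
          omega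
        set X := Finset.Icc a b ∪ S.filter (b < ·) with hX
        set X' := Finset.Icc (a - 1) (b - 1) ∪ S.filter ((b - 1) < ·) with hX'
        have hXf : S.filter ((b-1) < ·) = S.filter (b < ·) := by
          ext j
          simp only [Finset.mem_filter]
          constructor
          · rintro ⟨hj, h⟩
            have : j ≠ b := fun he => hbS (he ▸ hj)
            exact ⟨hj, by omega⟩
          · rintro ⟨hj, h⟩; exact ⟨hj, by omega⟩
        have hmv : KMove (R ∪ colCells X cstar) (R ∪ colCells X' cstar) := by
          refine ⟨b, cstar, a - 1, by omega, by omega, ?_, ?_, ?_, ?_, ?_⟩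
          · apply Finset.mem_union_right
            rw [mem_colCells]
            exact ⟨Finset.mem_union_left _ (Finset.mem_Icc.2 ⟨by omega, le_refl b⟩), rfl⟩
          · intro c' hc' hmem
            rcases Finset.mem_union.1 hmem with h | h
            · have hcc : c' < cstar := hR1 _ h
              omega
            · rw [mem_colCells] at h
              have hcc : c' = cstar := h.2
              omega
          · intro hmem
            rcases Finset.mem_union.1 hmem with h | h
            · have hcc : cstar < cstar := hR1 _ h
              omega
            · rw [mem_colCells] at h
              have h1 : (a - 1 : ℕ) ∈ X := h.1
              rw [hX, Finset.mem_union, Finset.mem_Icc, Finset.mem_filter] at h1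
              rcases h1 with h' | h' <;> omega
          · intro r₁ h1 h2
            apply Finset.mem_union_right
            rw [mem_colCells]
            exact ⟨Finset.mem_union_left _ (Finset.mem_Icc.2 ⟨by omega, by omega⟩), rfl⟩
          · ext ⟨p1, p2⟩
            simp only [Finset.mem_insert, Finset.mem_erase, Finset.mem_union, mem_colCells,
              hX, hX', hXf, Finset.mem_Icc, Finset.mem_filter, Prod.mk.injEq]
            have hne1 : ∀ q1 q2 : ℕ, q2 < cstar → (q1, q2) ≠ (b, cstar) := by
              intro q1 q2 h hh; rw [Prod.mk.injEq] at hh; omega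
            have hne2 : ∀ q1 : ℕ, q1 ≠ b → (q1, cstar) ≠ (b, cstar) := by
              intro q1 h hh; rw [Prod.mk.injEq] at hh; omega
            constructor
            · rintro (hR | ⟨(⟨h1, h2⟩ | ⟨hS', hb'⟩), rfl⟩)
              · have hcc : p2 < cstar := hR1 _ hR
                exact Or.inr ⟨hne1 _ _ hcc, Or.inl hR⟩
              · by_cases hpa : p1 = a - 1
                · exact Or.inl ⟨hpa, rfl⟩
                · exact Or.inr ⟨hne2 _ (by omega), Or.inr ⟨Or.inl ⟨by omega, by omega⟩, rfl⟩⟩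
              · have hpb : p1 ≠ b := fun he => hbS (he ▸ hS')
                exact Or.inr ⟨hne2 _ hpb, Or.inr ⟨Or.inr ⟨hS', by omega⟩, rfl⟩⟩
            · rintro (⟨he1, he2⟩ | ⟨hne, (hR | ⟨(⟨h1, h2⟩ | ⟨hS', hb'⟩), rfl⟩)⟩)
              · exact Or.inr ⟨Or.inl ⟨by omega, by omega⟩, he2⟩
              · exact Or.inl hR
              · have hpb : p1 ≠ b := by
                  intro he; subst he; exact hne rfl
                exact Or.inr ⟨Or.inl ⟨by omega, by omega⟩, rfl⟩
              · have hpb : p1 ≠ b := fun he => hbS (he ▸ hS')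
                exact Or.inr ⟨Or.inr ⟨hS', by omega⟩, rfl⟩
        have hfeq : S.filter (· ≤ b - 1) = S.filter (· ≤ b) := by
          ext j
          simp only [Finset.mem_filter]
          constructor
          · rintro ⟨hj, h⟩; exact ⟨hj, by omega⟩
          · rintro ⟨hj, h⟩
            have : j ≠ b := fun he => hbS (he ▸ hj)
            exact ⟨hj, by omega⟩
        have hrec := ih (b - 1) (by omega) (a - 1) (by omega) (by omega)
          (by rw [hfeq]; omega)
        exact kreach_trans (kreach_single hmv) hrec

/-- Characterization of hook diagrams by the distribution of their cells. -/
theorem stmt_7 (D : Diagram) (hD : ∀ p ∈ D, 1 ≤ p.1 ∧ 1 ≤ p.2) :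
    IsHookDiagram D ↔
      ∃ cstar : ℕ, 0 < cstar ∧
        (∃ r, (r, cstar) ∈ D) ∧
        (∀ c', cstar < c' → ∀ r, (r, c') ∉ D) ∧
        (∀ c r r', (r, c) ∈ D → (r', c) ∈ D → r ≠ r' → c = cstar) ∧
        (∀ r, (r, cstar) ∈ D → (∀ r', (r', cstar) ∈ D → r' ≤ r) →
          ∀ r' c', c' < cstar → (r', c') ∈ D → r ≤ r') ∧
        (∀ r1 c1 r2 c2, (r1, c1) ∈ D → (r2, c2) ∈ D →
          c1 < c2 → c2 < cstar → r2 ≤ r1) := by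
  constructor
  · -- forward direction
    rintro ⟨r1, r2, C, hC, hr1, hr12, hCpos, hreach⟩
    have hG := good_of_kreach (good_hookSeed hC hr1 hr12 hCpos) hreach
    obtain ⟨⟨rw0, hrw⟩, hbd, huniq, hmax, hanti⟩ := hG
    have h1 : 1 ≤ C.max' hC := (hbd _ hrw).2.1
    refine ⟨C.max' hC, by omega, ⟨rw0, hrw⟩, ?_, huniq, hmax, hanti⟩
    intro c' hcl r0 hmem
    have h2 : c' ≤ C.max' hC := (hbd _ hmem).2.2
    omega
  · -- backward direction
    rintro ⟨cstar, hcpos, ⟨rw0, hrw⟩, hempty, huniq, hmaxcond, hanti⟩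
    set S : Finset ℕ := (D.filter fun p => p.2 = cstar).image Prod.fst with hS
    have mem_S : ∀ j, j ∈ S ↔ (j, cstar) ∈ D := by
      intro j
      simp only [hS, Finset.mem_image, Finset.mem_filter]
      constructor
      · rintro ⟨p, ⟨hp, hp2⟩, hp1⟩
        have : p = (j, cstar) := by
          cases p; simp only at hp1 hp2 ⊢; rw [hp1, hp2]
        rwa [← this]
      · intro h; exact ⟨(j, cstar), ⟨h, rfl⟩, rfl⟩
    have hSne : S.Nonempty := ⟨rw0, (mem_S _).2 hrw⟩
    set r : ℕ := S.max' hSne with hr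
    have hrS : (r, cstar) ∈ D := (mem_S _).1 (S.max'_mem hSne)
    have hrmax : ∀ r'', (r'', cstar) ∈ D → r'' ≤ r := by
      intro r'' h
      exact S.le_max' _ ((mem_S _).2 h)
    set k : ℕ := S.card with hk
    have hkpos : 0 < k := Finset.card_pos.2 hSne
    have hSsub : S ⊆ Finset.Icc 1 r := by
      intro j hj
      rw [Finset.mem_Icc]
      exact ⟨(hD _ ((mem_S _).1 hj)).1, S.le_max' _ hj⟩
    have hkr : k ≤ r := by
      have := Finset.card_le_card hSsub
      rwa [Nat.card_Icc, Nat.add_sub_cancel] at this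
    set r2 : ℕ := D.sup Prod.fst with hr2
    have hr2bd : ∀ p ∈ D, p.1 ≤ r2 := fun p hp => Finset.le_sup (f := Prod.fst) hp
    have hrr2 : r ≤ r2 := hr2bd _ hrS
    set r1 : ℕ := r2 + 1 - k with hr1
    set Cother : Finset ℕ := (D.filter fun p => p.2 ≠ cstar).image Prod.snd with hCo
    have mem_Co : ∀ c, c ∈ Cother ↔ (∃ rr, (rr, c) ∈ D) ∧ c ≠ cstar := by
      intro c
      simp only [hCo, Finset.mem_image, Finset.mem_filter]
      constructor
      · rintro ⟨p, ⟨hp, hp2⟩, hp1⟩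
        cases p with
        | mk x y =>
          simp only at hp1 hp2 ⊢
          subst hp1
          exact ⟨⟨x, hp⟩, hp2⟩
      · rintro ⟨⟨rr, hrr⟩, hne⟩
        exact ⟨(rr, c), ⟨hrr, hne⟩, rfl⟩
    have hCo_lt : ∀ c ∈ Cother, c < cstar := by
      intro c hc
      obtain ⟨⟨rr, hrr⟩, hne⟩ := (mem_Co c).1 hc
      rcases Nat.lt_or_ge c cstar with h | h
      · exact h
      · exfalso
        have : cstar < c := lt_of_le_of_ne h (fun he => hne he.symm)
        exact hempty c this rr hrr
    set ρ : ℕ → ℕ := fun c => D.sup fun p => if p.2 = c then p.1 else 0 with hρdef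
    have hρ : ∀ c rr, (rr, c) ∈ D → c ≠ cstar → ρ c = rr := by
      intro c rr hrr hne
      apply le_antisymm
      · apply Finset.sup_le
        intro p hp
        by_cases hpc : p.2 = c
        · have : p.1 = rr := by
            by_contra hh
            exact hne (huniq c p.1 rr (by rw [← hpc]; exact hp) hrr hh)
          simp [hpc, this]
        · simp [hpc]
      · have := Finset.le_sup (f := fun p : ℕ × ℕ => if p.2 = c then p.1 else 0) hrr
        simpa using this
    have hρcell : ∀ c ∈ Cother, (ρ c, c) ∈ D := by
      intro c hc
      obtain ⟨⟨rr, hrr⟩, hne⟩ := (mem_Co c).1 hc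
      rw [hρ c rr hrr hne]
      exact hrr
    have hρge : ∀ c ∈ Cother, r ≤ ρ c := by
      intro c hc
      exact hmaxcond r hrS hrmax (ρ c) c (hCo_lt c hc) (hρcell c hc)
    have hρbd : ∀ c ∈ Cother, 1 ≤ ρ c ∧ ρ c ≤ r2 := by
      intro c hc
      exact ⟨(hD _ (hρcell c hc)).1, hr2bd _ (hρcell c hc)⟩
    set C : Finset ℕ := insert cstar Cother with hCdef
    have hC : C.Nonempty := ⟨cstar, Finset.mem_insert_self _ _⟩
    have hCmax : C.max' hC = cstar := by
      apply le_antisymm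
      · apply Finset.max'_le
        intro y hy
        rcases Finset.mem_insert.1 hy with h | h
        · omega
        · exact le_of_lt (hCo_lt y h)
      · exact C.le_max' _ (Finset.mem_insert_self _ _)
    have hDeq : D = colCells S cstar ∪ Cother.image fun c => (ρ c, c) := by
      ext p
      simp only [Finset.mem_union, mem_colCells, Finset.mem_image]
      constructor
      · intro hp
        by_cases hpc : p.2 = cstar
        · exact Or.inl ⟨(mem_S _).2 (by rw [← hpc]; cases p; exact hp), hpc⟩
        · refine Or.inr ⟨p.2, (mem_Co _).2 ⟨⟨p.1, by cases p; exact hp⟩, hpc⟩, ?_⟩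
          have : ρ p.2 = p.1 := hρ p.2 p.1 (by cases p; exact hp) hpc
          rw [this]
      · rintro (⟨h1, h2⟩ | ⟨c, hc, hpc⟩)
        · have := (mem_S _).1 h1
          cases p with
          | mk x y => simp only at h2; subst h2; exact this
        · rw [← hpc]; exact hρcell c hc
    have hseed : hookSeed r1 r2 C hC
        = rowCells Cother r2 ∪ colCells (Finset.Icc r1 r2 ∪ S.filter (r2 < ·)) cstar := by
      have hfe : S.filter (r2 < ·) = ∅ := by
        apply Finset.filter_false_of_mem
        intro s hs
        have h1 : s ≤ r := S.le_max' _ hs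
        omega
      ext p
      rw [mem_hookSeed, hCmax]
      simp only [Finset.mem_union, mem_rowCells, mem_colCells, hfe, Finset.union_empty,
        Finset.mem_Icc, hCdef, Finset.mem_insert]
      constructor
      · rintro (⟨h1, (h2 | h2)⟩ | ⟨h1, h2, h3⟩)
        · exact Or.inr ⟨⟨by omega, le_of_eq h1⟩, h2⟩
        · exact Or.inl ⟨h1, h2⟩
        · exact Or.inr ⟨⟨h1, h2⟩, h3⟩
      · rintro (⟨h1, h2⟩ | ⟨⟨h1, h2⟩, h3⟩)
        · exact Or.inl ⟨h1, Or.inr h2⟩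
        · exact Or.inr ⟨h1, h2, h3⟩
    have hstep2 : KReach (rowCells Cother r2 ∪ colCells (Finset.Icc r1 r2 ∪ S.filter (r2 < ·)) cstar)
        (rowCells Cother r2 ∪ colCells S cstar) := by
      apply colReach cstar (rowCells Cother r2) S
      · intro p hp
        rw [mem_rowCells] at hp
        exact hCo_lt _ hp.2
      · intro sS hsS
        exact (hD _ ((mem_S _).1 hsS)).1
      · omega
      · omega
      · have : S.filter (· ≤ r2) = S := by
          apply Finset.filter_true_of_mem
          intro s hs
          have := S.le_max' _ hs
          omega
        rw [this]
        omega
    have hstep3 : KReach (rowCells Cother r2 ∪ colCells S cstar) D := by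
      rw [Finset.union_comm (rowCells Cother r2), hDeq]
      apply phaseC r2 ρ Cother (colCells S cstar) hρbd
      · intro c hc p hp
        rw [mem_colCells] at hp
        constructor
        · rw [hp.2]
          exact fun he => by have := hCo_lt c hc; omega
        · intro _
          have h1 : p.1 ≤ r := S.le_max' _ hp.1
          have h2 := hρge c hc
          omega
      · intro c hc c' hc' hcc
        exact hanti (ρ c) c (ρ c') c' (hρcell c hc) (hρcell c' hc') hcc (hCo_lt c' hc')
    refine ⟨r1, r2, C, hC, by omega, by omega, ?_, ?_⟩
    · intro c hc
      rcases Finset.mem_insert.1 hc with h | h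
      · omega
      · have := hρcell c h
        exact (hD _ this).2
    · rw [hseed]
      exact kreach_trans hstep2 hstep3

end KohnertPaper
end
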